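/- arXiv:2603.25506 — 10 statements merged into one kernel-verified Lean document; each statement's English description precedes it below -/
import Mathlib

section
/- Every polynomial u_n in the sequence has integer coefficients; that is, u_n lies in the subring ℤ[b,c] of ℚ[b,c] for all n ≥ 0. -/
open MvPolynomial Finset

noncomputable abbrev Qp := MvPolynomial (Fin 2) ℚ
noncomputable abbrev Zp := MvPolynomial (Fin 2) ℤ
noncomputable abbrev phiZQ : Zp →+* Qp := MvPolynomial.map (Int.castRingHom ℚ)

lemma hstep_aux (b c : Qp) (u : ℕ → Qp)
    (hurec : ∀ n : ℕ, 1 ≤ n →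
      (n : Qp) * u n =
        2 * (2 * (n : Qp) - 1) * ((n : Qp) * ((n : Qp) - 1) - b) * u (n - 1)
          - 4 * c * ((n : Qp) - 1) * (if 2 ≤ n then u (n - 2) else 0)) (k : ℕ) :
    ((k : Qp) + 1) * u (k + 1)
      = 2 * (2 * (k : Qp) + 1) * (((k : Qp) + 1) * (k : Qp) - b) * u k
        - 4 * c * (k : Qp) * u (k - 1) := by
  have h := hurec (k + 1) (Nat.le_add_left 1 k)
  rcases k with _ | k
  · norm_num at h ⊢
    linear_combination h
  · have h2 : 2 ≤ k + 1 + 1 := by omega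
    rw [if_pos h2] at h
    have e1 : k + 1 + 1 - 1 = k + 1 := rfl
    have e2 : k + 1 + 1 - 2 = k := rfl
    rw [e1, e2] at h
    push_cast at h ⊢
    linear_combination h

/-- reflection: a sum with antisymmetric coefficients vanishes -/
lemma refl_zero_aux (u : ℕ → Qp) (g : ℕ → Qp) (n : ℕ)
    (hg : ∀ j ∈ range n, g j + g (n - 1 - j) = 0) :
    ∑ j ∈ range n, g j * (u j * u (n - 1 - j)) = 0 := by
  have hrefl := Finset.sum_range_reflect (fun j : ℕ => g j * (u j * u (n - 1 - j))) n
  try simp only [] at hrefl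
  have h2 : (2 : Qp) * ∑ j ∈ range n, g j * (u j * u (n - 1 - j)) = 0 := by
    have step : (2 : Qp) * ∑ j ∈ range n, g j * (u j * u (n - 1 - j))
        = ∑ j ∈ range n, (g j * (u j * u (n - 1 - j))
            + g (n - 1 - j) * (u (n - 1 - j) * u (n - 1 - (n - 1 - j)))) := by
      rw [Finset.sum_add_distrib, hrefl]; ring
    rw [step]
    apply Finset.sum_eq_zero
    intro j hj
    have hj' : j < n := mem_range.mp hj
    have hjj : n - 1 - (n - 1 - j) = j := by omega
    rw [hjj]
    have := hg j hj
    calc g j * (u j * u (n - 1 - j)) + g (n - 1 - j) * (u (n - 1 - j) * u j)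
        = (g j + g (n - 1 - j)) * (u j * u (n - 1 - j)) := by ring
      _ = 0 := by rw [this]; ring
  rcases mul_eq_zero.mp h2 with h | h
  · exact absurd h two_ne_zero
  · exact h

set_option maxHeartbeats 1000000 in
/-- the quadratic (Wronskian) identity -/
lemma quad_aux (b c : Qp) (u : ℕ → Qp)
    (hurec : ∀ n : ℕ, 1 ≤ n →
      (n : Qp) * u n =
        2 * (2 * (n : Qp) - 1) * ((n : Qp) * ((n : Qp) - 1) - b) * u (n - 1)
          - 4 * c * ((n : Qp) - 1) * (if 2 ≤ n then u (n - 2) else 0)) (m : ℕ) :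
    (∑ k ∈ range (m + 2), u k * u (m + 1 - k))
      + (∑ k ∈ range (m + 1),
          (4 * ((m - k : ℕ) : Qp) * (k : Qp) - 8 * (k : Qp) ^ 2 - 4 * (k : Qp) + 4 * b)
            * (u k * u (m - k)))
      + 4 * c * (∑ k ∈ range m, u k * u (m - 1 - k)) = 0 := by
  have hM : ((m : Qp) + 1) ≠ 0 := Nat.cast_add_one_ne_zero m
  -- E1 : reflection for the top sum
  have E1 : ((m : Qp) + 1) * (∑ k ∈ range (m + 2), u k * u (m + 1 - k))
      = 2 * ∑ k ∈ range (m + 2), (k : Qp) * (u k * u (m + 1 - k)) := by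
    have hrefl2 : ∑ j ∈ range (m + 2), ((m + 1 - j : ℕ) : Qp) * (u (m + 1 - j) * u j)
        = ∑ k ∈ range (m + 2), (k : Qp) * (u k * u (m + 1 - k)) := by
      have hrefl := Finset.sum_range_reflect
        (fun k : ℕ => (k : Qp) * (u k * u (m + 1 - k))) (m + 2)
      try simp only [] at hrefl
      rw [← hrefl]
      apply Finset.sum_congr rfl
      intro j hj
      have hj' := mem_range.mp hj
      have e1 : m + 2 - 1 - j = m + 1 - j := by omega
      have e2 : m + 1 - (m + 1 - j) = j := by omega
      rw [e1, e2]
    calc ((m : Qp) + 1) * (∑ k ∈ range (m + 2), u k * u (m + 1 - k))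
        = ∑ k ∈ range (m + 2),
            ((k : Qp) * (u k * u (m + 1 - k))
              + ((m + 1 - k : ℕ) : Qp) * (u (m + 1 - k) * u k)) := by
          rw [Finset.mul_sum]
          apply Finset.sum_congr rfl
          intro k hk
          have hk' := mem_range.mp hk
          have e : ((m + 1 - k : ℕ) : Qp) = (m : Qp) + 1 - (k : Qp) := by
            have h1 : (m + 1 - k) + k = m + 1 := by omega
            have h2 := congrArg (fun t : ℕ => (t : Qp)) h1
            push_cast at h2
            linear_combination h2
          rw [e]
          ring
      _ = (∑ k ∈ range (m + 2), (k : Qp) * (u k * u (m + 1 - k)))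
            + ∑ j ∈ range (m + 2), ((m + 1 - j : ℕ) : Qp) * (u (m + 1 - j) * u j) := by
          rw [Finset.sum_add_distrib]
      _ = 2 * ∑ k ∈ range (m + 2), (k : Qp) * (u k * u (m + 1 - k)) := by
          rw [hrefl2]; ring
  -- E2 : shift + linear recursion
  have E2 : (∑ k ∈ range (m + 2), (k : Qp) * (u k * u (m + 1 - k)))
      = (∑ k ∈ range (m + 1),
          2 * (2 * (k : Qp) + 1) * (((k : Qp) + 1) * (k : Qp) - b) * (u k * u (m - k)))
        - ∑ k ∈ range (m + 1), 4 * c * (k : Qp) * (u (k - 1) * u (m - k)) := by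
    have hshift : (∑ k ∈ range (m + 2), (k : Qp) * (u k * u (m + 1 - k)))
        = ∑ k ∈ range (m + 1), ((k : Qp) + 1) * (u (k + 1) * u (m - k)) := by
      rw [Finset.sum_range_succ' (fun k : ℕ => (k : Qp) * (u k * u (m + 1 - k))) (m + 1)]
      have hf0 : ((0 : ℕ) : Qp) * (u 0 * u (m + 1 - 0)) = 0 := by norm_num
      rw [hf0, add_zero]
      apply Finset.sum_congr rfl
      intro k hk
      have e : m + 1 - (k + 1) = m - k := by omega
      rw [e]
      push_cast
      ring
    rw [hshift, ← Finset.sum_sub_distrib]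
    apply Finset.sum_congr rfl
    intro k hk
    have h := hstep_aux b c u hurec k
    linear_combination u (m - k) * h
  -- E3 : shift of the c-term
  have E3 : (∑ k ∈ range (m + 1), 4 * c * (k : Qp) * (u (k - 1) * u (m - k)))
      = 4 * c * ∑ k ∈ range m, ((k : Qp) + 1) * (u k * u (m - 1 - k)) := by
    rw [Finset.sum_range_succ' (fun k : ℕ => 4 * c * (k : Qp) * (u (k - 1) * u (m - k))) m]
    have hf0 : 4 * c * ((0 : ℕ) : Qp) * (u (0 - 1) * u (m - 0)) = 0 := by norm_num
    rw [hf0, add_zero, Finset.mul_sum]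
    apply Finset.sum_congr rfl
    intro k hk
    have e2 : m - (k + 1) = m - 1 - k := by omega
    rw [show k + 1 - 1 = k from rfl, e2]
    push_cast
    ring
  -- E4 : reflection identity for B
  have E4 : ((m : Qp) + 1) * (∑ k ∈ range (m + 1),
        (4 * ((m - k : ℕ) : Qp) * (k : Qp) - 8 * (k : Qp) ^ 2 - 4 * (k : Qp) + 4 * b)
          * (u k * u (m - k)))
      + 2 * (∑ k ∈ range (m + 1),
          2 * (2 * (k : Qp) + 1) * (((k : Qp) + 1) * (k : Qp) - b) * (u k * u (m - k))) = 0 := by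
    have hzero : ∑ k ∈ range (m + 1),
        (((m : Qp) + 1) * (4 * ((m - k : ℕ) : Qp) * (k : Qp) - 8 * (k : Qp) ^ 2
            - 4 * (k : Qp) + 4 * b)
          + 4 * ((2 * (k : Qp) + 1) * (((k : Qp) + 1) * (k : Qp) - b)))
          * (u k * u (m - k)) = 0 := by
      have := refl_zero_aux u
        (fun k : ℕ => ((m : Qp) + 1) * (4 * ((m - k : ℕ) : Qp) * (k : Qp) - 8 * (k : Qp) ^ 2
            - 4 * (k : Qp) + 4 * b)
          + 4 * ((2 * (k : Qp) + 1) * (((k : Qp) + 1) * (k : Qp) - b))) (m + 1) ?_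
      · try simp only [] at this
        have e : ∀ k, m + 1 - 1 - k = m - k := by intro k; omega
        calc ∑ k ∈ range (m + 1),
            (((m : Qp) + 1) * (4 * ((m - k : ℕ) : Qp) * (k : Qp) - 8 * (k : Qp) ^ 2
                - 4 * (k : Qp) + 4 * b)
              + 4 * ((2 * (k : Qp) + 1) * (((k : Qp) + 1) * (k : Qp) - b)))
              * (u k * u (m - k))
            = ∑ k ∈ range (m + 1),
              (((m : Qp) + 1) * (4 * ((m - k : ℕ) : Qp) * (k : Qp) - 8 * (k : Qp) ^ 2
                  - 4 * (k : Qp) + 4 * b)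
                + 4 * ((2 * (k : Qp) + 1) * (((k : Qp) + 1) * (k : Qp) - b)))
                * (u k * u (m + 1 - 1 - k)) := by
              apply Finset.sum_congr rfl; intro k hk; rw [e k]
          _ = 0 := this
      · intro j hj
        have hj' : j < m + 1 := mem_range.mp hj
        try simp only []
        have e0 : m + 1 - 1 - j = m - j := by omega
        rw [e0]
        have e1 : ((m - j : ℕ) : Qp) = (m : Qp) - (j : Qp) := by
          have h1 : (m - j) + j = m := by omega
          have h2 := congrArg (fun t : ℕ => (t : Qp)) h1
          push_cast at h2
          linear_combination h2
        have e2 : ((m - (m - j) : ℕ) : Qp) = (j : Qp) := by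
          have h1 : m - (m - j) = j := by omega
          rw [h1]
        rw [e1, e2]
        ring
    have hexpand : ∑ k ∈ range (m + 1),
        (((m : Qp) + 1) * (4 * ((m - k : ℕ) : Qp) * (k : Qp) - 8 * (k : Qp) ^ 2
            - 4 * (k : Qp) + 4 * b)
          + 4 * ((2 * (k : Qp) + 1) * (((k : Qp) + 1) * (k : Qp) - b)))
          * (u k * u (m - k))
        = ((m : Qp) + 1) * (∑ k ∈ range (m + 1),
            (4 * ((m - k : ℕ) : Qp) * (k : Qp) - 8 * (k : Qp) ^ 2 - 4 * (k : Qp) + 4 * b)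
              * (u k * u (m - k)))
          + 2 * (∑ k ∈ range (m + 1),
              2 * (2 * (k : Qp) + 1) * (((k : Qp) + 1) * (k : Qp) - b) * (u k * u (m - k))) := by
      rw [Finset.mul_sum, Finset.mul_sum, ← Finset.sum_add_distrib]
      apply Finset.sum_congr rfl
      intro k hk
      ring
    rw [← hexpand]
    exact hzero
  -- E5 : reflection identity for C
  have E5 : ((m : Qp) + 1) * (∑ k ∈ range m, u k * u (m - 1 - k))
      = 2 * ∑ k ∈ range m, ((k : Qp) + 1) * (u k * u (m - 1 - k)) := by
    have hzero : ∑ k ∈ range m,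
        (((m : Qp) + 1) - 2 * ((k : Qp) + 1)) * (u k * u (m - 1 - k)) = 0 := by
      apply refl_zero_aux u (fun k : ℕ => ((m : Qp) + 1) - 2 * ((k : Qp) + 1)) m
      intro j hj
      have hj' : j < m := mem_range.mp hj
      try simp only []
      have e1 : ((m - 1 - j : ℕ) : Qp) = (m : Qp) - 1 - (j : Qp) := by
        have h1 : (m - 1 - j) + (j + 1) = m := by omega
        have h2 := congrArg (fun t : ℕ => (t : Qp)) h1
        push_cast at h2
        linear_combination h2
      rw [e1]
      ring
    have hexpand : ∑ k ∈ range m,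
        (((m : Qp) + 1) - 2 * ((k : Qp) + 1)) * (u k * u (m - 1 - k))
        = ((m : Qp) + 1) * (∑ k ∈ range m, u k * u (m - 1 - k))
          - 2 * ∑ k ∈ range m, ((k : Qp) + 1) * (u k * u (m - 1 - k)) := by
      rw [Finset.mul_sum, Finset.mul_sum, ← Finset.sum_sub_distrib]
      apply Finset.sum_congr rfl
      intro k hk
      ring
    rw [hexpand] at hzero
    linear_combination hzero
  -- assemble
  have hkey : ((m : Qp) + 1) * ((∑ k ∈ range (m + 2), u k * u (m + 1 - k))
      + (∑ k ∈ range (m + 1),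
          (4 * ((m - k : ℕ) : Qp) * (k : Qp) - 8 * (k : Qp) ^ 2 - 4 * (k : Qp) + 4 * b)
            * (u k * u (m - k)))
      + 4 * c * (∑ k ∈ range m, u k * u (m - 1 - k))) = 0 := by
    linear_combination E1 + 2 * E2 + E4 - 2 * E3 + 4 * c * E5
  rcases mul_eq_zero.mp hkey with h | h
  · exact absurd h hM
  · exact h

lemma sum_four_aux {s : Finset ℕ} {f : ℕ → Qp}
    (h : ∀ k ∈ s, ∃ z : Zp, f k = 4 * phiZQ z) :
    ∃ z : Zp, ∑ k ∈ s, f k = 4 * phiZQ z := by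
  classical
  induction s using Finset.induction_on with
  | empty => exact ⟨0, by simp⟩
  | insert a s' hx ih =>
    obtain ⟨z1, hz1⟩ := h a (mem_insert_self a s')
    obtain ⟨z2, hz2⟩ := ih (fun k hk => h k (mem_insert_of_mem hk))
    refine ⟨z1 + z2, ?_⟩
    rw [Finset.sum_insert hx, hz1, hz2, map_add]
    ring

set_option maxHeartbeats 1000000 in
/-- Let `b`, `c` be indeterminates over `ℚ`.  The sequence `u n ∈ ℚ[b,c]` defined by
`u 0 = 1`, `u (-1) = 0` and `n·uₙ = 2(2n-1)(n(n-1)-b)·u_{n-1} - 4c(n-1)·u_{n-2}`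
consists of polynomials with integer coefficients. -/
theorem statement0
    (b c : MvPolynomial (Fin 2) ℚ) (hb : b = MvPolynomial.X 0) (hc : c = MvPolynomial.X 1)
    (u : ℕ → MvPolynomial (Fin 2) ℚ)
    (hu0 : u 0 = 1)
    (hurec : ∀ n : ℕ, 1 ≤ n →
      (n : MvPolynomial (Fin 2) ℚ) * u n =
        2 * (2 * (n : MvPolynomial (Fin 2) ℚ) - 1) *
            ((n : MvPolynomial (Fin 2) ℚ) * ((n : MvPolynomial (Fin 2) ℚ) - 1) - b) * u (n - 1)
          - 4 * c * ((n : MvPolynomial (Fin 2) ℚ) - 1) *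
            (if 2 ≤ n then u (n - 2) else 0)) :
    ∀ n : ℕ, ∃ v : MvPolynomial (Fin 2) ℤ,
      MvPolynomial.map (Int.castRingHom ℚ) v = u n := by
  have hbphi : b = phiZQ (X 0) := by rw [hb, MvPolynomial.map_X]
  have hcphi : c = phiZQ (X 1) := by rw [hc, MvPolynomial.map_X]
  have key : ∀ n : ℕ, ∃ v : Zp, phiZQ v = u n ∧ (n ≠ 0 → ∃ w : Zp, v = 2 * w) := by
    intro n
    induction n using Nat.strong_induction_on with
    | _ n ih =>
      rcases n with _ | m
      · exact ⟨1, by simp [hu0], by simp⟩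
      · -- step, n = m + 1
        have hq := quad_aux b c u hurec m
        -- peel off the two u (m+1) terms
        have hA1 : ∑ k ∈ range (m + 2), u k * u (m + 1 - k)
            = (∑ k ∈ range m, u (k + 1) * u (m - k)) + 2 * u (m + 1) := by
          rw [Finset.sum_range_succ]
          rw [Finset.sum_range_succ' (fun k : ℕ => u k * u (m + 1 - k)) m]
          have e1 : m + 1 - (m + 1) = 0 := by omega
          rw [e1, hu0]
          have e3 : ∑ k ∈ range m, u (k + 1) * u (m + 1 - (k + 1))
              = ∑ k ∈ range m, u (k + 1) * u (m - k) := by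
            apply Finset.sum_congr rfl
            intro k hk
            have : m + 1 - (k + 1) = m - k := by omega
            rw [this]
          rw [e3, show m + 1 - 0 = m + 1 from rfl]
          ring
        rw [hA1] at hq
        -- 2 * u (m+1) = - D - B - 4c*C
        have h2u : 2 * u (m + 1) =
            (∑ k ∈ range m, -(u (k + 1) * u (m - k)))
            + (∑ k ∈ range (m + 1),
                -((4 * ((m - k : ℕ) : Qp) * (k : Qp) - 8 * (k : Qp) ^ 2 - 4 * (k : Qp) + 4 * b)
                  * (u k * u (m - k))))
            + (∑ k ∈ range m, -(4 * c * (u k * u (m - 1 - k)))) := by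
          rw [Finset.sum_neg_distrib, Finset.sum_neg_distrib, Finset.sum_neg_distrib]
          rw [Finset.mul_sum] at hq
          linear_combination hq
        -- memberships
        have hint : ∀ j, j ≤ m → ∃ v : Zp, phiZQ v = u j := by
          intro j hj
          obtain ⟨v, hv, _⟩ := ih j (by omega)
          exact ⟨v, hv⟩
        have hint2 : ∀ j, 1 ≤ j → j ≤ m → ∃ w : Zp, u j = 2 * phiZQ w := by
          intro j hj1 hj2
          obtain ⟨v, hv, hw⟩ := ih j (by omega)
          obtain ⟨w, hw'⟩ := hw (by omega)
          refine ⟨w, ?_⟩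
          rw [← hv, hw', map_mul, map_ofNat]
        have hm1 : ∃ z : Zp, (∑ k ∈ range m, -(u (k + 1) * u (m - k))) = 4 * phiZQ z := by
          apply sum_four_aux
          intro k hk
          have hk' : k < m := mem_range.mp hk
          obtain ⟨w1, hw1⟩ := hint2 (k + 1) (by omega) (by omega)
          obtain ⟨w2, hw2⟩ := hint2 (m - k) (by omega) (by omega)
          refine ⟨-(w1 * w2), ?_⟩
          rw [hw1, hw2, map_neg, map_mul]
          ring
        have hm2 : ∃ z : Zp, (∑ k ∈ range (m + 1),
            -((4 * ((m - k : ℕ) : Qp) * (k : Qp) - 8 * (k : Qp) ^ 2 - 4 * (k : Qp) + 4 * b)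
              * (u k * u (m - k)))) = 4 * phiZQ z := by
          apply sum_four_aux
          intro k hk
          have hk' : k < m + 1 := mem_range.mp hk
          obtain ⟨v1, hv1⟩ := hint k (by omega)
          obtain ⟨v2, hv2⟩ := hint (m - k) (by omega)
          refine ⟨-((((m - k : ℕ) : Zp) * ((k : ℕ) : Zp) - 2 * ((k : ℕ) : Zp) ^ 2
              - ((k : ℕ) : Zp) + X 0) * (v1 * v2)), ?_⟩
          rw [map_neg, map_mul]
          have hcast : phiZQ ((((m - k : ℕ) : Zp) * ((k : ℕ) : Zp) - 2 * ((k : ℕ) : Zp) ^ 2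
              - ((k : ℕ) : Zp) + X 0))
              = ((m - k : ℕ) : Qp) * (k : Qp) - 2 * (k : Qp) ^ 2 - (k : Qp) + phiZQ (X 0) := by
            simp only [map_add, map_sub, map_mul, map_pow, map_natCast, map_ofNat]
          rw [hcast, map_mul, hv1, hv2, ← hbphi]
          ring
        have hm3 : ∃ z : Zp, (∑ k ∈ range m, -(4 * c * (u k * u (m - 1 - k)))) = 4 * phiZQ z := by
          apply sum_four_aux
          intro k hk
          have hk' : k < m := mem_range.mp hk
          obtain ⟨v1, hv1⟩ := hint k (by omega)
          obtain ⟨v2, hv2⟩ := hint (m - 1 - k) (by omega)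
          refine ⟨-(X 1 * (v1 * v2)), ?_⟩
          rw [map_neg, map_mul, map_mul, hv1, hv2, ← hcphi]
          ring
        obtain ⟨z1, hz1⟩ := hm1
        obtain ⟨z2, hz2⟩ := hm2
        obtain ⟨z3, hz3⟩ := hm3
        have hfin : 2 * u (m + 1) = 2 * (2 * phiZQ (z1 + z2 + z3)) := by
          rw [h2u, hz1, hz2, hz3, map_add, map_add]
          ring
        have hu : u (m + 1) = 2 * phiZQ (z1 + z2 + z3) :=
          mul_left_cancel₀ two_ne_zero hfin
        refine ⟨2 * (z1 + z2 + z3), ?_, fun _ => ⟨z1 + z2 + z3, rfl⟩⟩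
        rw [hu, map_mul, map_ofNat]
  intro n
  obtain ⟨v, hv, _⟩ := key n
  exact ⟨v, hv⟩
end

section
/- For all n ≥ 0 the element u_n lies in R[1/2], the subring of K generated by the image of R and the element 1/2. -/
open Polynomial Finset

/-- Evaluating a polynomial over `R` at a point of a subalgebra lands in the subalgebra. -/
lemma aux_aeval_mem {R K : Type*} [CommRing R] [CommRing K] [Algebra R K]
    (A : Subalgebra R K) (f : R[X]) {x : K} (hx : x ∈ A) : aeval x f ∈ A := by
  have h := Polynomial.aeval_algHom_apply A.val (⟨x, hx⟩ : A) f
  have hx2 : aeval x f = A.val (aeval (⟨x, hx⟩ : A) f) := by simpa using h.symm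
  rw [hx2]; exact (aeval (⟨x, hx⟩ : A) f).2

/-- `x - y` divides `f(x) - f(y)` within a subalgebra. -/
lemma aux_sub_dvd {R K : Type*} [CommRing R] [CommRing K] [Algebra R K]
    (A : Subalgebra R K) (f : R[X]) {x y : K} (hx : x ∈ A) (hy : y ∈ A) :
    ∃ c ∈ A, aeval x f - aeval y f = (x - y) * c := by
  obtain ⟨c, hc⟩ := Polynomial.sub_dvd_eval_sub (⟨x, hx⟩ : A) (⟨y, hy⟩ : A)
    (f.map (algebraMap R A))
  refine ⟨(c : K), c.2, ?_⟩
  have := congrArg (A.val) hc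
  simpa [Polynomial.eval_map_algebraMap, Polynomial.aeval_algHom_apply] using this

/-- An odd polynomial gives an odd function. -/
lemma aux_odd {R K : Type*} [CommRing R] [CommRing K] [Algebra R K]
    (f : R[X]) (hf : ∀ k : ℕ, f.coeff (2 * k) = 0) (y : K) :
    aeval (-y) f = -aeval y f := by
  rw [Polynomial.aeval_eq_sum_range, Polynomial.aeval_eq_sum_range, ← Finset.sum_neg_distrib]
  refine Finset.sum_congr rfl fun k _ => ?_
  rcases Nat.even_or_odd k with ⟨m, hm⟩ | hk
  · have : f.coeff k = 0 := by rw [hm, ← two_mul]; exact hf m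
    simp [this]
  · rw [hk.neg_pow, smul_neg]

/-- Let `R` be an integral domain of characteristic zero with fraction field `K`,
and let `p i ∈ t·R[t²]` (`i ≥ 1`) be odd polynomials with coefficients in `R`
(i.e. all even-degree coefficients vanish).  If `u : ℕ → K` satisfies `u 0 = 1` and
`n·uₙ = ∑_{i=1}^{n} pᵢ(n - i/2)·u_{n-i}` for `n ≥ 1`, then every `u n` lies in
`R[1/2]`, the `R`-subalgebra of `K` generated by `1/2`. -/
theorem statement1
    (R : Type*) [CommRing R] [IsDomain R] [CharZero R]
    (K : Type*) [Field K] [Algebra R K] [IsFractionRing R K]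
    (p : ℕ → Polynomial R)
    (hodd : ∀ i, 1 ≤ i → ∀ k : ℕ, (p i).coeff (2 * k) = 0)
    (u : ℕ → K)
    (hu0 : u 0 = 1)
    (hurec : ∀ n : ℕ, 1 ≤ n →
      (n : K) * u n =
        ∑ i ∈ Finset.Icc 1 n,
          Polynomial.aeval ((n : K) - (i : K) / 2) (p i) * u (n - i)) :
    ∀ n : ℕ, u n ∈ Algebra.adjoin R {(2 : K)⁻¹} := by
  haveI : CharZero K := charZero_of_injective_algebraMap (IsFractionRing.injective R K)
  set A := Algebra.adjoin R {(2 : K)⁻¹} with hA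
  have h2A : (2 : K)⁻¹ ∈ A := Algebra.self_mem_adjoin_singleton R _
  have hnatA : ∀ m : ℕ, ((m : K)) ∈ A := fun m => natCast_mem A m
  have hhalfA : ∀ m i : ℕ, ((m : K) + (i : K) / 2) ∈ A := fun m i => by
    rw [div_eq_mul_inv]
    exact A.add_mem (hnatA m) (A.mul_mem (hnatA i) h2A)
  -- the recursion, valid for all a (trivial at a = 0)
  have hrec' : ∀ a : ℕ, (a : K) * u a =
      ∑ i ∈ Finset.Icc 1 a, aeval ((a : K) - (i : K) / 2) (p i) * u (a - i) := by
    intro a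
    rcases Nat.eq_zero_or_pos a with rfl | ha
    · simp
    · exact hurec a ha
  intro n
  induction n using Nat.strong_induction_on with
  | _ n IH =>
  rcases n with _ | m
  · simpa [hu0] using A.one_mem
  set n := m + 1 with hn
  have hnpos : 0 < n := Nat.succ_pos m
  have hnne : (n : K) ≠ 0 := Nat.cast_ne_zero.mpr hnpos.ne'
  -- the symmetrized square sum
  set S0 : K := ∑ a ∈ range (n + 1), u a * u (n - a) with hS0def
  -- G i j = p_i (j + i/2)
  set G : ℕ → ℕ → K := fun i j => aeval ((j : K) + (i : K) / 2) (p i) with hG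
  -- Step 1: n * S0 = 2 * ∑ a, a * u a * u (n-a)
  have step1 : (n : K) * S0 =
      2 * ∑ a ∈ range (n + 1), (a : K) * (u a * u (n - a)) := by
    have e1 : (n : K) * S0 =
        ∑ a ∈ range (n + 1), ((a : K) + ((n - a : ℕ) : K)) * (u a * u (n - a)) := by
      rw [hS0def, Finset.mul_sum]
      refine Finset.sum_congr rfl fun a ha => ?_
      have ha' : a ≤ n := Nat.lt_succ_iff.mp (Finset.mem_range.mp ha)
      have : ((n - a : ℕ) : K) = (n : K) - (a : K) := by
        rw [Nat.cast_sub ha']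
      rw [this]; ring
    have e2 : ∑ a ∈ range (n + 1), ((n - a : ℕ) : K) * (u a * u (n - a)) =
        ∑ a ∈ range (n + 1), (a : K) * (u a * u (n - a)) := by
      rw [← Finset.sum_range_reflect (fun a => ((n - a : ℕ) : K) * (u a * u (n - a))) (n + 1)]
      refine Finset.sum_congr rfl fun a ha => ?_
      have ha' : a ≤ n := Nat.lt_succ_iff.mp (Finset.mem_range.mp ha)
      simp only [Nat.add_sub_cancel]
      rw [Nat.sub_sub_self ha']
      ring
    rw [e1]
    simp only [add_mul]
    rw [Finset.sum_add_distrib, e2, two_mul]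
  -- Step 2: substitute the recursion and reindex
  have step2 : ∑ a ∈ range (n + 1), (a : K) * (u a * u (n - a)) =
      ∑ i ∈ Finset.Icc 1 n, ∑ j ∈ range (n - i + 1), G i j * u j * u (n - i - j) := by
    have e3 : ∀ a ∈ range (n + 1), (a : K) * (u a * u (n - a)) =
        ∑ i ∈ Finset.Icc 1 a, aeval ((a : K) - (i : K) / 2) (p i) * u (a - i) * u (n - a) := by
      intro a _
      rw [← mul_assoc, hrec', Finset.sum_mul]
    rw [Finset.sum_congr rfl e3]
    rw [Finset.sum_sigma' (range (n + 1)) (fun a => Finset.Icc 1 a)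
      (fun a i => aeval ((a : K) - (i : K) / 2) (p i) * u (a - i) * u (n - a))]
    rw [Finset.sum_sigma' (Finset.Icc 1 n) (fun i => range (n - i + 1))
      (fun i j => G i j * u j * u (n - i - j))]
    refine Finset.sum_nbij' (fun x => ⟨x.2, x.1 - x.2⟩) (fun x => ⟨x.1 + x.2, x.1⟩)
      ?_ ?_ ?_ ?_ ?_
    · rintro ⟨a, i⟩ hx
      simp only [Finset.mem_sigma, Finset.mem_range, Finset.mem_Icc] at hx ⊢
      omega
    · rintro ⟨i, j⟩ hx
      simp only [Finset.mem_sigma, Finset.mem_range, Finset.mem_Icc] at hx ⊢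
      omega
    · rintro ⟨a, i⟩ hx
      simp only [Finset.mem_sigma, Finset.mem_range, Finset.mem_Icc] at hx
      have : i + (a - i) = a := by omega
      simp [this]
    · rintro ⟨i, j⟩ hx
      simp only [Finset.mem_sigma, Finset.mem_range, Finset.mem_Icc] at hx
      simp [Nat.add_sub_cancel_left]
    · rintro ⟨a, i⟩ hx
      simp only [Finset.mem_sigma, Finset.mem_range, Finset.mem_Icc] at hx
      obtain ⟨ha, hi1, hia⟩ := hx
      have ha' : a ≤ n := by omega
      simp only [hG]
      have harg : (a : K) - (i : K) / 2 = ((a - i : ℕ) : K) + (i : K) / 2 := by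
        rw [Nat.cast_sub hia]; ring
      have hsub : n - i - (a - i) = n - a := by omega
      rw [harg, hsub]
  -- Step 3: fold with the reflection to symmetrize
  have step3 : (n : K) * S0 =
      ∑ i ∈ Finset.Icc 1 n, ∑ j ∈ range (n - i + 1),
        (G i j + G i (n - i - j)) * (u j * u (n - i - j)) := by
    rw [step1, step2, Finset.mul_sum]
    refine Finset.sum_congr rfl fun i hi => ?_
    have hrefl : ∑ j ∈ range (n - i + 1), G i j * u j * u (n - i - j) =
        ∑ j ∈ range (n - i + 1), G i (n - i - j) * u (n - i - j) * u j := by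
      rw [← Finset.sum_range_reflect
        (fun j => G i j * u j * u (n - i - j)) (n - i + 1)]
      refine Finset.sum_congr rfl fun j hj => ?_
      have hj' : j ≤ n - i := Nat.lt_succ_iff.mp (Finset.mem_range.mp hj)
      simp only [Nat.add_sub_cancel]
      rw [Nat.sub_sub_self hj']
    rw [two_mul]
    nth_rewrite 2 [hrefl]
    rw [← Finset.sum_add_distrib]
    refine Finset.sum_congr rfl fun j hj => ?_
    ring
  -- Step 4: each symmetrized bracket is divisible by n within A
  have step4 : ∀ i ∈ Finset.Icc 1 n, ∀ j ∈ range (n - i + 1),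
      ∃ c ∈ A, (G i j + G i (n - i - j)) * (u j * u (n - i - j)) = (n : K) * c := by
    intro i hi j hj
    obtain ⟨hi1, hin⟩ := Finset.mem_Icc.mp hi
    have hj' : j ≤ n - i := Nat.lt_succ_iff.mp (Finset.mem_range.mp hj)
    set x : K := (j : K) + (i : K) / 2 with hx
    have hxA : x ∈ A := hhalfA j i
    have hxnA : x - (n : K) ∈ A := A.sub_mem hxA (hnatA n)
    have hGn : G i (n - i - j) = - aeval (x - (n : K)) (p i) := by
      have hcast : ((n - i - j : ℕ) : K) = (n : K) - (i : K) - (j : K) := by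
        have h1 : ((n - i - j : ℕ) : K) = ((n - i : ℕ) : K) - (j : K) := by
          rw [Nat.cast_sub hj']
        have h2 : ((n - i : ℕ) : K) = (n : K) - (i : K) := by
          rw [Nat.cast_sub hin]
        rw [h1, h2]
      have harg : ((n - i - j : ℕ) : K) + (i : K) / 2 = -(x - (n : K)) := by
        rw [hcast, hx]; ring
      rw [hG]
      simp only
      rw [harg, aux_odd (p i) (hodd i hi1)]
    obtain ⟨c, hcA, hc⟩ := aux_sub_dvd A (p i) hxA hxnA
    have hbr : G i j + G i (n - i - j) = (n : K) * c := by
      rw [hGn, hG]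
      simp only
      rw [← hx]
      have : aeval x (p i) + -aeval (x - (n : K)) (p i)
          = (x - (x - (n : K))) * c := by rw [← hc]; ring
      rw [this]; ring
    refine ⟨c * (u j * u (n - i - j)), ?_, ?_⟩
    · refine A.mul_mem hcA (A.mul_mem ?_ ?_)
      · exact IH j (by omega)
      · exact IH (n - i - j) (by omega)
    · rw [hbr]; ring
  -- choose witnesses and cancel n
  choose! c hcA hc using step4
  have hS0A : S0 ∈ A := by
    have : S0 = ∑ i ∈ Finset.Icc 1 n, ∑ j ∈ range (n - i + 1), c i j := by
      apply mul_left_cancel₀ hnne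
      rw [step3, Finset.mul_sum]
      refine Finset.sum_congr rfl fun i hi => ?_
      rw [Finset.mul_sum]
      exact Finset.sum_congr rfl fun j hj => hc i hi j hj
    rw [this]
    exact A.sum_mem fun i hi => A.sum_mem fun j hj => hcA i hi j hj
  -- Step 5: extract u n
  have hmid : (∑ j ∈ range m, u (j + 1) * u (n - (j + 1))) ∈ A :=
    A.sum_mem fun j hj => by
      have hjm : j < m := Finset.mem_range.mp hj
      exact A.mul_mem (IH (j + 1) (by omega)) (IH (n - (j + 1)) (by omega))
  have hsplit : S0 = (∑ j ∈ range m, u (j + 1) * u (n - (j + 1))) + u n + u n := by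
    rw [hS0def, Finset.sum_range_succ, hn, Finset.sum_range_succ']
    simp [hu0]
  have hun : u n = (2 : K)⁻¹ * (S0 - ∑ j ∈ range m, u (j + 1) * u (n - (j + 1))) := by
    rw [hsplit]
    have h2 : (2 : K) ≠ 0 := two_ne_zero
    field_simp
    ring
  rw [hun]
  exact A.mul_mem h2A (A.sub_mem hS0A hmid)
end

section
/- In the formal power series ring ℚ[β][[t]] the identity (Σ_{n≥0} (1/2+β)_n (1/2-β)_n t^n / n!) · (Σ_{n≥0} (1/2+β)_n (1/2-β)_n (-1)^n t^n / n!) = Σ_{n≥0} (1/2+β)_n (1/2-β)_n · C(2n,n) · t^{2n} holds, where (a)_n = a(a+1)⋯(a+n-1) denotes the Pochhammer symbol (rising factorial) and C(2n,n) is the central binomial coefficient. -/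
open Polynomial Finset

open Polynomial Finset

noncomputable def pa3 (n : ℕ) : Polynomial ℚ :=
  (ascPochhammer (Polynomial ℚ) n).eval (Polynomial.C (1/2 : ℚ) + Polynomial.X)
noncomputable def pb3 (n : ℕ) : Polynomial ℚ :=
  (ascPochhammer (Polynomial ℚ) n).eval (Polynomial.C (1/2 : ℚ) - Polynomial.X)
noncomputable def Q3 : Polynomial ℚ := Polynomial.C (1/4 : ℚ) - Polynomial.X ^ 2
noncomputable def c3 (n : ℕ) : Polynomial ℚ := Polynomial.C ((n.factorial : ℚ)⁻¹) * (pa3 n * pb3 n)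
noncomputable def d3 (n : ℕ) : Polynomial ℚ := (-1) ^ n * c3 n
noncomputable def W3 (p m : ℕ) : Polynomial ℚ :=
  ∑ j ∈ Finset.range (m+1), Polynomial.C ((2*(j:ℚ) - (m:ℚ))^p) * (c3 j * d3 (m - j))

lemma pab3_rec (n : ℕ) :
    pa3 (n+1) * pb3 (n+1) = (Q3 + C ((n:ℚ)^2 + (n:ℚ))) * (pa3 n * pb3 n) := by
  have hhalf : (2:Polynomial ℚ) * C (1/2 : ℚ) = 1 := by
    rw [← map_ofNat (C : ℚ →+* Polynomial ℚ) 2, ← map_mul, ← map_one (C : ℚ →+* Polynomial ℚ)]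
    norm_num
  have hq : C (1/4 : ℚ) = C (1/2 : ℚ) * C (1/2 : ℚ) := by
    rw [← map_mul]; norm_num
  unfold pa3 pb3 Q3
  rw [ascPochhammer_succ_right]
  simp only [eval_mul, eval_add, eval_X, eval_natCast]
  rw [hq, ← map_natCast (C : ℚ →+* Polynomial ℚ) n]
  simp only [map_add, map_pow]
  linear_combination ((ascPochhammer (Polynomial ℚ) n).eval (C (1/2:ℚ) + X) *
    (ascPochhammer (Polynomial ℚ) n).eval (C (1/2:ℚ) - X) * C ((n:ℚ))) * hhalf

lemma c3_rec (n : ℕ) :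
    C ((n:ℚ)+1) * c3 (n+1) = (Q3 + C ((n:ℚ)^2 + (n:ℚ))) * c3 n := by
  unfold c3
  rw [pab3_rec, Nat.factorial_succ]
  have h1 : ((((n+1) * n.factorial : ℕ) : ℚ))⁻¹ = ((n:ℚ)+1)⁻¹ * ((n.factorial : ℚ))⁻¹ := by
    push_cast; rw [mul_inv]
  rw [h1, map_mul]
  have h2 : C ((n:ℚ)+1) * C (((n:ℚ)+1)⁻¹) = 1 := by
    rw [← map_mul, mul_inv_cancel₀ (by positivity), map_one]
  linear_combination (C ((n.factorial:ℚ)⁻¹) * ((Q3 + C ((n:ℚ)^2 + (n:ℚ))) * (pa3 n * pb3 n))) * h2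

lemma d3_rec (n : ℕ) :
    C ((n:ℚ)+1) * d3 (n+1) = -((Q3 + C ((n:ℚ)^2 + (n:ℚ))) * d3 n) := by
  unfold d3
  linear_combination ((-1 : Polynomial ℚ)^(n+1)) * c3_rec n

lemma SL1 (φ : ℕ → ℚ) (m : ℕ) :
    ∑ j ∈ Finset.range (m+2), C ((j:ℚ) * φ j) * (c3 j * d3 (m+1-j))
      = ∑ j ∈ Finset.range (m+1),
          C (φ (j+1)) * ((Q3 + C ((j:ℚ)^2 + (j:ℚ))) * (c3 j * d3 (m-j))) := by
  rw [Finset.sum_range_succ']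
  simp only [Nat.cast_zero, zero_mul, map_zero]
  rw [add_zero]
  refine Finset.sum_congr rfl (fun j hj => ?_)
  have hd : m + 1 - (j+1) = m - j := by omega
  rw [hd]
  have h := c3_rec j
  push_cast
  simp only [map_mul] at h ⊢
  linear_combination (C (φ (j+1)) * d3 (m-j)) * h

lemma SL2 (ψ : ℕ → ℚ) (m : ℕ) :
    ∑ j ∈ Finset.range (m+2), C (((m:ℚ)+1-(j:ℚ)) * ψ j) * (c3 j * d3 (m+1-j))
      = -∑ j ∈ Finset.range (m+1),
          C (ψ j) * ((Q3 + C (((m:ℚ)-(j:ℚ))^2 + ((m:ℚ)-(j:ℚ)))) * (c3 j * d3 (m-j))) := by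
  rw [Finset.sum_range_succ]
  have hz : ((m:ℚ)+1-((m+1:ℕ):ℚ)) * ψ (m+1) = 0 := by push_cast; ring
  rw [hz, map_zero, zero_mul, add_zero, ← Finset.sum_neg_distrib]
  refine Finset.sum_congr rfl (fun j hj => ?_)
  have hjm : j ≤ m := by simpa [Nat.lt_succ_iff] using hj
  have hd : m + 1 - j = (m - j) + 1 := by omega
  have h := d3_rec (m-j)
  rw [Nat.cast_sub hjm] at h
  rw [hd]
  simp only [map_mul, map_sub, map_add, map_one, map_pow] at h ⊢
  linear_combination (C (ψ j) * c3 j) * h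

lemma combo (φ ψ : ℕ → ℚ) (m : ℕ) :
    ∑ j ∈ Finset.range (m+2),
        C ((j:ℚ) * φ j + ((m:ℚ)+1-(j:ℚ)) * ψ j) * (c3 j * d3 (m+1-j))
      = ∑ j ∈ Finset.range (m+1),
          (C (φ (j+1)) * (Q3 + C ((j:ℚ)^2 + (j:ℚ)))
            - C (ψ j) * (Q3 + C (((m:ℚ)-(j:ℚ))^2 + ((m:ℚ)-(j:ℚ)))))
            * (c3 j * d3 (m-j)) := by
  have h1 := SL1 φ m
  have h2 := SL2 ψ m
  have step : ∑ j ∈ Finset.range (m+2),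
        C ((j:ℚ) * φ j + ((m:ℚ)+1-(j:ℚ)) * ψ j) * (c3 j * d3 (m+1-j))
      = (∑ j ∈ Finset.range (m+2), C ((j:ℚ) * φ j) * (c3 j * d3 (m+1-j)))
        + ∑ j ∈ Finset.range (m+2), C (((m:ℚ)+1-(j:ℚ)) * ψ j) * (c3 j * d3 (m+1-j)) := by
    rw [← Finset.sum_add_distrib]
    refine Finset.sum_congr rfl (fun j hj => ?_)
    rw [map_add]; ring
  rw [step, h1, h2, ← sub_eq_add_neg, ← Finset.sum_sub_distrib]
  refine Finset.sum_congr rfl (fun j hj => ?_)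
  ring

lemma CmAdd_ne (r : ℚ) (hr : 0 < r) (m : ℕ) : (C ((m:ℚ)+r) : Polynomial ℚ) ≠ 0 := by
  rw [Ne, Polynomial.C_eq_zero]
  positivity

lemma A3 (m : ℕ) : W3 0 (m+1) = W3 1 m := by
  refine mul_left_cancel₀ (CmAdd_ne 1 one_pos m) ?_
  have h := combo (fun _ => 1) (fun _ => 1) m
  calc C ((m:ℚ)+1) * W3 0 (m+1)
      = ∑ j ∈ Finset.range (m+1+1),
          C ((j:ℚ) * 1 + ((m:ℚ)+1-(j:ℚ)) * 1) * (c3 j * d3 (m+1-j)) := by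
        unfold W3; rw [Finset.mul_sum]
        refine Finset.sum_congr rfl (fun j hj => ?_)
        push_cast
        simp only [mul_one, pow_zero, map_one, map_add, map_sub]
        ring
    _ = ∑ j ∈ Finset.range (m+1),
          (C ((fun _ => (1:ℚ)) (j+1)) * (Q3 + C ((j:ℚ)^2 + (j:ℚ)))
            - C ((fun _ => (1:ℚ)) j) * (Q3 + C (((m:ℚ)-(j:ℚ))^2 + ((m:ℚ)-(j:ℚ)))))
            * (c3 j * d3 (m-j)) := h
    _ = C ((m:ℚ)+1) * W3 1 m := by
        unfold W3; rw [Finset.mul_sum]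
        refine Finset.sum_congr rfl (fun j hj => ?_)
        simp only [map_one, map_add, map_sub, map_mul, map_pow, pow_one, map_ofNat]
        ring

lemma B3 (m : ℕ) :
    C 2 * W3 1 (m+1) = W3 2 m + (C ((m:ℚ)^2 + 2*(m:ℚ)) + C 4 * Q3) * W3 0 m := by
  have h := combo (fun _ => 2) (fun _ => -2) m
  calc C (2:ℚ) * W3 1 (m+1)
      = ∑ j ∈ Finset.range (m+1+1),
          C ((j:ℚ) * 2 + ((m:ℚ)+1-(j:ℚ)) * (-2)) * (c3 j * d3 (m+1-j)) := by
        unfold W3; rw [Finset.mul_sum]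
        refine Finset.sum_congr rfl (fun j hj => ?_)
        push_cast
        simp only [pow_one, map_add, map_sub, map_mul, map_neg, map_ofNat]
        ring
    _ = ∑ j ∈ Finset.range (m+1),
          (C ((fun _ => (2:ℚ)) (j+1)) * (Q3 + C ((j:ℚ)^2 + (j:ℚ)))
            - C ((fun _ => (-2:ℚ)) j) * (Q3 + C (((m:ℚ)-(j:ℚ))^2 + ((m:ℚ)-(j:ℚ)))))
            * (c3 j * d3 (m-j)) := h
    _ = W3 2 m + (C ((m:ℚ)^2 + 2*(m:ℚ)) + C 4 * Q3) * W3 0 m := by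
        unfold W3
        rw [Finset.mul_sum, ← Finset.sum_add_distrib]
        refine Finset.sum_congr rfl (fun j hj => ?_)
        simp only [pow_zero, map_one, map_add, map_sub, map_mul, map_pow, map_neg, map_ofNat]
        ring

lemma E3 (m : ℕ) :
    C ((m:ℚ)+3) * W3 2 (m+1)
      = C ((m:ℚ)+1) * ((C (((m:ℚ)+1)*((m:ℚ)+3)) + C 4 * Q3) * W3 1 m) := by
  have h := combo
    (fun j => 2*((m:ℚ)+2)*(2*(j:ℚ)-((m:ℚ)+1)) - (2*(j:ℚ)-((m:ℚ)+1))^2)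
    (fun j => -(2*((m:ℚ)+2)*(2*(j:ℚ)-((m:ℚ)+1))) - (2*(j:ℚ)-((m:ℚ)+1))^2) m
  calc C ((m:ℚ)+3) * W3 2 (m+1)
      = ∑ j ∈ Finset.range (m+1+1),
          C ((j:ℚ) * (2*((m:ℚ)+2)*(2*(j:ℚ)-((m:ℚ)+1)) - (2*(j:ℚ)-((m:ℚ)+1))^2)
            + ((m:ℚ)+1-(j:ℚ)) * (-(2*((m:ℚ)+2)*(2*(j:ℚ)-((m:ℚ)+1))) - (2*(j:ℚ)-((m:ℚ)+1))^2))
            * (c3 j * d3 (m+1-j)) := by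
        unfold W3; rw [Finset.mul_sum]
        refine Finset.sum_congr rfl (fun j hj => ?_)
        push_cast
        simp only [map_add, map_sub, map_mul, map_pow, map_neg, map_ofNat, map_one]
        ring
    _ = _ := h
    _ = C ((m:ℚ)+1) * ((C (((m:ℚ)+1)*((m:ℚ)+3)) + C 4 * Q3) * W3 1 m) := by
        unfold W3
        rw [Finset.mul_sum, Finset.mul_sum]
        refine Finset.sum_congr rfl (fun j hj => ?_)
        push_cast
        simp only [pow_one, map_add, map_sub, map_mul, map_pow, map_neg, map_ofNat, map_one]
        ring

lemma Wodd (m : ℕ) (hm : Odd m) : W3 0 m = 0 := by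
  have key : W3 0 m = -W3 0 m := by
    conv_lhs => rw [W3, ← Finset.sum_range_reflect]
    rw [W3, ← Finset.sum_neg_distrib]
    refine Finset.sum_congr rfl (fun j hj => ?_)
    have hjm : j ≤ m := by simpa [Nat.lt_succ_iff] using hj
    simp only [Nat.add_sub_cancel, pow_zero, map_one, one_mul]
    rw [Nat.sub_sub_self hjm]
    unfold d3
    have hs : (-1 : Polynomial ℚ)^(m-j) * (-1)^j = -1 := by
      rw [← pow_add, Nat.sub_add_cancel hjm]
      exact hm.neg_one_pow
    have h4 : (-1 : Polynomial ℚ)^j * (-1)^j = 1 := by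
      rw [← pow_add]
      exact (Even.neg_one_pow ⟨j, rfl⟩)
    linear_combination (c3 j * c3 (m-j) * (-1 : Polynomial ℚ)^j) * hs
      - (c3 j * c3 (m-j) * (-1 : Polynomial ℚ)^(m-j)) * h4
  have h2 : (2 : Polynomial ℚ) * W3 0 m = 0 := by linear_combination key
  rcases mul_eq_zero.mp h2 with h | h
  · exact absurd h (by norm_num)
  · exact h

lemma MS2 (n : ℕ) :
    C (2*(n:ℚ)+2) * W3 2 (2*n)
      = C (2*(n:ℚ)) * ((C (4*(n:ℚ)^2 + 4*(n:ℚ)) + C 4 * Q3) * W3 0 (2*n)) := by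
  cases n with
  | zero => simp [W3]
  | succ n =>
    have hE := E3 (2*n+1)
    have hA := A3 (2*n+1)
    have hidx : 2*(n+1) = 2*n+1+1 := by omega
    rw [hidx, hA]
    push_cast at hE ⊢
    simp only [map_add, map_mul, map_sub, map_pow, map_ofNat, map_one] at hE ⊢
    linear_combination hE

lemma MAIN (n : ℕ) :
    W3 0 (2*n) = C ((Nat.choose (2*n) n : ℚ)) * (pa3 n * pb3 n) := by
  induction n with
  | zero => simp [W3, c3, d3, pa3, pb3]
  | succ n ih =>
    have hA := A3 (2*n+1)
    have hB := B3 (2*n)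
    have hMS := MS2 n
    have hpab := pab3_rec n
    have hch : C (((n:ℚ)+1)) * C ((Nat.choose (2*n+1+1) (n+1) : ℚ))
        = C (2:ℚ) * (C (2*(n:ℚ)+1) * C ((Nat.choose (2*n) n : ℚ))) := by
      rw [← map_mul, ← map_mul, ← map_mul]
      congr 1
      have h := Nat.succ_mul_centralBinom_succ n
      unfold Nat.centralBinom at h
      have h2 : 2*(n+1) = 2*n+1+1 := by omega
      rw [h2] at h
      have hq := congrArg (Nat.cast (R := ℚ)) h
      push_cast at hq
      linear_combination hq
    have hidx : 2*(n+1) = 2*n+1+1 := by omega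
    rw [hidx, hA]
    refine mul_left_cancel₀ (show (C ((2*(n:ℚ)+2)*2) : Polynomial ℚ) ≠ 0 by
      rw [Ne, Polynomial.C_eq_zero]; positivity) ?_
    push_cast at hB hMS ⊢
    simp only [map_add, map_mul, map_sub, map_pow, map_ofNat, map_one] at hB hMS ih hpab hch ⊢
    linear_combination (2*C ((n:ℚ))+2) * hB + hMS
      + ((4*C ((n:ℚ))+2) * (4*C ((n:ℚ))^2+4*C ((n:ℚ))+4*Q3)) * ih
      - (4 * (Q3 + C ((n:ℚ))^2 + C ((n:ℚ))) * (pa3 n * pb3 n)) * hch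
      - ((4*C ((n:ℚ))+4) * C ((Nat.choose (2*n+1+1) (n+1) : ℚ))) * hpab

/-- The hypergeometric identity
`(∑ (1/2+β)ₙ(1/2-β)ₙ tⁿ/n!) · (∑ (1/2+β)ₙ(1/2-β)ₙ (-1)ⁿtⁿ/n!)
  = ∑ (1/2+β)ₙ(1/2-β)ₙ C(2n,n) t^{2n}`
in the formal power series ring `ℚ[β][[t]]`. -/
theorem statement3 :
    (PowerSeries.mk fun n : ℕ =>
        Polynomial.C ((n.factorial : ℚ)⁻¹) *
          ((ascPochhammer (Polynomial ℚ) n).eval (Polynomial.C (1/2 : ℚ) + Polynomial.X) *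
           (ascPochhammer (Polynomial ℚ) n).eval (Polynomial.C (1/2 : ℚ) - Polynomial.X))) *
    (PowerSeries.mk fun n : ℕ =>
        (-1 : Polynomial ℚ) ^ n * Polynomial.C ((n.factorial : ℚ)⁻¹) *
          ((ascPochhammer (Polynomial ℚ) n).eval (Polynomial.C (1/2 : ℚ) + Polynomial.X) *
           (ascPochhammer (Polynomial ℚ) n).eval (Polynomial.C (1/2 : ℚ) - Polynomial.X))) =
    PowerSeries.mk (fun m : ℕ =>
        if Even m then
          (Nat.choose m (m / 2) : Polynomial ℚ) *
            ((ascPochhammer (Polynomial ℚ) (m / 2)).eval (Polynomial.C (1/2 : ℚ) + Polynomial.X) *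
             (ascPochhammer (Polynomial ℚ) (m / 2)).eval (Polynomial.C (1/2 : ℚ) - Polynomial.X))
        else 0) := by
  apply PowerSeries.ext
  intro m
  rw [PowerSeries.coeff_mul]
  simp only [PowerSeries.coeff_mk]
  rw [Finset.Nat.sum_antidiagonal_eq_sum_range_succ_mk]
  have hL : ∑ k ∈ Finset.range (m+1),
      (Polynomial.C ((k.factorial : ℚ)⁻¹) *
          ((ascPochhammer (Polynomial ℚ) k).eval (Polynomial.C (1/2 : ℚ) + Polynomial.X) *
           (ascPochhammer (Polynomial ℚ) k).eval (Polynomial.C (1/2 : ℚ) - Polynomial.X))) *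
      ((-1 : Polynomial ℚ) ^ (m-k) * Polynomial.C (((m-k).factorial : ℚ)⁻¹) *
          ((ascPochhammer (Polynomial ℚ) (m-k)).eval (Polynomial.C (1/2 : ℚ) + Polynomial.X) *
           (ascPochhammer (Polynomial ℚ) (m-k)).eval (Polynomial.C (1/2 : ℚ) - Polynomial.X)))
      = W3 0 m := by
    unfold W3
    refine Finset.sum_congr rfl (fun j hj => ?_)
    simp only [pow_zero, map_one, one_mul, c3, d3, pa3, pb3]
    ring
  rw [hL]
  by_cases hm : Even m
  · rw [if_pos hm]
    obtain ⟨k, rfl⟩ := hm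
    have hdiv : (k+k)/2 = k := by omega
    have hkk : k + k = 2*k := by omega
    rw [hdiv, hkk, MAIN k]
    unfold pa3 pb3
    rw [map_natCast (Polynomial.C : ℚ →+* Polynomial ℚ)]
  · rw [if_neg hm]
    exact Wodd m (Nat.not_even_iff_odd.mp hm)
end

section
/- In the formal power series ring ℚ[b,c][[t]] the identity Σ_{n≥0} u_n t^{2n} = Σ_{k≥0} (-1)^k c^k t^{4k} · Σ_{n≥0} (-1)^n · n! · w_n · C(n+k,k) · C(2n+2k,n+k) · t^{2n} holds. -/
/-- The coefficient ring `ℚ[b,c]`. -/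
abbrev Rbc : Type := MvPolynomial (Fin 2) ℚ

namespace Stmt4Aux

def D (n k : ℕ) : ℕ := n.factorial * Nat.choose (n+k) k * Nat.choose (2*n+2*k) (n+k)

lemma D_mul_fact (n k : ℕ) : D n k * (k.factorial * (n+k).factorial) = (2*n+2*k).factorial := by
  have h1 : (n+k).choose k * k.factorial * n.factorial = (n+k).factorial := by
    have := Nat.choose_mul_factorial_mul_factorial (show k ≤ n + k by omega)
    simpa [Nat.add_sub_cancel] using this
  have h2 : (2*n+2*k).choose (n+k) * (n+k).factorial * (n+k).factorial = (2*n+2*k).factorial := by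
    have := Nat.choose_mul_factorial_mul_factorial (show n+k ≤ 2*n+2*k by omega)
    have e : 2*n+2*k - (n+k) = n+k := by omega
    rw [e] at this
    exact this
  calc D n k * (k.factorial * (n+k).factorial)
      = ((n+k).choose k * k.factorial * n.factorial) * ((2*n+2*k).choose (n+k)) * (n+k).factorial := by
        unfold D; ring
    _ = (n+k).factorial * ((2*n+2*k).choose (n+k)) * (n+k).factorial := by rw [h1]
    _ = (2*n+2*k).factorial := by rw [← h2]; ring

lemma D_mul_fact_R (n k : ℕ) :
    (D n k : Rbc) * ((k.factorial : Rbc) * ((n+k).factorial : Rbc)) = ((2*n+2*k).factorial : Rbc) := by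
  exact_mod_cast congrArg (Nat.cast : ℕ → Rbc) (D_mul_fact n k)

lemma fact_ne (a : ℕ) : ((a.factorial : ℕ) : Rbc) ≠ 0 := by
  exact_mod_cast Nat.cast_ne_zero.mpr a.factorial_pos.ne'

lemma D00 : D 0 0 = 1 := by decide

lemma idA1a (m : ℕ) : (D (m+1) 0 : Rbc) = 2*(2*(m:Rbc)+1) * (D m 0 : Rbc) := by
  have h1 := D_mul_fact_R (m+1) 0
  have h2 := D_mul_fact_R m 0
  rw [show (m+1)+0 = m+1 from by omega, show 2*(m+1)+2*0 = 2*m+2 from by omega] at h1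
  rw [show m+0 = m from by omega, show 2*m+2*0 = 2*m from by omega] at h2
  have e1 : ((m+1).factorial : Rbc) = ((m:Rbc)+1) * (m.factorial : Rbc) := by
    push_cast [Nat.factorial_succ]; ring
  have e2 : ((2*m+2).factorial : Rbc) = (2*(m:Rbc)+2)*(2*(m:Rbc)+1) * ((2*m).factorial : Rbc) := by
    rw [show 2*m+2 = (2*m+1)+1 from rfl, Nat.factorial_succ, show 2*m+1 = (2*m)+1 from rfl,
      Nat.factorial_succ]
    push_cast; ring
  apply mul_right_cancel₀ (b := ((Nat.factorial 0 : ℕ) : Rbc) * ((m+1).factorial : Rbc))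
    (by exact mul_ne_zero (fact_ne 0) (fact_ne (m+1)))
  rw [e1] at h1 ⊢
  linear_combination h1 - 2*(2*(m:Rbc)+1)*((m:Rbc)+1) * h2 + e2

lemma idA0 (j : ℕ) : (2*(j:Rbc)+2) * (D 0 (j+1) : Rbc) = 4*(2*(j:Rbc)+1) * (D 0 j : Rbc) := by
  have h1 := D_mul_fact_R 0 (j+1)
  have h2 := D_mul_fact_R 0 j
  rw [show 0+(j+1) = j+1 from by omega, show 2*0+2*(j+1) = 2*j+2 from by omega] at h1
  rw [show 0+j = j from by omega, show 2*0+2*j = 2*j from by omega] at h2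
  have e1 : ((j+1).factorial : Rbc) = ((j:Rbc)+1) * (j.factorial : Rbc) := by
    push_cast [Nat.factorial_succ]; ring
  have e2 : ((2*j+2).factorial : Rbc) = (2*(j:Rbc)+2)*(2*(j:Rbc)+1) * ((2*j).factorial : Rbc) := by
    rw [show 2*j+2 = (2*j+1)+1 from rfl, Nat.factorial_succ, show 2*j+1 = (2*j)+1 from rfl,
      Nat.factorial_succ]
    push_cast; ring
  apply mul_right_cancel₀ (b := ((j+1).factorial : Rbc) * ((j+1).factorial : Rbc))
    (mul_ne_zero (fact_ne (j+1)) (fact_ne (j+1)))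
  rw [e1] at h1 ⊢
  linear_combination (2*(j:Rbc)+2) * h1 - 4*(2*(j:Rbc)+1)*((j:Rbc)+1)*((j:Rbc)+1) * h2
    + (2*(j:Rbc)+2) * e2

lemma idB (n j : ℕ) :
    2*((j:Rbc)+1)*(2*(n:Rbc)+2*(j:Rbc)+3) * (D n (j+1) : Rbc) = (D (n+2) j : Rbc) := by
  have h1 := D_mul_fact_R n (j+1)
  have h2 := D_mul_fact_R (n+2) j
  rw [show n+(j+1) = n+j+1 from by omega, show 2*n+2*(j+1) = 2*n+2*j+2 from by omega] at h1
  rw [show (n+2)+j = n+j+2 from by omega, show 2*(n+2)+2*j = 2*n+2*j+4 from by omega] at h2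
  have e1 : ((j+1).factorial : Rbc) = ((j:Rbc)+1) * (j.factorial : Rbc) := by
    push_cast [Nat.factorial_succ]; ring
  have e2 : ((n+j+2).factorial : Rbc) = ((n:Rbc)+(j:Rbc)+2) * ((n+j+1).factorial : Rbc) := by
    rw [show n+j+2 = (n+j+1)+1 from rfl, Nat.factorial_succ]; push_cast; ring
  have e3 : ((2*n+2*j+4).factorial : Rbc)
      = (2*(n:Rbc)+2*(j:Rbc)+4)*(2*(n:Rbc)+2*(j:Rbc)+3) * ((2*n+2*j+2).factorial : Rbc) := by
    rw [show 2*n+2*j+4 = (2*n+2*j+3)+1 from rfl, Nat.factorial_succ,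
      show 2*n+2*j+3 = (2*n+2*j+2)+1 from rfl, Nat.factorial_succ]
    push_cast; ring
  apply mul_right_cancel₀ (b := ((j+1).factorial : Rbc) * ((n+j+2).factorial : Rbc))
    (mul_ne_zero (fact_ne (j+1)) (fact_ne (n+j+2)))
  rw [e1] at h1
  rw [e2] at h2
  rw [e1, e2]
  linear_combination 2*((j:Rbc)+1)*(2*(n:Rbc)+2*(j:Rbc)+3)*((n:Rbc)+(j:Rbc)+2) * h1 - ((j:Rbc)+1) * h2 - ((j:Rbc)+1) * e3

lemma idA1b (m j : ℕ) :
    ((m:Rbc)+2*(j:Rbc)+3) * (D (m+1) (j+1) : Rbc)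
      = 2*(2*(m:Rbc)+4*(j:Rbc)+5)*((m:Rbc)+1) * (D m (j+1) : Rbc)
        + 4*((m:Rbc)+2*(j:Rbc)+2) * (D (m+1) j : Rbc) := by
  have h1 := D_mul_fact_R (m+1) (j+1)
  have h2 := D_mul_fact_R m (j+1)
  have h3 := D_mul_fact_R (m+1) j
  rw [show (m+1)+(j+1) = m+j+2 from by omega, show 2*(m+1)+2*(j+1) = 2*m+2*j+4 from by omega] at h1
  rw [show m+(j+1) = m+j+1 from by omega, show 2*m+2*(j+1) = 2*m+2*j+2 from by omega] at h2
  rw [show (m+1)+j = m+j+1 from by omega, show 2*(m+1)+2*j = 2*m+2*j+2 from by omega] at h3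
  have e1 : ((j+1).factorial : Rbc) = ((j:Rbc)+1) * (j.factorial : Rbc) := by
    push_cast [Nat.factorial_succ]; ring
  have e2 : ((m+j+2).factorial : Rbc) = ((m:Rbc)+(j:Rbc)+2) * ((m+j+1).factorial : Rbc) := by
    rw [show m+j+2 = (m+j+1)+1 from rfl, Nat.factorial_succ]; push_cast; ring
  have e3 : ((2*m+2*j+4).factorial : Rbc)
      = (2*(m:Rbc)+2*(j:Rbc)+4)*(2*(m:Rbc)+2*(j:Rbc)+3) * ((2*m+2*j+2).factorial : Rbc) := by
    rw [show 2*m+2*j+4 = (2*m+2*j+3)+1 from rfl, Nat.factorial_succ,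
      show 2*m+2*j+3 = (2*m+2*j+2)+1 from rfl, Nat.factorial_succ]
    push_cast; ring
  apply mul_right_cancel₀ (b := ((j+1).factorial : Rbc) * ((m+j+2).factorial : Rbc))
    (mul_ne_zero (fact_ne (j+1)) (fact_ne (m+j+2)))
  rw [e1, e2] at h1
  rw [e1] at h2
  rw [e1, e2]
  linear_combination ((m:Rbc)+2*(j:Rbc)+3) * h1
    - 2*(2*(m:Rbc)+4*(j:Rbc)+5)*((m:Rbc)+1)*((m:Rbc)+(j:Rbc)+2) * h2
    - 4*((m:Rbc)+2*(j:Rbc)+2)*((j:Rbc)+1)*((m:Rbc)+(j:Rbc)+2) * h3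
    + ((m:Rbc)+2*(j:Rbc)+3) * e3


noncomputable def g (c : Rbc) (n k : ℕ) : Rbc := (-1)^(n+k) * c^k * (D n k : Rbc)

lemma g00 (c : Rbc) : g c 0 0 = 1 := by simp [g, D00]

lemma gA1a (c : Rbc) (m : ℕ) : g c (m+1) 0 = -(2*(2*(m:Rbc)+1)) * g c m 0 := by
  simp only [g]
  linear_combination ((-1:Rbc))^(m+1+0) * idA1a m

lemma gA0 (c : Rbc) (j : ℕ) :
    (2*(j:Rbc)+2) * g c 0 (j+1) = -(4*c*(2*(j:Rbc)+1)) * g c 0 j := by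
  simp only [g]
  linear_combination ((-1:Rbc))^(0+(j+1)) * c^(j+1) * idA0 j

lemma gB (c : Rbc) (n j : ℕ) :
    2*((j:Rbc)+1)*(2*(n:Rbc)+2*(j:Rbc)+3) * g c n (j+1) + c * g c (n+2) j = 0 := by
  simp only [g]
  linear_combination ((-1:Rbc))^(n+(j+1)) * c^(j+1) * idB n j

lemma gA1b (c : Rbc) (m j : ℕ) :
    ((m:Rbc)+2*(j:Rbc)+3) * g c (m+1) (j+1)
      = -(2*(2*(m:Rbc)+4*(j:Rbc)+5)*((m:Rbc)+1)) * g c m (j+1)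
        - 4*c*((m:Rbc)+2*(j:Rbc)+2) * g c (m+1) j := by
  simp only [g]
  linear_combination ((-1:Rbc))^(m+1+(j+1)) * c^(j+1) * idA1b m j

noncomputable def v (c : Rbc) (w : ℕ → Rbc) (M : ℕ) : Rbc :=
  ∑ k ∈ Finset.range (M+1), if 2*k ≤ M then g c (M - 2*k) k * w (M - 2*k) else 0

lemma v_eq_extended (c : Rbc) (w : ℕ → Rbc) (M K : ℕ) (h : M ≤ K) :
    v c w M = ∑ k ∈ Finset.range (K+1),
      (if 2*k ≤ M then g c (M - 2*k) k * w (M - 2*k) else 0) := by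
  rw [v]
  apply Finset.sum_subset (Finset.range_subset_range.mpr (by omega))
  intro x hx hnx
  rw [if_neg]
  simp only [Finset.mem_range] at hx hnx
  omega

lemma v_zero (c : Rbc) (w : ℕ → Rbc) (hw0 : w 0 = 1) : v c w 0 = 1 := by
  simp [v, g00, hw0]

noncomputable def AA (c : Rbc) (w : ℕ → Rbc) (N k : ℕ) : Rbc :=
  if 2*k ≤ N+2 then g c (N+2-2*k) k * w (N+2-2*k) else 0

noncomputable def BB (c : Rbc) (w : ℕ → Rbc) (N k : ℕ) : Rbc :=
  if 2*k ≤ N+1 then g c (N+1-2*k) k * w (N+1-2*k) else 0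

noncomputable def CC (c : Rbc) (w : ℕ → Rbc) (N k : ℕ) : Rbc :=
  if 2*k ≤ N then g c (N-2*k) k * w (N-2*k) else 0

noncomputable def PP (c : Rbc) (w : ℕ → Rbc) (N k : ℕ) : Rbc :=
  if 2*k ≤ N+1 then (-((N:Rbc)+2-2*(k:Rbc))) * (g c (N+1-2*k) k * w (N+2-2*k)) else 0

noncomputable def QQ (c : Rbc) (w : ℕ → Rbc) (N k : ℕ) : Rbc :=
  if 2*k+3 ≤ N+2 then c * (g c (N+1-2*k) k * w (N-1-2*k)) else 0

noncomputable def RR (c : Rbc) (w : ℕ → Rbc) (N k : ℕ) : Rbc :=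
  if 2*k ≤ N+1 then (2*(k:Rbc))*(2*(N:Rbc)+3-2*(k:Rbc)) * (g c (N+1-2*k) k * w (N+1-2*k)) else 0

lemma key1 (b c : Rbc) (w : ℕ → Rbc)
    (hwrec : ∀ n : ℕ, 1 ≤ n →
      (n : Rbc) * w n =
        -((n : Rbc) * ((n : Rbc) - 1) - b) * w (n - 1)
          + c * (if 3 ≤ n then w (n - 3) else 0))
    (N k : ℕ) :
    (((N:Rbc)+2)*(((N:Rbc)+2)-1) - b) * BB c w N k
      = PP c w N k + QQ c w N k + RR c w N k := by
  by_cases h : 2*k ≤ N+1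
  · by_cases h2 : 2*k ≤ N
    · obtain ⟨e, rfl⟩ : ∃ e, N = 2*k+e := ⟨N-2*k, by omega⟩
      unfold BB PP QQ RR
      rw [if_pos h, if_pos h, if_pos h]
      rw [show 2*k+e+1-2*k = e+1 from by omega, show 2*k+e+2-2*k = e+2 from by omega]
      have hrec := hwrec (e+2) (by omega)
      rw [show e+2-1 = e+1 from by omega] at hrec
      by_cases h3 : 3 ≤ e+2
      · rw [if_pos h3] at hrec
        rw [if_pos (show 2*k+3 ≤ 2*k+e+2 from by omega)]
        rw [show 2*k+e-1-2*k = e-1 from by omega, show e+2-3 = e-1 from by omega] at *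
        push_cast at hrec ⊢
        linear_combination (g c (e+1) k) * hrec
      · rw [if_neg h3] at hrec
        rw [if_neg (show ¬ (2*k+3 ≤ 2*k+e+2) from by omega)]
        push_cast
        have he : e = 0 := by omega
        subst he
        push_cast at hrec
        linear_combination (g c 1 k) * hrec
    · obtain ⟨j, hN, hk⟩ : ∃ j, N = 2*j+1 ∧ k = j+1 := ⟨k-1, by omega, by omega⟩
      subst hN hk
      unfold BB PP QQ RR
      rw [if_pos h, if_pos h, if_pos h]
      rw [if_neg (show ¬ (2*(j+1)+3 ≤ 2*j+1+2) from by omega)]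
      rw [show 2*j+1+1-2*(j+1) = 0 from by omega, show 2*j+1+2-2*(j+1) = 1 from by omega]
      have hrec := hwrec 1 (by omega)
      rw [if_neg (show ¬ (3 ≤ 1) from by omega)] at hrec
      push_cast at hrec ⊢
      linear_combination (g c 0 (j+1)) * hrec
  · unfold BB PP QQ RR
    rw [if_neg h, if_neg h, if_neg h, if_neg (show ¬ (2*k+3 ≤ N+2) from by omega)]
    ring

lemma key2 (c : Rbc) (w : ℕ → Rbc) (N k : ℕ) :
    QQ c w N k + RR c w N (k+1) = 0 := by
  by_cases h : 2*k+3 ≤ N+2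
  · obtain ⟨n, rfl⟩ : ∃ n, N = 2*k+1+n := ⟨N-2*k-1, by omega⟩
    unfold QQ RR
    rw [if_pos h, if_pos (show 2*(k+1) ≤ 2*k+1+n+1 from by omega)]
    rw [show 2*k+1+n+1-2*(k+1) = n from by omega, show 2*k+1+n+1-2*k = n+2 from by omega,
      show 2*k+1+n-1-2*k = n from by omega]
    push_cast
    linear_combination (w n) * gB c n k
  · unfold QQ RR
    rw [if_neg h, if_neg (show ¬ (2*(k+1) ≤ N+1) from by omega)]
    ring

lemma key3a (c : Rbc) (w : ℕ → Rbc) (N : ℕ) :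
    ((N:Rbc)+2) * AA c w N 0 = 2*(2*((N:Rbc)+2)-1) * PP c w N 0 := by
  unfold AA PP
  rw [if_pos (by omega), if_pos (by omega)]
  rw [show N+2-2*0 = N+1+1 from by omega, show N+1-2*0 = N+1 from by omega]
  push_cast
  have hg := gA1a c (N+1)
  push_cast at hg
  linear_combination ((N:Rbc)+2) * (w (N+1+1)) * hg

lemma key3b (c : Rbc) (w : ℕ → Rbc) (N k : ℕ) :
    ((N:Rbc)+2) * AA c w N (k+1)
      = 2*(2*((N:Rbc)+2)-1) * PP c w N (k+1) - 4*c*(((N:Rbc)+2)-1) * CC c w N k := by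
  by_cases h : 2*k ≤ N
  · by_cases h2 : 2*k+1 ≤ N
    · obtain ⟨m, rfl⟩ : ∃ m, N = 2*k+1+m := ⟨N-2*k-1, by omega⟩
      unfold AA PP CC
      rw [if_pos (by omega), if_pos (by omega), if_pos (by omega)]
      rw [show 2*k+1+m+2-2*(k+1) = m+1 from by omega,
        show 2*k+1+m+1-2*(k+1) = m from by omega,
        show 2*k+1+m-2*k = m+1 from by omega]
      push_cast
      linear_combination (w (m+1)) * gA1b c m k
    · obtain rfl : N = 2*k := by omega
      unfold AA PP CC
      rw [if_pos (by omega), if_neg (by omega), if_pos (by omega)]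
      rw [show 2*k+2-2*(k+1) = 0 from by omega, show 2*k-2*k = 0 from by omega]
      push_cast
      linear_combination (w 0) * gA0 c k
  · unfold AA PP CC
    rw [if_neg (by omega), if_neg (by omega), if_neg (by omega)]
    ring

lemma v_rec (b c : Rbc) (w : ℕ → Rbc)
    (hwrec : ∀ n : ℕ, 1 ≤ n →
      (n : Rbc) * w n =
        -((n : Rbc) * ((n : Rbc) - 1) - b) * w (n - 1)
          + c * (if 3 ≤ n then w (n - 3) else 0))
    (M : ℕ) (hM : 1 ≤ M) :
    (M : Rbc) * v c w M =
      2 * (2 * (M : Rbc) - 1) * ((M : Rbc) * ((M : Rbc) - 1) - b) * v c w (M - 1)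
        - 4 * c * ((M : Rbc) - 1) * (if 2 ≤ M then v c w (M - 2) else 0) := by
  rcases M with _ | M
  · omega
  rcases M with _ | N
  · -- M = 1
    rw [if_neg (show ¬ (2 ≤ 1) from by omega)]
    have h0 : v c w 0 = g c 0 0 * w 0 := by simp [v]
    have h1 : v c w 1 = g c 1 0 * w 1 := by
      rw [v]
      rw [Finset.sum_range_succ, Finset.sum_range_succ, Finset.sum_range_zero]
      norm_num
    have hrec := hwrec 1 (by omega)
    rw [if_neg (show ¬ (3 ≤ 1) from by omega)] at hrec
    have hg1 := gA1a c 0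
    rw [g00] at hg1
    norm_num at hg1 hrec ⊢
    rw [h0, h1, g00, hg1]
    linear_combination (-2 : Rbc) * hrec
  · -- M = N + 2
    show ((N+2 : ℕ) : Rbc) * v c w (N+2) =
      2 * (2 * ((N+2 : ℕ) : Rbc) - 1) * (((N+2 : ℕ) : Rbc) * (((N+2 : ℕ) : Rbc) - 1) - b) * v c w (N+1)
        - 4 * c * (((N+2 : ℕ) : Rbc) - 1) * (if 2 ≤ N+2 then v c w N else 0)
    rw [if_pos (by omega)]
    have hvA : v c w (N+2) = ∑ k ∈ Finset.range (N+3), AA c w N k := by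
      rw [v_eq_extended c w (N+2) (N+2) le_rfl]; rfl
    have hvB : v c w (N+1) = ∑ k ∈ Finset.range (N+3), BB c w N k := by
      rw [v_eq_extended c w (N+1) (N+2) (by omega)]; rfl
    have hvC : v c w N = ∑ k ∈ Finset.range (N+3), CC c w N k := by
      rw [v_eq_extended c w N (N+2) (by omega)]; rfl
    have sum1 : (((N:Rbc)+2)*(((N:Rbc)+2)-1) - b) * v c w (N+1)
        = (∑ k ∈ Finset.range (N+3), PP c w N k)
          + ((∑ k ∈ Finset.range (N+3), QQ c w N k)
            + (∑ k ∈ Finset.range (N+3), RR c w N k)) := by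
      rw [hvB, Finset.mul_sum, ← Finset.sum_add_distrib, ← Finset.sum_add_distrib]
      exact Finset.sum_congr rfl (fun k _ =>
        (key1 b c w hwrec N k).trans (add_assoc _ _ _))
    have sumQR : (∑ k ∈ Finset.range (N+3), QQ c w N k)
        + (∑ k ∈ Finset.range (N+3), RR c w N k) = 0 := by
      have hQtop : QQ c w N (N+2) = 0 := by
        unfold QQ; rw [if_neg (show ¬ (2*(N+2)+3 ≤ N+2) from by omega)]
      rw [Finset.sum_range_succ (f := QQ c w N), hQtop, add_zero]
      rw [Finset.sum_range_succ' (RR c w N) (N+2)]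
      have hR0 : RR c w N 0 = 0 := by
        unfold RR
        rw [if_pos (by omega)]
        push_cast
        ring
      rw [hR0, add_zero, ← Finset.sum_add_distrib]
      exact Finset.sum_eq_zero (fun k _ => key2 c w N k)
    have main3 : ((N:Rbc)+2) * (∑ k ∈ Finset.range (N+3), AA c w N k)
        = 2*(2*((N:Rbc)+2)-1) * (∑ k ∈ Finset.range (N+3), PP c w N k)
          - 4*c*(((N:Rbc)+2)-1) * (∑ k ∈ Finset.range (N+3), CC c w N k) := by
      have hCtop : CC c w N (N+2) = 0 := by
        unfold CC; rw [if_neg (show ¬ (2*(N+2) ≤ N) from by omega)]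
      rw [Finset.sum_range_succ' (AA c w N) (N+2), Finset.sum_range_succ' (PP c w N) (N+2),
        Finset.sum_range_succ (f := CC c w N), hCtop, add_zero]
      rw [mul_add, mul_add, Finset.mul_sum, Finset.mul_sum, Finset.mul_sum]
      rw [key3a c w N]
      rw [Finset.sum_congr rfl (fun k (_ : k ∈ Finset.range (N+2)) => key3b c w N k)]
      rw [Finset.sum_sub_distrib]
      ring
    push_cast
    rw [hvA, hvC]
    calc ((N:Rbc)+2) * (∑ k ∈ Finset.range (N+3), AA c w N k)
        = 2*(2*((N:Rbc)+2)-1) * (∑ k ∈ Finset.range (N+3), PP c w N k)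
          - 4*c*(((N:Rbc)+2)-1) * (∑ k ∈ Finset.range (N+3), CC c w N k) := main3
      _ = 2*(2*((N:Rbc)+2)-1) * ((∑ k ∈ Finset.range (N+3), PP c w N k)
            + ((∑ k ∈ Finset.range (N+3), QQ c w N k)
              + (∑ k ∈ Finset.range (N+3), RR c w N k)))
          - 4*c*(((N:Rbc)+2)-1) * (∑ k ∈ Finset.range (N+3), CC c w N k) := by
          rw [sumQR]; ring
      _ = 2 * (2 * ((N:Rbc)+2) - 1) * ((((N:Rbc)+2) * (((N:Rbc)+2) - 1) - b) * v c w (N+1))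
          - 4 * c * (((N:Rbc)+2) - 1) * (∑ k ∈ Finset.range (N+3), CC c w N k) := by
          rw [sum1]
      _ = 2 * (2 * ((N:Rbc)+2) - 1) * (((N:Rbc)+2) * (((N:Rbc)+2) - 1) - b) * v c w (N+1)
          - 4 * c * (((N:Rbc)+2) - 1) * (∑ k ∈ Finset.range (N+3), CC c w N k) := by
          ring

lemma u_eq_v (b c : Rbc) (u w : ℕ → Rbc)
    (hu0 : u 0 = 1)
    (hurec : ∀ n : ℕ, 1 ≤ n →
      (n : Rbc) * u n =
        2 * (2 * (n : Rbc) - 1) * ((n : Rbc) * ((n : Rbc) - 1) - b) * u (n - 1)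
          - 4 * c * ((n : Rbc) - 1) * (if 2 ≤ n then u (n - 2) else 0))
    (hw0 : w 0 = 1)
    (hwrec : ∀ n : ℕ, 1 ≤ n →
      (n : Rbc) * w n =
        -((n : Rbc) * ((n : Rbc) - 1) - b) * w (n - 1)
          + c * (if 3 ≤ n then w (n - 3) else 0)) :
    ∀ M, u M = v c w M := by
  intro M
  induction M using Nat.strong_induction_on with
  | _ M ih =>
    rcases M with _ | M
    · rw [hu0, v_zero c w hw0]
    · have hne : ((M+1 : ℕ) : Rbc) ≠ 0 := by
        exact Nat.cast_ne_zero.mpr (Nat.succ_ne_zero M)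
      apply mul_left_cancel₀ hne
      rw [hurec (M+1) (by omega), v_rec b c w hwrec (M+1) (by omega)]
      have e1 : u (M+1-1) = v c w (M+1-1) := ih M (by omega)
      have e2 : (if 2 ≤ M+1 then u (M+1-2) else 0)
          = (if 2 ≤ M+1 then v c w (M+1-2) else 0) := by
        by_cases h2 : 2 ≤ M+1
        · rw [if_pos h2, if_pos h2, ih (M+1-2) (by omega)]
        · rw [if_neg h2, if_neg h2]
      rw [e1, e2]

end Stmt4Aux

/-- Identity (8) of the paper:
`∑ₙ uₙ t^{2n} = ∑ₖ (-1)^k c^k t^{4k} ∑ₙ (-1)^n n! wₙ C(n+k,k) C(2n+2k,n+k) t^{2n}`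
in `ℚ[b,c][[t]]`. -/
theorem statement4
    (b c : Rbc) (hb : b = MvPolynomial.X 0) (hc : c = MvPolynomial.X 1)
    (u w : ℕ → Rbc)
    (hu0 : u 0 = 1)
    (hurec : ∀ n : ℕ, 1 ≤ n →
      (n : Rbc) * u n =
        2 * (2 * (n : Rbc) - 1) * ((n : Rbc) * ((n : Rbc) - 1) - b) * u (n - 1)
          - 4 * c * ((n : Rbc) - 1) * (if 2 ≤ n then u (n - 2) else 0))
    (hw0 : w 0 = 1)
    (hwrec : ∀ n : ℕ, 1 ≤ n →
      (n : Rbc) * w n =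
        -((n : Rbc) * ((n : Rbc) - 1) - b) * w (n - 1)
          + c * (if 3 ≤ n then w (n - 3) else 0)) :
    PowerSeries.mk (fun m : ℕ => if Even m then u (m / 2) else 0) =
      PowerSeries.mk (fun m : ℕ =>
        ∑ k ∈ Finset.range (m + 1), ∑ n ∈ Finset.range (m + 1),
          if 4 * k + 2 * n = m then
            (-1 : Rbc) ^ k * c ^ k *
              ((-1 : Rbc) ^ n * (n.factorial : Rbc) * w n *
                (Nat.choose (n + k) k : Rbc) * (Nat.choose (2 * n + 2 * k) (n + k) : Rbc))
          else 0) := by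
  apply PowerSeries.ext
  intro m
  rw [PowerSeries.coeff_mk, PowerSeries.coeff_mk]
  by_cases hm : Even m
  · obtain ⟨M, rfl⟩ : ∃ M, m = 2*M := by
      rcases hm with ⟨r, hr⟩; exact ⟨r, by omega⟩
    rw [if_pos (by exact ⟨M, by omega⟩), show 2*M/2 = M from by omega]
    rw [Stmt4Aux.u_eq_v b c u w hu0 hurec hw0 hwrec M]
    have inner : ∀ k ∈ Finset.range (2*M+1),
        (∑ n ∈ Finset.range (2*M+1), if 4*k+2*n = 2*M then
            (-1 : Rbc) ^ k * c ^ k *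
              ((-1 : Rbc) ^ n * (n.factorial : Rbc) * w n *
                (Nat.choose (n + k) k : Rbc) * (Nat.choose (2 * n + 2 * k) (n + k) : Rbc))
          else 0)
        = (if 2*k ≤ M then Stmt4Aux.g c (M-2*k) k * w (M-2*k) else 0) := by
      intro k _
      by_cases h : 2*k ≤ M
      · rw [if_pos h, Finset.sum_eq_single (M-2*k)]
        · rw [if_pos (by omega)]
          simp only [Stmt4Aux.g, Stmt4Aux.D]
          push_cast [pow_add]
          ring
        · intro n _ hne
          rw [if_neg (by omega)]
        · intro habs
          exact absurd (Finset.mem_range.mpr (by omega)) habs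
      · rw [if_neg h]
        exact Finset.sum_eq_zero (fun n _ => if_neg (by omega))
    rw [Finset.sum_congr rfl inner]
    rw [Stmt4Aux.v_eq_extended c w M (2*M) (by omega)]
  · rw [if_neg hm]
    have hodd : m % 2 = 1 := Nat.not_even_iff.mp hm
    symm
    refine Finset.sum_eq_zero (fun k _ => Finset.sum_eq_zero (fun n _ => if_neg (by omega)))
end

section
/- For every n ≥ 0 the identity u_n = (-1)^n · Σ_{k=0}^{⌊n/2⌋} (-1)^k · c^k · (n-2k)! · w_{n-2k} · C(n-k,k) · C(2n-2k,n-k) holds in ℚ[b,c]. -/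
/-- `dₙₖ = (n-2k)! C(n-k,k) C(2n-2k,n-k)`, the coefficient in identity (9). -/
def dnat (n k : ℕ) : ℕ :=
  (n - 2 * k).factorial * Nat.choose (n - k) k * Nat.choose (2 * n - 2 * k) (n - k)

lemma dnat_def (n k : ℕ) : dnat n k =
    (n - 2 * k).factorial * Nat.choose (n - k) k * Nat.choose (2 * n - 2 * k) (n - k) := rfl

lemma dnat_eq_zero (n k : ℕ) (h : n < 2 * k) : dnat n k = 0 := by
  rcases le_or_gt k n with h' | h'
  · have : n - k < k := by omega
    simp [dnat, Nat.choose_eq_zero_of_lt this]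
  · have h0 : n - k = 0 := by omega
    simp [dnat, h0, Nat.choose_eq_zero_of_lt (show 0 < k by omega)]

lemma dnat_cast (n k : ℕ) (h : 2 * k ≤ n) :
    (dnat n k : ℚ) = ((2 * (n - k)).factorial : ℚ) / (k.factorial * (n - k).factorial) := by
  obtain ⟨s, rfl⟩ : ∃ s, n = s + k := ⟨n - k, by omega⟩
  have e1 : s + k - 2 * k = s - k := by omega
  have e2 : s + k - k = s := by omega
  have e3 : 2 * (s + k) - 2 * k = 2 * s := by omega
  have hks : k ≤ s := by omega
  rw [dnat, e1, e2, e3]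
  rw [Nat.cast_mul, Nat.cast_mul, Nat.cast_choose ℚ hks,
    Nat.cast_choose ℚ (show s ≤ 2 * s by omega), show 2 * s - s = s from by omega]
  have n1 : (k.factorial : ℚ) ≠ 0 := Nat.cast_ne_zero.mpr (Nat.factorial_ne_zero _)
  have n2 : ((s - k).factorial : ℚ) ≠ 0 := Nat.cast_ne_zero.mpr (Nat.factorial_ne_zero _)
  have n3 : (s.factorial : ℚ) ≠ 0 := Nat.cast_ne_zero.mpr (Nat.factorial_ne_zero _)
  field_simp

lemma dnat_cast' (n k m : ℕ) (h : 2 * k ≤ n) (hm : m = n - k) :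
    (dnat n k : ℚ) = ((2 * m).factorial : ℚ) / (k.factorial * m.factorial) := by
  subst hm; exact dnat_cast n k h

lemma fact2succ (x : ℕ) : ((2 * (x + 1)).factorial : ℚ)
    = (2 * x + 2) * (2 * x + 1) * ((2 * x).factorial : ℚ) := by
  rw [show 2 * (x + 1) = 2 * x + 1 + 1 from by ring, Nat.factorial_succ, Nat.factorial_succ]
  push_cast; ring

lemma factsucc (x : ℕ) : ((x + 1).factorial : ℚ) = (x + 1) * (x.factorial : ℚ) := by
  rw [Nat.factorial_succ]; push_cast; ring

lemma fne (x : ℕ) : ((x.factorial : ℚ)) ≠ 0 := Nat.cast_ne_zero.mpr (Nat.factorial_ne_zero _)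

lemma lem_h0 (m : ℕ) :
    (m + 1) * dnat (m + 1) 0 = 2 * (2 * m + 1) * ((m + 1) * dnat m 0) := by
  have d1 := dnat_cast' (m + 1) 0 (m + 1) (by omega) (by omega)
  have d2 := dnat_cast' m 0 m (by omega) (by omega)
  have key : (((m + 1) * dnat (m + 1) 0 : ℕ) : ℚ)
      = ((2 * (2 * m + 1) * ((m + 1) * dnat m 0) : ℕ) : ℚ) := by
    push_cast [d1, d2]
    rw [fact2succ m, factsucc m]
    field_simp
  exact Nat.cast_injective key

lemma lem_L1 (m k : ℕ) (h : 2 * k + 1 ≤ m) :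
    dnat (m + 1) k = 2 * (k + 1) * (2 * m - 2 * k + 1) * dnat (m + 1) (k + 1) := by
  obtain ⟨r, rfl⟩ : ∃ r, m = 2 * k + 1 + r := ⟨m - 2 * k - 1, by omega⟩
  rw [show 2 * (2 * k + 1 + r) - 2 * k = 2 * k + 2 * r + 2 from by omega]
  have d1 := dnat_cast' (2 * k + 1 + r + 1) k (k + r + 2) (by omega) (by omega)
  have d2 := dnat_cast' (2 * k + 1 + r + 1) (k + 1) (k + r + 1) (by omega) (by omega)
  have key : ((dnat (2 * k + 1 + r + 1) k : ℕ) : ℚ)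
      = ((2 * (k + 1) * (2 * k + 2 * r + 2 + 1) * dnat (2 * k + 1 + r + 1) (k + 1) : ℕ) : ℚ) := by
    push_cast [d1, d2]
    rw [show k + r + 2 = (k + r + 1) + 1 from by omega, fact2succ (k + r + 1),
      factsucc (k + r + 1), factsucc k]
    field_simp
    push_cast; ring
  exact Nat.cast_injective key

lemma lem_LB (n k : ℕ) (hk : 1 ≤ k) (h : 2 * k ≤ n) :
    n * dnat n k = 2 * (2 * n - 1) * (n - 2 * k) * dnat (n - 1) k
      + 4 * (n - 1) * dnat (n - 2) (k - 1) := by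
  obtain ⟨a, rfl⟩ : ∃ a, k = a + 1 := ⟨k - 1, by omega⟩
  obtain ⟨t, rfl⟩ : ∃ t, n = 2 * a + 2 + t := ⟨n - 2 * a - 2, by omega⟩
  rw [show 2 * a + 2 + t - 1 = 2 * a + 1 + t from by omega,
    show 2 * a + 2 + t - 2 = 2 * a + t from by omega,
    show a + 1 - 1 = a from by omega,
    show 2 * (2 * a + 2 + t) - 1 = 4 * a + 3 + 2 * t from by omega,
    show 2 * a + 2 + t - 2 * (a + 1) = t from by omega]
  rcases t with _ | r
  · -- t = 0
    have d1 := dnat_cast' (2 * a + 2 + 0) (a + 1) (a + 1) (by omega) (by omega)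
    have d2 := dnat_cast' (2 * a + 0) a a (by omega) (by omega)
    have key : (((2 * a + 2 + 0) * dnat (2 * a + 2 + 0) (a + 1) : ℕ) : ℚ)
        = ((2 * (4 * a + 3 + 2 * 0) * 0 * dnat (2 * a + 1 + 0) (a + 1)
            + 4 * (2 * a + 1 + 0) * dnat (2 * a + 0) a : ℕ) : ℚ) := by
      push_cast [d1, d2]
      rw [fact2succ a, factsucc a]
      field_simp
      ring
    exact Nat.cast_injective key
  · have d1 := dnat_cast' (2 * a + 2 + (r + 1)) (a + 1) (a + r + 2) (by omega) (by omega)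
    have d2 := dnat_cast' (2 * a + 1 + (r + 1)) (a + 1) (a + r + 1) (by omega) (by omega)
    have d3 := dnat_cast' (2 * a + (r + 1)) a (a + r + 1) (by omega) (by omega)
    have key : (((2 * a + 2 + (r + 1)) * dnat (2 * a + 2 + (r + 1)) (a + 1) : ℕ) : ℚ)
        = ((2 * (4 * a + 3 + 2 * (r + 1)) * (r + 1) * dnat (2 * a + 1 + (r + 1)) (a + 1)
            + 4 * (2 * a + 1 + (r + 1)) * dnat (2 * a + (r + 1)) a : ℕ) : ℚ) := by
      push_cast [d1, d2, d3]
      rw [show a + r + 2 = (a + r + 1) + 1 from by omega, fact2succ (a + r + 1),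
        factsucc (a + r + 1), factsucc a]
      field_simp
      push_cast; ring
    exact Nat.cast_injective key

noncomputable def Tsum (c : Rbc) (w : ℕ → Rbc) (n : ℕ) : Rbc :=
  ∑ k ∈ Finset.range (n / 2 + 1),
    (-1 : Rbc) ^ k * c ^ k * (dnat n k : Rbc) * w (n - 2 * k)

lemma Tsum_ext (c : Rbc) (w : ℕ → Rbc) (n K : ℕ) (h : n / 2 + 1 ≤ K) :
    Tsum c w n = ∑ k ∈ Finset.range K,
      (-1 : Rbc) ^ k * c ^ k * (dnat n k : Rbc) * w (n - 2 * k) := by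
  apply Finset.sum_subset (Finset.range_subset_range.mpr h)
  intro k hk hk'
  have : n < 2 * k := by
    simp only [Finset.mem_range, not_lt] at hk'
    omega
  rw [dnat_eq_zero n k this]
  simp

lemma sum_shift (f g : ℕ → Rbc) (n N : ℕ) (hN : N = n + 1) (h0 : f 0 = 0)
    (hstep : ∀ k < n, f (k + 1) = g k) :
    ∑ k ∈ Finset.range N, f k = ∑ k ∈ Finset.range n, g k := by
  subst hN
  rw [Finset.sum_range_succ' f n, h0, add_zero]
  exact Finset.sum_congr rfl fun k hk => hstep k (Finset.mem_range.mp hk)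

lemma sum_cancel (f g : ℕ → Rbc) (n N : ℕ) (hN : N = n + 1) (h0 : f 0 = 0)
    (hlast : g n = 0) (hstep : ∀ k < n, f (k + 1) = -g k) :
    (∑ k ∈ Finset.range N, f k) + (∑ k ∈ Finset.range N, g k) = 0 := by
  subst hN
  rw [Finset.sum_range_succ' f n, Finset.sum_range_succ g n, h0, hlast, add_zero, add_zero,
    ← Finset.sum_add_distrib]
  apply Finset.sum_eq_zero
  intro k hk
  rw [hstep k (Finset.mem_range.mp hk)]
  ring

lemma star (b c : Rbc) (w : ℕ → Rbc)
    (hwrec : ∀ n : ℕ, 1 ≤ n →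
      (n : Rbc) * w n =
        -((n : Rbc) * ((n : Rbc) - 1) - b) * w (n - 1)
          + c * (if 3 ≤ n then w (n - 3) else 0)) (m : ℕ) :
    ((m : Rbc) + 2) * Tsum c w (m + 2)
      = -(2 * (2 * (m : Rbc) + 3) * (((m : Rbc) + 2) * ((m : Rbc) + 1) - b)) * Tsum c w (m + 1)
        - 4 * c * ((m : Rbc) + 1) * Tsum c w m := by
  rw [Tsum_ext c w (m + 2) (m + 2) (by omega),
      Tsum_ext c w (m + 1) (m + 2) (by omega),
      Tsum_ext c w m (m + 1) (by omega)]
  -- E1 : expand the middle sum using the w-recursion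
  have E1 : (((m : Rbc) + 2) * ((m : Rbc) + 1) - b) *
        (∑ k ∈ Finset.range (m + 2),
          (-1 : Rbc) ^ k * c ^ k * (dnat (m + 1) k : Rbc) * w (m + 1 - 2 * k))
      = (∑ k ∈ Finset.range (m + 2),
          (-1 : Rbc) ^ k * c ^ k * (dnat (m + 1) k : Rbc) *
            (-(((m + 2 - 2 * k : ℕ)) : Rbc) * w (m + 2 - 2 * k)))
        + ((∑ k ∈ Finset.range (m + 2),
            (-1 : Rbc) ^ k * c ^ k * (dnat (m + 1) k : Rbc) *
              ((2 * (k : Rbc) * (2 * (m : Rbc) - 2 * (k : Rbc) + 3)) * w (m + 1 - 2 * k)))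
          + ∑ k ∈ Finset.range (m + 2),
            (-1 : Rbc) ^ k * c ^ k * (dnat (m + 1) k : Rbc) *
              (c * (if 3 ≤ m + 2 - 2 * k then w (m + 2 - 2 * k - 3) else 0))) := by
    rw [Finset.mul_sum, ← Finset.sum_add_distrib, ← Finset.sum_add_distrib]
    apply Finset.sum_congr rfl
    intro k hk
    rcases le_or_gt (2 * k) (m + 1) with hle | hlt
    · have hw := hwrec (m + 2 - 2 * k) (by omega)
      rw [show m + 2 - 2 * k - 1 = m + 1 - 2 * k from by omega] at hw
      have e2 : ((m + 2 - 2 * k : ℕ) : Rbc) = (m : Rbc) + 2 - 2 * (k : Rbc) := by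
        rw [Nat.cast_sub (by omega : 2 * k ≤ m + 2)]
        push_cast
        ring
      rw [e2] at hw
      rw [e2]
      linear_combination ((-1 : Rbc) ^ k * c ^ k * (dnat (m + 1) k : Rbc)) * hw
    · rw [dnat_eq_zero (m + 1) k (by omega)]
      push_cast
      ring
  -- E2 : the two odd-parity sums cancel
  have E2 : (∑ k ∈ Finset.range (m + 2),
          (-1 : Rbc) ^ k * c ^ k * (dnat (m + 1) k : Rbc) *
            ((2 * (k : Rbc) * (2 * (m : Rbc) - 2 * (k : Rbc) + 3)) * w (m + 1 - 2 * k)))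
        + (∑ k ∈ Finset.range (m + 2),
            (-1 : Rbc) ^ k * c ^ k * (dnat (m + 1) k : Rbc) *
              (c * (if 3 ≤ m + 2 - 2 * k then w (m + 2 - 2 * k - 3) else 0))) = 0 := by
    refine sum_cancel _ _ (m + 1) (m + 2) (by omega) ?_ ?_ ?_
    · norm_num
    · rw [dnat_eq_zero (m + 1) (m + 1) (by omega)]
      simp
    · intro k hk
      rcases le_or_gt (2 * k + 1) m with hle | hlt
      · rw [if_pos (by omega : 3 ≤ m + 2 - 2 * k),
          show m + 2 - 2 * k - 3 = m - 1 - 2 * k from by omega,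
          show m + 1 - 2 * (k + 1) = m - 1 - 2 * k from by omega]
        have L1c := congrArg (Nat.cast : ℕ → Rbc) (lem_L1 m k hle)
        have e : ((2 * m - 2 * k : ℕ) : Rbc) = 2 * (m : Rbc) - 2 * (k : Rbc) := by
          rw [Nat.cast_sub (by omega : 2 * k ≤ 2 * m)]
          push_cast
          ring
        push_cast [e] at L1c
        push_cast
        linear_combination (((-1 : Rbc) ^ k * c ^ (k + 1) * w (m - 1 - 2 * k))) * L1c
      · rw [if_neg (by omega : ¬ 3 ≤ m + 2 - 2 * k),
          dnat_eq_zero (m + 1) (k + 1) (by omega)]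
        push_cast
        ring
  -- E3 : the even-parity sums combine
  have E3 : ∑ k ∈ Finset.range (m + 2),
        (((m : Rbc) + 2) * ((-1 : Rbc) ^ k * c ^ k * (dnat (m + 2) k : Rbc) * w (m + 2 - 2 * k))
          + 2 * (2 * (m : Rbc) + 3) *
            ((-1 : Rbc) ^ k * c ^ k * (dnat (m + 1) k : Rbc) *
              (-(((m + 2 - 2 * k : ℕ)) : Rbc) * w (m + 2 - 2 * k))))
      = ∑ k ∈ Finset.range (m + 1),
          (-(4 * c * ((m : Rbc) + 1))) *
            ((-1 : Rbc) ^ k * c ^ k * (dnat m k : Rbc) * w (m - 2 * k)) := by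
    refine sum_shift _ _ (m + 1) (m + 2) (by omega) ?_ ?_
    · have hcast := congrArg (Nat.cast : ℕ → Rbc) (lem_h0 (m + 1))
      push_cast at hcast
      norm_num
      linear_combination (w (m + 2)) * hcast
    · intro k hk
      rw [show m + 2 - 2 * (k + 1) = m - 2 * k from by omega]
      rcases le_or_gt (2 * k) m with hle | hlt
      · have LB := lem_LB (m + 2) (k + 1) (by omega) (by omega)
        rw [show m + 2 - 1 = m + 1 from by omega, show m + 2 - 2 = m from by omega,
          show k + 1 - 1 = k from by omega, show 2 * (m + 2) - 1 = 2 * m + 3 from by omega,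
          show m + 2 - 2 * (k + 1) = m - 2 * k from by omega] at LB
        have e : ((m - 2 * k : ℕ) : Rbc) = (m : Rbc) - 2 * (k : Rbc) := by
          rw [Nat.cast_sub (by omega : 2 * k ≤ m)]
          push_cast
          ring
        have LBc := congrArg (Nat.cast : ℕ → Rbc) LB
        push_cast [e] at LBc
        rw [e]
        linear_combination (-((-1 : Rbc) ^ k * c ^ (k + 1) * w (m - 2 * k))) * LBc
      · rw [dnat_eq_zero (m + 2) (k + 1) (by omega),
          dnat_eq_zero (m + 1) (k + 1) (by omega),
          dnat_eq_zero m k (by omega)]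
        push_cast
        ring
  rw [Finset.sum_add_distrib, ← Finset.mul_sum, ← Finset.mul_sum, ← Finset.mul_sum] at E3
  linear_combination E3 + 2 * (2 * (m : Rbc) + 3) * E1 + 2 * (2 * (m : Rbc) + 3) * E2

/-- Identity (9) of the paper:
`uₙ = (-1)ⁿ ∑_{k=0}^{⌊n/2⌋} (-1)^k c^k (n-2k)! w_{n-2k} C(n-k,k) C(2n-2k,n-k)`
in `ℚ[b,c]`. -/
theorem statement5
    (b c : Rbc) (hb : b = MvPolynomial.X 0) (hc : c = MvPolynomial.X 1)
    (u w : ℕ → Rbc)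
    (hu0 : u 0 = 1)
    (hurec : ∀ n : ℕ, 1 ≤ n →
      (n : Rbc) * u n =
        2 * (2 * (n : Rbc) - 1) * ((n : Rbc) * ((n : Rbc) - 1) - b) * u (n - 1)
          - 4 * c * ((n : Rbc) - 1) * (if 2 ≤ n then u (n - 2) else 0))
    (hw0 : w 0 = 1)
    (hwrec : ∀ n : ℕ, 1 ≤ n →
      (n : Rbc) * w n =
        -((n : Rbc) * ((n : Rbc) - 1) - b) * w (n - 1)
          + c * (if 3 ≤ n then w (n - 3) else 0)) :
    ∀ n : ℕ,
      u n = (-1 : Rbc) ^ n *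
        ∑ k ∈ Finset.range (n / 2 + 1),
          (-1 : Rbc) ^ k * c ^ k * ((n - 2 * k).factorial : Rbc) * w (n - 2 * k) *
            (Nat.choose (n - k) k : Rbc) * (Nat.choose (2 * n - 2 * k) (n - k) : Rbc) := by
  have key : ∀ n : ℕ, u n = (-1 : Rbc) ^ n * Tsum c w n := by
    intro n
    induction n using Nat.strong_induction_on with
    | _ n ih =>
      rcases lt_or_ge n 2 with h | h
      · interval_cases n
        · -- n = 0
          simp [Tsum, dnat_def, hu0, hw0]
        · -- n = 1
          have hu1 := hurec 1 (by norm_num)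
          rw [if_neg (by omega)] at hu1
          norm_num [hu0] at hu1
          have hw1 := hwrec 1 (by norm_num)
          rw [if_neg (by omega)] at hw1
          norm_num [hw0] at hw1
          have hT : Tsum c w 1 = (dnat 1 0 : Rbc) * w 1 := by
            simp [Tsum]
          rw [hT, show dnat 1 0 = 2 from by rw [dnat_def]; rfl]
          rw [hu1, hw1]
          push_cast
          ring
      · obtain ⟨m, rfl⟩ : ∃ m, n = m + 2 := ⟨n - 2, by omega⟩
        have h1 := ih (m + 1) (by omega)
        have h2 := ih m (by omega)
        have hrec := hurec (m + 2) (by omega)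
        rw [if_pos (by omega : 2 ≤ m + 2), show m + 2 - 1 = m + 1 from by omega,
          show m + 2 - 2 = m from by omega] at hrec
        push_cast at hrec
        rw [h1, h2] at hrec
        have hs := star b c w hwrec m
        have hne : ((m : Rbc) + 2) ≠ 0 := by
          have : ((m : Rbc) + 2) = ((m + 2 : ℕ) : Rbc) := by push_cast; ring
          rw [this]
          exact Nat.cast_ne_zero.mpr (by omega)
        have hcan : ((m : Rbc) + 2) * u (m + 2)
            = ((m : Rbc) + 2) * ((-1 : Rbc) ^ (m + 2) * Tsum c w (m + 2)) := by
          linear_combination hrec - (-1 : Rbc) ^ m * hs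
        exact mul_left_cancel₀ hne hcan
  intro n
  rw [key n]
  congr 1
  apply Finset.sum_congr rfl
  intro k _
  rw [dnat_def]
  push_cast
  ring
end

section
/- In the formal power series ring ℚ[b,c][[t]] the identity Σ_{n≥0} u_n t^{2n} = (1 + 4c·t^4)^{-1/2} · Σ_{n≥0} C(2n,n) · n! · w_n · (-t²)^n · (1 + 4c·t^4)^{-n} holds, where (1 + 4c·t^4)^{-1/2} denotes the formal binomial series Σ_{k≥0} binom(-1/2, k)·(4c·t^4)^k and (1 + 4c·t^4)^{-n} denotes the inverse of the n-th power of the invertible power series 1 + 4c·t^4. -/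
open PowerSeries Finset

/-- The operator `t d/dt` on power series. -/
noncomputable def Dd (P : PowerSeries Rbc) : PowerSeries Rbc :=
  PowerSeries.mk fun m => (m : Rbc) * PowerSeries.coeff m P

lemma coeff_Dd (P : PowerSeries Rbc) (m : ℕ) :
    PowerSeries.coeff m (Dd P) = (m : Rbc) * PowerSeries.coeff m P := by
  simp [Dd]

lemma Dd_eq (P : PowerSeries Rbc) : Dd P = PowerSeries.X * P.derivativeFun := by
  ext m : 1
  cases m with
  | zero => simp [coeff_Dd]
  | succ k =>
      rw [coeff_Dd, PowerSeries.coeff_succ_X_mul,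
        show P.derivativeFun = PowerSeries.derivative Rbc P from rfl, PowerSeries.coeff_derivativeFun]
      push_cast; ring

lemma Dd_add (P Q : PowerSeries Rbc) : Dd (P + Q) = Dd P + Dd Q := by
  simp [Dd_eq, PowerSeries.derivativeFun_add]; ring

lemma Dd_mul (P Q : PowerSeries Rbc) : Dd (P * Q) = Dd P * Q + P * Dd Q := by
  simp only [Dd_eq, PowerSeries.derivativeFun_mul, smul_eq_mul]; ring

lemma Dd_C (r : Rbc) : Dd (PowerSeries.C r) = 0 := by
  simp [Dd_eq, show (PowerSeries.C r).derivativeFun = PowerSeries.derivative Rbc (PowerSeries.C r) from rfl,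
    PowerSeries.derivativeFun_C]

lemma Dd_one : Dd (1 : PowerSeries Rbc) = 0 := by
  simpa using Dd_C 1

lemma Dd_zero : Dd (0 : PowerSeries Rbc) = 0 := by
  simpa using Dd_C 0

lemma Dd_ofNat (n : ℕ) [n.AtLeastTwo] :
    Dd (no_index (OfNat.ofNat n) : PowerSeries Rbc) = 0 := by
  rw [← map_ofNat (PowerSeries.C (R := Rbc)) n, Dd_C]

lemma Dd_neg (P : PowerSeries Rbc) : Dd (-P) = -Dd P := by
  ext m : 1
  rw [coeff_Dd, map_neg, map_neg, coeff_Dd]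
  ring

lemma Dd_sub (P Q : PowerSeries Rbc) : Dd (P - Q) = Dd P - Dd Q := by
  ext m : 1
  rw [coeff_Dd, map_sub, map_sub, coeff_Dd, coeff_Dd]
  ring

lemma Dd_X : Dd (PowerSeries.X : PowerSeries Rbc) = PowerSeries.X := by
  ext m : 1
  rw [coeff_Dd, PowerSeries.coeff_X]
  split_ifs with h <;> simp [h]

lemma Dd_pow (P : PowerSeries Rbc) (u0 : PowerSeries Rbc) (h : Dd P = u0 * P) (n : ℕ) :
    Dd (P ^ n) = (n : PowerSeries Rbc) * u0 * P ^ n := by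
  induction n with
  | zero => simp [Dd_one]
  | succ k ih =>
      rw [pow_succ, Dd_mul, ih, h]
      push_cast; ring

/-- The "generating series with weights" `∑ n, v n * s^n`, defined coefficientwise. -/
noncomputable def Hs (v : ℕ → Rbc) (s : PowerSeries Rbc) : PowerSeries Rbc :=
  PowerSeries.mk fun m => ∑ n ∈ Finset.range (m + 1), v n * PowerSeries.coeff m (s ^ n)

lemma coeff_Hs (v : ℕ → Rbc) (s : PowerSeries Rbc) (m : ℕ) :
    PowerSeries.coeff m (Hs v s) =
      ∑ n ∈ Finset.range (m + 1), v n * PowerSeries.coeff m (s ^ n) := by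
  simp [Hs]

lemma coeff_mul_Hs (s : PowerSeries Rbc)
    (hs : ∀ j m : ℕ, m < j → PowerSeries.coeff m (s ^ j) = 0)
    (P : PowerSeries Rbc) (v : ℕ → Rbc) (m : ℕ) :
    PowerSeries.coeff m (P * Hs v s) =
      ∑ n ∈ Finset.range (m + 1), v n * PowerSeries.coeff m (P * s ^ n) := by
  rw [PowerSeries.coeff_mul]
  have step1 : ∀ p ∈ Finset.HasAntidiagonal.antidiagonal m,
      PowerSeries.coeff p.1 P * PowerSeries.coeff p.2 (Hs v s) =
        ∑ n ∈ Finset.range (m + 1),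
          PowerSeries.coeff p.1 P * (v n * PowerSeries.coeff p.2 (s ^ n)) := by
    intro p hp
    have hp' : p.1 + p.2 = m := Finset.HasAntidiagonal.mem_antidiagonal.mp hp
    have hple : p.2 ≤ m := by omega
    rw [coeff_Hs, Finset.mul_sum]
    refine Finset.sum_subset (Finset.range_subset_range.2 (Nat.succ_le_succ hple))
      (f := fun n => PowerSeries.coeff p.1 P * (v n * PowerSeries.coeff p.2 (s ^ n)))
      ?_
    intro n hn hn2
    have hlt : p.2 < n := by
      simp only [Finset.mem_range] at hn hn2; omega
    simp only [hs n p.2 hlt, mul_zero, zero_mul]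
  rw [Finset.sum_congr rfl step1]
  rw [Finset.sum_comm]
  refine Finset.sum_congr rfl fun n _ => ?_
  rw [PowerSeries.coeff_mul, Finset.mul_sum]
  refine Finset.sum_congr rfl fun p hp => ?_
  ring

lemma Dd_Hs (s : PowerSeries Rbc)
    (hs : ∀ j m : ℕ, m < j → PowerSeries.coeff m (s ^ j) = 0)
    (u0 : PowerSeries Rbc) (hds : Dd s = u0 * s) (v : ℕ → Rbc) :
    Dd (Hs v s) = u0 * Hs (fun n => (n : Rbc) * v n) s := by
  ext m : 1
  rw [coeff_Dd, coeff_Hs, Finset.mul_sum, coeff_mul_Hs s hs u0 _ m]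
  refine Finset.sum_congr rfl fun n _ => ?_
  have h1 : PowerSeries.coeff m (Dd (s ^ n)) =
      (n : Rbc) * PowerSeries.coeff m (u0 * s ^ n) := by
    rw [Dd_pow s u0 hds n, ← map_natCast (PowerSeries.C (R := Rbc)) n, mul_assoc,
      PowerSeries.coeff_C_mul]
  rw [coeff_Dd] at h1
  calc (m : Rbc) * (v n * PowerSeries.coeff m (s ^ n))
      = v n * ((m : Rbc) * PowerSeries.coeff m (s ^ n)) := by ring
    _ = v n * ((n : Rbc) * PowerSeries.coeff m (u0 * s ^ n)) := by rw [h1]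
    _ = (n : Rbc) * v n * PowerSeries.coeff m (u0 * s ^ n) := by ring

lemma Hs_linear (v1 v2 : ℕ → Rbc) (r1 r2 : Rbc) (s : PowerSeries Rbc) :
    Hs (fun n => r1 * v1 n + r2 * v2 n) s =
      PowerSeries.C r1 * Hs v1 s + PowerSeries.C r2 * Hs v2 s := by
  ext m : 1
  rw [map_add, PowerSeries.coeff_C_mul, PowerSeries.coeff_C_mul, coeff_Hs, coeff_Hs, coeff_Hs,
    Finset.mul_sum, Finset.mul_sum, ← Finset.sum_add_distrib]
  exact Finset.sum_congr rfl fun n _ => by ring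

lemma coeff_ofNat_mul (k : ℕ) [k.AtLeastTwo] (P : PowerSeries Rbc) (m : ℕ) :
    PowerSeries.coeff m ((no_index (OfNat.ofNat k) : PowerSeries Rbc) * P) =
      (OfNat.ofNat k : Rbc) * PowerSeries.coeff m P := by
  rw [← map_ofNat (PowerSeries.C (R := Rbc)) k, PowerSeries.coeff_C_mul]

lemma Dd_X_pow (k : ℕ) : Dd ((PowerSeries.X : PowerSeries Rbc) ^ k) =
    (k : PowerSeries Rbc) * PowerSeries.X ^ k := by
  have h : Dd (PowerSeries.X : PowerSeries Rbc) = 1 * PowerSeries.X := by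
    rw [Dd_X, one_mul]
  have := Dd_pow PowerSeries.X 1 h k
  rw [this]; ring

/-- evenness of a power series -/
def Ev (P : PowerSeries Rbc) : Prop := ∀ j : ℕ, Odd j → PowerSeries.coeff j P = 0

lemma Ev_mul {P Q : PowerSeries Rbc} (hP : Ev P) (hQ : Ev Q) : Ev (P * Q) := by
  intro j hj
  rw [PowerSeries.coeff_mul]
  refine Finset.sum_eq_zero fun p hp => ?_
  have hps : p.1 + p.2 = j := Finset.HasAntidiagonal.mem_antidiagonal.mp hp
  rcases Nat.even_or_odd p.1 with h1 | h1
  · have h2 : Odd p.2 := by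
      rcases hj with ⟨t, ht⟩; rcases h1 with ⟨r, hr⟩; exact ⟨t - r, by omega⟩
    rw [hQ p.2 h2, mul_zero]
  · rw [hP p.1 h1, zero_mul]

lemma Ev_neg {P : PowerSeries Rbc} (hP : Ev P) : Ev (-P) := by
  intro j hj; rw [map_neg, hP j hj, neg_zero]

lemma Ev_one : Ev (1 : PowerSeries Rbc) := by
  intro j hj
  rw [PowerSeries.coeff_one, if_neg (by rintro rfl; simp at hj)]

lemma Ev_pow {P : PowerSeries Rbc} (hP : Ev P) (n : ℕ) : Ev (P ^ n) := by
  induction n with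
  | zero => simpa using Ev_one
  | succ k ih => rw [pow_succ]; exact Ev_mul ih hP

lemma Ev_X_pow_even (k : ℕ) : Ev ((PowerSeries.X : PowerSeries Rbc) ^ (2 * k)) := by
  intro j hj
  rw [PowerSeries.coeff_X_pow, if_neg]
  rintro rfl
  exact (Nat.not_odd_iff_even.2 ⟨k, by omega⟩) hj

def aa (n : ℕ) : ℕ := (2 * n).choose n * n.factorial

lemma aa_mul_fact (n : ℕ) : aa n * n.factorial = (2 * n).factorial := by
  have h := Nat.choose_mul_factorial_mul_factorial (show n ≤ 2 * n by omega)
  have h2 : 2 * n - n = n := by omega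
  rw [h2] at h
  unfold aa
  rw [← h]

lemma aa_qrec (k : ℕ) : (aa (k + 1) : ℚ) = 2 * (2 * (k : ℚ) + 1) * (aa k : ℚ) := by
  have e1 := aa_mul_fact (k + 1)
  have e2 := aa_mul_fact k
  have f1 : 2 * (k + 1) = (2 * k + 1) + 1 := by ring
  rw [f1, Nat.factorial_succ (2 * k + 1), Nat.factorial_succ (2 * k), ← e2,
    Nat.factorial_succ k] at e1
  have hf : ((k.factorial : ℚ)) ≠ 0 := Nat.cast_ne_zero.2 k.factorial_ne_zero
  have hk : ((k : ℚ) + 1) ≠ 0 := by positivity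
  have e1Q : (aa (k + 1) : ℚ) * (((k : ℚ) + 1) * (k.factorial : ℚ)) =
      ((2 * (k : ℚ) + 1) + 1) * ((2 * (k : ℚ) + 1) * ((aa k : ℚ) * (k.factorial : ℚ))) := by
    exact_mod_cast congrArg (Nat.cast : ℕ → ℚ) e1
  refine mul_right_cancel₀ (mul_ne_zero hk hf) ?_
  linear_combination e1Q

lemma aa_Rrec (k : ℕ) : ((aa (k + 1) : ℕ) : Rbc) = 2 * (2 * (k : Rbc) + 1) * ((aa k : ℕ) : Rbc) := by
  have h := congrArg (fun q : ℚ => (MvPolynomial.C q : Rbc)) (aa_qrec k)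
  simpa only [map_mul, map_add, map_ofNat, map_one, map_natCast] using h

/-- coefficients of the binomial series `(1+4ct⁴)^{-1/2}`. -/
noncomputable def rr (k : ℕ) : ℚ :=
  (∏ i ∈ Finset.range k, ((-1 : ℚ) / 2 - (i : ℚ))) / (k.factorial : ℚ)

lemma rr_rec (k : ℕ) : 2 * ((k : ℚ) + 1) * rr (k + 1) = -(2 * (k : ℚ) + 1) * rr k := by
  have hfac : ((k.factorial : ℚ)) ≠ 0 := Nat.cast_ne_zero.2 k.factorial_ne_zero
  unfold rr
  rw [Finset.prod_range_succ, Nat.factorial_succ]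
  push_cast
  field_simp
  ring

lemma DA_lemma (c : Rbc) (A : PowerSeries Rbc)
    (hA : A = PowerSeries.mk fun j : ℕ =>
      if j % 4 = 0 then
        MvPolynomial.C
            ((∏ i ∈ Finset.range (j / 4), ((-1 : ℚ) / 2 - (i : ℚ))) / ((j / 4).factorial : ℚ)) *
          (4 * c) ^ (j / 4)
      else 0) :
    (1 + 4 * PowerSeries.C c * PowerSeries.X ^ 4) * Dd A =
      -(8) * PowerSeries.C c * PowerSeries.X ^ 4 * A := by
  have hcoeff : ∀ i : ℕ, PowerSeries.coeff i A =
      if i % 4 = 0 then MvPolynomial.C (rr (i / 4)) * (4 * c) ^ (i / 4) else 0 := by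
    intro i; rw [hA, PowerSeries.coeff_mk]; rfl
  have hL : (4 : PowerSeries Rbc) * PowerSeries.C c * PowerSeries.X ^ 4 * Dd A =
      PowerSeries.C (4 * c) * (Dd A * PowerSeries.X ^ 4) := by
    rw [map_mul, map_ofNat]; ring
  have hR : -(8 : PowerSeries Rbc) * PowerSeries.C c * PowerSeries.X ^ 4 * A =
      PowerSeries.C (-(8) * c) * (A * PowerSeries.X ^ 4) := by
    rw [map_mul, map_neg, map_ofNat]; ring
  rw [add_mul, one_mul, hR]
  ext j : 1
  rw [map_add, coeff_Dd, hL, PowerSeries.coeff_C_mul, PowerSeries.coeff_C_mul,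
    PowerSeries.coeff_mul_X_pow', PowerSeries.coeff_mul_X_pow']
  by_cases hj4 : 4 ≤ j
  · rw [if_pos hj4, if_pos hj4, coeff_Dd]
    by_cases hmod : j % 4 = 0
    · obtain ⟨k, hk⟩ : ∃ k, j = 4 * (k + 1) := ⟨j / 4 - 1, by omega⟩
      subst hk
      have h1 : 4 * (k + 1) % 4 = 0 := by omega
      have h2 : 4 * (k + 1) / 4 = k + 1 := by omega
      have h3 : (4 * (k + 1) - 4) % 4 = 0 := by omega
      have h4 : (4 * (k + 1) - 4) / 4 = k := by omega
      have h5 : (4 * (k + 1) - 4) = 4 * k := by omega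
      rw [hcoeff, hcoeff, h5] at *
      simp only [h1, h2, if_pos, Nat.mul_div_cancel_left, Nat.mul_mod_right, if_true]
      have h7 : 4 * k / 4 = k := by omega
      rw [h7]
      have hqC : (2 : Rbc) * ((k : Rbc) + 1) * MvPolynomial.C (rr (k + 1)) =
          -((2 : Rbc) * (k : Rbc) + 1) * MvPolynomial.C (rr k) := by
        have h := congrArg (fun x : ℚ => (MvPolynomial.C x : Rbc)) (rr_rec k)
        simpa only [map_mul, map_add, map_neg, map_one, map_ofNat, map_natCast] using h
      push_cast
      linear_combination (2 * (4 * c) ^ (k + 1)) * hqC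
    · have h3 : (j - 4) % 4 ≠ 0 := by omega
      rw [hcoeff, hcoeff, if_neg hmod, if_neg h3]
      ring
  · rw [if_neg hj4, if_neg hj4]
    interval_cases j <;> simp [hcoeff]

lemma Hs_comb4 (a1 a2 a3 a4 : Rbc) (v1 v2 v3 v4 vt : ℕ → Rbc) (s : PowerSeries Rbc)
    (hpt : ∀ n, vt n = a1 * v1 n + a2 * v2 n + a3 * v3 n + a4 * v4 n) :
    Hs vt s = PowerSeries.C a1 * Hs v1 s + PowerSeries.C a2 * Hs v2 s
      + PowerSeries.C a3 * Hs v3 s + PowerSeries.C a4 * Hs v4 s := by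
  ext m : 1
  rw [map_add, map_add, map_add, PowerSeries.coeff_C_mul, PowerSeries.coeff_C_mul,
    PowerSeries.coeff_C_mul, PowerSeries.coeff_C_mul, coeff_Hs, coeff_Hs, coeff_Hs, coeff_Hs,
    coeff_Hs, Finset.mul_sum, Finset.mul_sum, Finset.mul_sum, Finset.mul_sum,
    ← Finset.sum_add_distrib, ← Finset.sum_add_distrib, ← Finset.sum_add_distrib]
  refine Finset.sum_congr rfl fun n _ => ?_
  rw [hpt n]
  ring

lemma C1_lemma (b c : Rbc) (vv : ℕ → Rbc) (s : PowerSeries Rbc)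
    (hs : ∀ j m : ℕ, m < j → PowerSeries.coeff m (s ^ j) = 0)
    (hvrec : ∀ n : ℕ, 1 ≤ n → (n : Rbc) * vv n =
      -2 * (2 * (n : Rbc) - 1) * ((n : Rbc) ^ 2 - (n : Rbc) - b) * vv (n - 1)
        + 8 * c * (2 * (n : Rbc) - 1) * (2 * (n : Rbc) - 3) * (2 * (n : Rbc) - 5) *
          (if 3 ≤ n then vv (n - 3) else 0)) :
    Hs (fun n => (n : Rbc) * vv n) s =
      ((-2 : PowerSeries Rbc) * s) *
          Hs (fun n => (2 * (n : Rbc) + 1) * ((n : Rbc) ^ 2 + (n : Rbc) - b) * vv n) s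
        + (8 * PowerSeries.C c * s ^ 3) *
          Hs (fun n => (2 * (n : Rbc) + 5) * (2 * (n : Rbc) + 3) * (2 * (n : Rbc) + 1) * vv n) s := by
  ext m : 1
  rw [map_add, coeff_mul_Hs s hs _ _ m, coeff_mul_Hs s hs _ _ m, coeff_Hs]
  have e1 : ∀ k : ℕ, PowerSeries.coeff m ((-2 : PowerSeries Rbc) * s * s ^ k) =
      (-2 : Rbc) * PowerSeries.coeff m (s ^ (k + 1)) := by
    intro k
    have h2 : (-2 : PowerSeries Rbc) * s * s ^ k = PowerSeries.C (-2) * s ^ (k + 1) := by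
      rw [map_neg, map_ofNat]; ring
    rw [h2, PowerSeries.coeff_C_mul]
  have e2 : ∀ k : ℕ, PowerSeries.coeff m (8 * PowerSeries.C c * s ^ 3 * s ^ k) =
      (8 * c : Rbc) * PowerSeries.coeff m (s ^ (k + 3)) := by
    intro k
    have h2 : 8 * PowerSeries.C c * s ^ 3 * s ^ k =
        PowerSeries.C (8 * c) * s ^ (k + 3) := by
      rw [map_mul, map_ofNat]; ring
    rw [h2, PowerSeries.coeff_C_mul]
  simp only [e1, e2]
  -- pad all three sums to range (m+4)
  have hpad : ∀ (f : ℕ → Rbc), (∀ n, m + 1 ≤ n → f n = 0) →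
      ∑ n ∈ Finset.range (m + 1), f n = ∑ n ∈ Finset.range (m + 4), f n := by
    intro f hf
    refine Finset.sum_subset (Finset.range_subset_range.2 (by omega)) ?_
    intro n hn hn2
    exact hf n (by simp only [Finset.mem_range] at hn2; omega)
  rw [hpad _ (fun n hn => by
      have h0 : PowerSeries.coeff m (s ^ n) = 0 := hs n m (by omega)
      simp [h0]),
    hpad _ (fun n hn => by
      have h0 : PowerSeries.coeff m (s ^ (n + 1)) = 0 := hs (n + 1) m (by omega)
      simp [h0]),
    hpad _ (fun n hn => by
      have h0 : PowerSeries.coeff m (s ^ (n + 3)) = 0 := hs (n + 3) m (by omega)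
      simp [h0])]
  -- LHS : peel the first term
  conv_lhs => rw [show m + 4 = m + 3 + 1 from rfl, Finset.sum_range_succ']
  simp only [Nat.cast_zero, zero_mul, add_zero, Nat.cast_ofNat]
  -- rewrite each term with the recursion and split
  have hsplit : ∀ i ∈ Finset.range (m + 3),
      ((i + 1 : ℕ) : Rbc) * vv (i + 1) * PowerSeries.coeff m (s ^ (i + 1)) =
        (-2 * (2 * ((i + 1 : ℕ) : Rbc) - 1) * (((i + 1 : ℕ) : Rbc) ^ 2 - ((i + 1 : ℕ) : Rbc) - b)
            * vv i) * PowerSeries.coeff m (s ^ (i + 1))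
          + (8 * c * (2 * ((i + 1 : ℕ) : Rbc) - 1) * (2 * ((i + 1 : ℕ) : Rbc) - 3) *
              (2 * ((i + 1 : ℕ) : Rbc) - 5) * (if 3 ≤ i + 1 then vv (i + 1 - 3) else 0))
            * PowerSeries.coeff m (s ^ (i + 1)) := by
    intro i hi
    rw [hvrec (i + 1) (by omega)]
    have : i + 1 - 1 = i := by omega
    rw [this]
    ring
  rw [Finset.sum_congr rfl hsplit, Finset.sum_add_distrib]
  -- first part ↔ first RHS sum
  have part1 : ∑ i ∈ Finset.range (m + 3),
      (-2 * (2 * ((i + 1 : ℕ) : Rbc) - 1) * (((i + 1 : ℕ) : Rbc) ^ 2 - ((i + 1 : ℕ) : Rbc) - b)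
        * vv i) * PowerSeries.coeff m (s ^ (i + 1)) =
      ∑ k ∈ Finset.range (m + 4), (2 * (k : Rbc) + 1) * ((k : Rbc) ^ 2 + (k : Rbc) - b) * vv k *
        ((-2 : Rbc) * PowerSeries.coeff m (s ^ (k + 1))) := by
    conv_rhs => rw [show m + 4 = m + 3 + 1 from rfl, Finset.sum_range_succ]
    rw [hs (m + 3 + 1) m (by omega)]
    rw [mul_zero, mul_zero, add_zero]
    refine Finset.sum_congr rfl fun i _ => ?_
    push_cast
    ring
  -- second part ↔ second RHS sum
  have part2 : ∑ i ∈ Finset.range (m + 3),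
      (8 * c * (2 * ((i + 1 : ℕ) : Rbc) - 1) * (2 * ((i + 1 : ℕ) : Rbc) - 3) *
        (2 * ((i + 1 : ℕ) : Rbc) - 5) * (if 3 ≤ i + 1 then vv (i + 1 - 3) else 0))
        * PowerSeries.coeff m (s ^ (i + 1)) =
      ∑ k ∈ Finset.range (m + 4), (2 * (k : Rbc) + 5) * (2 * (k : Rbc) + 3) * (2 * (k : Rbc) + 1)
        * vv k * ((8 * c : Rbc) * PowerSeries.coeff m (s ^ (k + 3))) := by
    -- peel the first two (vanishing) terms of the LHS
    conv_lhs => rw [show m + 3 = m + 2 + 1 from rfl, Finset.sum_range_succ',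
      show m + 2 = m + 1 + 1 from rfl, Finset.sum_range_succ']
    norm_num
    -- peel the last three (vanishing) terms of the RHS
    conv_rhs => rw [show m + 4 = m + 3 + 1 from rfl, Finset.sum_range_succ,
      show m + 3 = m + 2 + 1 from rfl, Finset.sum_range_succ,
      show m + 2 = m + 1 + 1 from rfl, Finset.sum_range_succ]
    rw [hs (m + 3 + 3) m (by omega), hs (m + 2 + 3) m (by omega), hs (m + 1 + 3) m (by omega)]
    norm_num
    refine Finset.sum_congr rfl fun i _ => ?_
    have h3 : i + 1 + 1 + 1 - 3 = i := by omega
    have h4 : i + 1 + 1 + 1 = i + 3 := by omega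
    rw [h3, h4]
    push_cast
    ring
  rw [part1, part2]

set_option maxHeartbeats 2000000 in
/-- The identity of Remark 2 of the paper:
`∑ₙ uₙ t^{2n} = (1+4ct⁴)^{-1/2} ∑ₙ C(2n,n) n! wₙ (-t²)ⁿ (1+4ct⁴)^{-n}`
in `ℚ[b,c][[t]]`, where `(1+4ct⁴)^{-1/2} = ∑ₖ binom(-1/2,k)(4ct⁴)^k` is the formal
binomial series and `Sinv` is the inverse of the invertible power series `S = 1+4ct⁴`.
The (formal) infinite sum over `n` is expressed coefficientwise: the coefficient of `t^m`
of the right-hand side is the (finite) sum over `n ≤ m` of the coefficients of `t^m`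
of the summands. -/
theorem statement7
    (b c : Rbc) (hb : b = MvPolynomial.X 0) (hc : c = MvPolynomial.X 1)
    (u w : ℕ → Rbc)
    (hu0 : u 0 = 1)
    (hurec : ∀ n : ℕ, 1 ≤ n →
      (n : Rbc) * u n =
        2 * (2 * (n : Rbc) - 1) * ((n : Rbc) * ((n : Rbc) - 1) - b) * u (n - 1)
          - 4 * c * ((n : Rbc) - 1) * (if 2 ≤ n then u (n - 2) else 0))
    (hw0 : w 0 = 1)
    (hwrec : ∀ n : ℕ, 1 ≤ n →
      (n : Rbc) * w n =
        -((n : Rbc) * ((n : Rbc) - 1) - b) * w (n - 1)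
          + c * (if 3 ≤ n then w (n - 3) else 0))
    (S Sinv : PowerSeries Rbc)
    (hS : S = 1 + 4 * PowerSeries.C c * PowerSeries.X ^ 4)
    (hSinv : S * Sinv = 1)
    (A : PowerSeries Rbc)
    (hA : A = PowerSeries.mk fun j : ℕ =>
      if j % 4 = 0 then
        MvPolynomial.C
            ((∏ i ∈ Finset.range (j / 4), ((-1 : ℚ) / 2 - (i : ℚ))) / ((j / 4).factorial : ℚ)) *
          (4 * c) ^ (j / 4)
      else 0) :
    ∀ m : ℕ,
      (if Even m then u (m / 2) else 0) =
        ∑ n ∈ Finset.range (m + 1),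
          PowerSeries.coeff m
            (A * (PowerSeries.C ((Nat.choose (2 * n) n : Rbc) * (n.factorial : Rbc) * w n) *
              (-(PowerSeries.X : PowerSeries Rbc) ^ 2) ^ n * Sinv ^ n)) := by
  classical
  have hσ1 : (1 + 4 * PowerSeries.C c * PowerSeries.X ^ 4) * Sinv = 1 := by rw [← hS]; exact hSinv
  -- vanishing of low coefficients of powers of s
  have hsv : ∀ j m' : ℕ, m' < j → PowerSeries.coeff m' ((-(PowerSeries.X : PowerSeries Rbc) ^ 2 * Sinv) ^ j) = 0 := by
    intro j m' hlt
    have hfac : (-(PowerSeries.X : PowerSeries Rbc) ^ 2 * Sinv) ^ j = (-Sinv) ^ j * PowerSeries.X ^ (2 * j) := by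
      have h1 : (-(PowerSeries.X : PowerSeries Rbc) ^ 2 * Sinv) = -Sinv * PowerSeries.X ^ 2 := by ring
      rw [h1, mul_pow, ← pow_mul]
    rw [hfac, PowerSeries.coeff_mul_X_pow']
    rw [if_neg (by omega)]
  -- derivative facts
  have hDS : Dd S = 16 * PowerSeries.C c * PowerSeries.X ^ 4 := by
    rw [hS, Dd_add, Dd_one, Dd_mul, Dd_mul, Dd_ofNat, Dd_C, Dd_X_pow]
    simp only [Nat.cast_ofNat]
    ring
  have h0 : Dd S * Sinv + S * Dd Sinv = 0 := by rw [← Dd_mul, hSinv, Dd_one]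
  rw [hDS, hS] at h0
  have hσd : Dd Sinv = -(16) * PowerSeries.C c * PowerSeries.X ^ 4 * Sinv ^ 2 := by
    linear_combination Sinv * h0 - Dd Sinv * hσ1
  have hσsq : Dd (Sinv ^ 2) = -(32) * PowerSeries.C c * PowerSeries.X ^ 4 * Sinv ^ 3 := by
    rw [pow_two, Dd_mul, hσd]; ring
  have hDA2 : Dd A = -(8) * PowerSeries.C c * PowerSeries.X ^ 4 * Sinv * A := by
    linear_combination Sinv * DA_lemma c A hA - Dd A * hσ1
  have hds : Dd (-(PowerSeries.X : PowerSeries Rbc) ^ 2 * Sinv) = (4 * Sinv - 2) * (-(PowerSeries.X : PowerSeries Rbc) ^ 2 * Sinv) := by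
    simp only [Dd_mul, Dd_neg, Dd_X_pow, hσd, Nat.cast_ofNat]
    linear_combination (4 * PowerSeries.X ^ 2 * Sinv) * hσ1
  -- the weight sequence vv
  set vv : ℕ → Rbc := fun n => ((aa n : ℕ) : Rbc) * w n with hvvdef
  have hvrec : ∀ n : ℕ, 1 ≤ n → (n : Rbc) * vv n =
      -2 * (2 * (n : Rbc) - 1) * ((n : Rbc) ^ 2 - (n : Rbc) - b) * vv (n - 1)
        + 8 * c * (2 * (n : Rbc) - 1) * (2 * (n : Rbc) - 3) * (2 * (n : Rbc) - 5) *
          (if 3 ≤ n then vv (n - 3) else 0) := by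
    have ha0 : aa 0 = 1 := by decide
    have ha1 : aa 1 = 2 := by decide
    have ha2 : aa 2 = 12 := by decide
    intro n hn
    match n, hn with
    | 1, _ =>
      have hw1 := hwrec 1 (by norm_num)
      norm_num at hw1 ⊢
      simp only [hvvdef, ha0, ha1]
      push_cast
      linear_combination 2 * hw1
    | 2, _ =>
      have hw2 := hwrec 2 (by norm_num)
      norm_num at hw2 ⊢
      simp only [hvvdef, ha1, ha2]
      push_cast
      linear_combination 12 * hw2
    | (j+3), _ =>
      have hw3 := hwrec (j+3) (by omega)
      rw [if_pos (by omega : 3 ≤ j + 3)] at hw3 ⊢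
      have e1 : j + 3 - 3 = j := by omega
      have e2 : j + 3 - 1 = j + 2 := by omega
      rw [e1, e2] at hw3 ⊢
      simp only [hvvdef]
      have hA3 := aa_Rrec (j + 2)
      have hA2 := aa_Rrec (j + 1)
      have hA1 := aa_Rrec j
      have f3 : j + 2 + 1 = j + 3 := by omega
      have f2 : j + 1 + 1 = j + 2 := by omega
      rw [f3] at hA3
      rw [f2] at hA2
      rw [hA3, hA2, hA1]
      push_cast at hw3 ⊢
      linear_combination (8 * (2 * (j : Rbc) + 5) * (2 * (j : Rbc) + 3) * (2 * (j : Rbc) + 1) *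
        ((aa j : ℕ) : Rbc)) * hw3
  -- derivative of the weighted series
  have hDH0 : Dd (Hs vv (-(PowerSeries.X : PowerSeries Rbc) ^ 2 * Sinv)) = (4 * Sinv - 2) * Hs (fun n => (n : Rbc) * vv n) (-(PowerSeries.X : PowerSeries Rbc) ^ 2 * Sinv) := Dd_Hs (-(PowerSeries.X : PowerSeries Rbc) ^ 2 * Sinv) hsv _ hds vv
  have hDH1 : Dd (Hs (fun n => (n : Rbc) * vv n) (-(PowerSeries.X : PowerSeries Rbc) ^ 2 * Sinv)) = (4 * Sinv - 2) * Hs (fun n => (n : Rbc) * ((n : Rbc) * vv n)) (-(PowerSeries.X : PowerSeries Rbc) ^ 2 * Sinv) := Dd_Hs (-(PowerSeries.X : PowerSeries Rbc) ^ 2 * Sinv) hsv _ hds _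
  have hDH2 : Dd (Hs (fun n => (n : Rbc) * ((n : Rbc) * vv n)) (-(PowerSeries.X : PowerSeries Rbc) ^ 2 * Sinv)) = (4 * Sinv - 2) * Hs (fun n => (n : Rbc) * ((n : Rbc) * ((n : Rbc) * vv n))) (-(PowerSeries.X : PowerSeries Rbc) ^ 2 * Sinv) := Dd_Hs (-(PowerSeries.X : PowerSeries Rbc) ^ 2 * Sinv) hsv _ hds _
  have hC1 := C1_lemma b c vv (-(PowerSeries.X : PowerSeries Rbc) ^ 2 * Sinv) hsv hvrec
  have hconv1 : Hs (fun n => (2 * (n : Rbc) + 1) * ((n : Rbc) ^ 2 + (n : Rbc) - b) * vv n) (-(PowerSeries.X : PowerSeries Rbc) ^ 2 * Sinv) =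
      2 * Hs (fun n => (n : Rbc) * ((n : Rbc) * ((n : Rbc) * vv n))) (-(PowerSeries.X : PowerSeries Rbc) ^ 2 * Sinv)
        + 3 * Hs (fun n => (n : Rbc) * ((n : Rbc) * vv n)) (-(PowerSeries.X : PowerSeries Rbc) ^ 2 * Sinv)
        + Hs (fun n => (n : Rbc) * vv n) (-(PowerSeries.X : PowerSeries Rbc) ^ 2 * Sinv)
        - PowerSeries.C b * (2 * Hs (fun n => (n : Rbc) * vv n) (-(PowerSeries.X : PowerSeries Rbc) ^ 2 * Sinv) + Hs vv (-(PowerSeries.X : PowerSeries Rbc) ^ 2 * Sinv)) := by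
    have e := Hs_comb4 2 3 (1 - 2 * b) (-b)
      (fun n => (n : Rbc) * ((n : Rbc) * ((n : Rbc) * vv n)))
      (fun n => (n : Rbc) * ((n : Rbc) * vv n))
      (fun n => (n : Rbc) * vv n) vv
      (fun n => (2 * (n : Rbc) + 1) * ((n : Rbc) ^ 2 + (n : Rbc) - b) * vv n) (-(PowerSeries.X : PowerSeries Rbc) ^ 2 * Sinv)
      (fun n => by ring)
    rw [map_sub, map_mul, map_ofNat, map_one, map_ofNat, map_neg] at e
    rw [e]
    ring
  have hconv2 : Hs (fun n => (2 * (n : Rbc) + 5) * (2 * (n : Rbc) + 3) * (2 * (n : Rbc) + 1) * vv n) (-(PowerSeries.X : PowerSeries Rbc) ^ 2 * Sinv) =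
      8 * Hs (fun n => (n : Rbc) * ((n : Rbc) * ((n : Rbc) * vv n))) (-(PowerSeries.X : PowerSeries Rbc) ^ 2 * Sinv)
        + 36 * Hs (fun n => (n : Rbc) * ((n : Rbc) * vv n)) (-(PowerSeries.X : PowerSeries Rbc) ^ 2 * Sinv)
        + 46 * Hs (fun n => (n : Rbc) * vv n) (-(PowerSeries.X : PowerSeries Rbc) ^ 2 * Sinv)
        + 15 * Hs vv (-(PowerSeries.X : PowerSeries Rbc) ^ 2 * Sinv) := by
    have e := Hs_comb4 8 36 46 15
      (fun n => (n : Rbc) * ((n : Rbc) * ((n : Rbc) * vv n)))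
      (fun n => (n : Rbc) * ((n : Rbc) * vv n))
      (fun n => (n : Rbc) * vv n) vv
      (fun n => (2 * (n : Rbc) + 5) * (2 * (n : Rbc) + 3) * (2 * (n : Rbc) + 1) * vv n) (-(PowerSeries.X : PowerSeries Rbc) ^ 2 * Sinv)
      (fun n => by ring)
    rw [map_ofNat, map_ofNat, map_ofNat, map_ofNat] at e
    rw [e]
  -- the third order ODE satisfied by A * Hs vv s
  have hODE : Dd (A * Hs vv (-(PowerSeries.X : PowerSeries Rbc) ^ 2 * Sinv)) =
      PowerSeries.X ^ 2 * (Dd (Dd (Dd (A * Hs vv (-(PowerSeries.X : PowerSeries Rbc) ^ 2 * Sinv)))) + 3 * Dd (Dd (A * Hs vv (-(PowerSeries.X : PowerSeries Rbc) ^ 2 * Sinv))) + 2 * Dd (A * Hs vv (-(PowerSeries.X : PowerSeries Rbc) ^ 2 * Sinv))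
        - 4 * PowerSeries.C b * Dd (A * Hs vv (-(PowerSeries.X : PowerSeries Rbc) ^ 2 * Sinv)) - 4 * PowerSeries.C b * (A * Hs vv (-(PowerSeries.X : PowerSeries Rbc) ^ 2 * Sinv)))
      - 4 * PowerSeries.C c * PowerSeries.X ^ 4 * (Dd (A * Hs vv (-(PowerSeries.X : PowerSeries Rbc) ^ 2 * Sinv)) + 2 * (A * Hs vv (-(PowerSeries.X : PowerSeries Rbc) ^ 2 * Sinv))) := by
    simp only [Dd_mul, Dd_add, Dd_sub, Dd_neg, Dd_ofNat, Dd_zero, Dd_one, Dd_C, Dd_X_pow,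
      hDA2, hσd, hσsq, hDH0, hDH1, hDH2, Nat.cast_ofNat]
    linear_combination (A * (2 - 8 * PowerSeries.C c * PowerSeries.X^4)) * hC1
      - (2 * A * (2 - 8 * PowerSeries.C c * PowerSeries.X^4) * (-(PowerSeries.X : PowerSeries Rbc) ^ 2 * Sinv)) * hconv1
      + (8 * A * (2 - 8 * PowerSeries.C c * PowerSeries.X^4) * PowerSeries.C c * (-(PowerSeries.X : PowerSeries Rbc) ^ 2 * Sinv) ^ 3) * hconv2
      + (A * (((-4) * PowerSeries.X^2 * PowerSeries.C b + (-8) * PowerSeries.X^4 * PowerSeries.C c + (-240) * PowerSeries.X^6 * Sinv * PowerSeries.C c + (-240) * PowerSeries.X^6 * Sinv^2 * PowerSeries.C c + 1920 * PowerSeries.X^10 * Sinv^2 * PowerSeries.C c^2) * Hs vv (-(PowerSeries.X : PowerSeries Rbc) ^ 2 * Sinv) + (4 + (-4) * PowerSeries.X^2 + 8 * PowerSeries.X^2 * PowerSeries.C b + 288 * PowerSeries.X^6 * Sinv * PowerSeries.C c + (-736) * PowerSeries.X^6 * Sinv^2 * PowerSeries.C c) * Hs (fun n => (n : Rbc) *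 vv n) (-(PowerSeries.X : PowerSeries Rbc) ^ 2 * Sinv) + (12 * PowerSeries.X^2 + (-48) * PowerSeries.X^2 * Sinv + 576 * PowerSeries.X^6 * Sinv^2 * PowerSeries.C c) * Hs (fun n => (n : Rbc) * ((n : Rbc) * vv n)) (-(PowerSeries.X : PowerSeries Rbc) ^ 2 * Sinv) + ((-8) * PowerSeries.X^2 + 32 * PowerSeries.X^2 * Sinv + (-64) * PowerSeries.X^2 * Sinv^2 + 128 * PowerSeries.X^6 * Sinv^2 * PowerSeries.C c) * Hs (fun n => (n : Rbc) * ((n : Rbc) * ((n : Rbc) * vv n))) (-(PowerSeries.X : PowerSeries Rbc) ^ 2 * Sinv))) * hσ1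
  -- identification of the statement's coefficients
  have hRHS : ∀ m : ℕ,
      (∑ n ∈ Finset.range (m + 1),
        PowerSeries.coeff m
          (A * (PowerSeries.C ((Nat.choose (2 * n) n : Rbc) * (n.factorial : Rbc) * w n) *
            (-(PowerSeries.X : PowerSeries Rbc) ^ 2) ^ n * Sinv ^ n))) =
      PowerSeries.coeff m (A * Hs vv (-(PowerSeries.X : PowerSeries Rbc) ^ 2 * Sinv)) := by
    intro m
    rw [coeff_mul_Hs _ hsv A vv m]
    refine Finset.sum_congr rfl fun n _ => ?_
    have he : A * (PowerSeries.C ((Nat.choose (2 * n) n : Rbc) * (n.factorial : Rbc) * w n) *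
        (-(PowerSeries.X : PowerSeries Rbc) ^ 2) ^ n * Sinv ^ n) =
        PowerSeries.C ((Nat.choose (2 * n) n : Rbc) * (n.factorial : Rbc) * w n) *
          (A * (-(PowerSeries.X : PowerSeries Rbc) ^ 2 * Sinv) ^ n) := by
      ring
    rw [he, PowerSeries.coeff_C_mul]
    have hχ : ((Nat.choose (2 * n) n : Rbc) * (n.factorial : Rbc) * w n) = vv n := by
      simp only [hvvdef, aa]
      push_cast
      ring
    rw [hχ]
  -- vanishing of odd coefficients
  have hσc : ∀ j : ℕ, 1 ≤ j → PowerSeries.coeff j Sinv =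
      -(4 * c) * (if 4 ≤ j then PowerSeries.coeff (j - 4) Sinv else 0) := by
    intro j hj
    have h := congrArg (PowerSeries.coeff j) hσ1
    rw [add_mul, one_mul, map_add] at h
    have h4 : (4 : PowerSeries Rbc) * PowerSeries.C c * PowerSeries.X ^ 4 * Sinv =
        PowerSeries.C (4 * c) * (Sinv * PowerSeries.X ^ 4) := by
      rw [map_mul, map_ofNat]; ring
    rw [h4, PowerSeries.coeff_C_mul, PowerSeries.coeff_mul_X_pow'] at h
    rw [PowerSeries.coeff_one, if_neg (show ¬ j = 0 by omega)] at h
    linear_combination h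
  have hσe : Ev Sinv := by
    intro j
    induction j using Nat.strong_induction_on with
    | _ j ih =>
      intro hj
      have h1 : 1 ≤ j := by rcases hj with ⟨t, ht⟩; omega
      rw [hσc j h1]
      by_cases h4 : 4 ≤ j
      · rw [if_pos h4, ih (j - 4) (by omega) (by rcases hj with ⟨t, ht⟩; exact ⟨t - 2, by omega⟩)]
        ring
      · rw [if_neg h4]; ring
  have hAe : Ev A := by
    intro j hj
    rw [hA, PowerSeries.coeff_mk]
    rw [if_neg (show ¬ j % 4 = 0 by rcases hj with ⟨t, ht⟩; omega)]
  have hse : Ev (-(PowerSeries.X : PowerSeries Rbc) ^ 2 * Sinv) := by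
    have h1 : (-(PowerSeries.X : PowerSeries Rbc) ^ 2 * Sinv) = -((PowerSeries.X : PowerSeries Rbc) ^ 2 * Sinv) := by ring
    rw [h1]
    refine Ev_neg (Ev_mul ?_ hσe)
    intro j hj
    rw [PowerSeries.coeff_X_pow, if_neg]
    rintro rfl
    rcases hj with ⟨t, ht⟩
    omega
  have hodd : ∀ m : ℕ, Odd m → PowerSeries.coeff m (A * Hs vv (-(PowerSeries.X : PowerSeries Rbc) ^ 2 * Sinv)) = 0 := by
    intro m hm
    rw [coeff_mul_Hs _ hsv A vv m]
    refine Finset.sum_eq_zero fun n _ => ?_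
    rw [Ev_mul hAe (Ev_pow hse n) m hm, mul_zero]
  -- rewrite the ODE with C-constants for coefficient extraction
  have e4b : (PowerSeries.C (R := Rbc)) (4 * b) = 4 * PowerSeries.C b := by
    rw [map_mul, map_ofNat]
  have e4c : (PowerSeries.C (R := Rbc)) (4 * c) = 4 * PowerSeries.C c := by
    rw [map_mul, map_ofNat]
  have hODE2 : Dd (A * Hs vv (-(PowerSeries.X : PowerSeries Rbc) ^ 2 * Sinv)) =
      PowerSeries.X ^ 2 * (Dd (Dd (Dd (A * Hs vv (-(PowerSeries.X : PowerSeries Rbc) ^ 2 * Sinv)))) + 3 * Dd (Dd (A * Hs vv (-(PowerSeries.X : PowerSeries Rbc) ^ 2 * Sinv)))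
        + 2 * Dd (A * Hs vv (-(PowerSeries.X : PowerSeries Rbc) ^ 2 * Sinv))
        - PowerSeries.C (4 * b) * Dd (A * Hs vv (-(PowerSeries.X : PowerSeries Rbc) ^ 2 * Sinv))
        - PowerSeries.C (4 * b) * (A * Hs vv (-(PowerSeries.X : PowerSeries Rbc) ^ 2 * Sinv)))
      - PowerSeries.C (4 * c) *
          (PowerSeries.X ^ 4 * (Dd (A * Hs vv (-(PowerSeries.X : PowerSeries Rbc) ^ 2 * Sinv)) + 2 * (A * Hs vv (-(PowerSeries.X : PowerSeries Rbc) ^ 2 * Sinv)))) := by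
    rw [e4b, e4c]
    linear_combination hODE
  -- the even coefficients satisfy u's recursion
  have hkey : ∀ N : ℕ, PowerSeries.coeff (2 * N) (A * Hs vv (-(PowerSeries.X : PowerSeries Rbc) ^ 2 * Sinv)) = u N := by
    intro N
    induction N using Nat.strong_induction_on with
    | _ N ih =>
      match N with
      | 0 =>
        rw [show (2 : ℕ) * 0 = 0 from rfl, coeff_mul_Hs _ hsv A vv 0, Finset.sum_range_one,
          pow_zero, mul_one, hA, PowerSeries.coeff_mk]
        norm_num
        simp only [hvvdef]
        norm_num [aa, hw0, hu0]
      | (K + 1) =>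
        have hidx : 2 * (K + 1) = 2 * K + 2 := by ring
        rw [hidx]
        have hc := congrArg (PowerSeries.coeff (2 * K + 2)) hODE2
        rw [coeff_Dd, map_sub, PowerSeries.coeff_X_pow_mul, PowerSeries.coeff_C_mul,
          PowerSeries.coeff_X_pow_mul'] at hc
        simp only [map_sub, map_add, coeff_Dd, coeff_ofNat_mul, PowerSeries.coeff_C_mul] at hc
        match K with
        | 0 =>
          rw [if_neg (by omega)] at hc
          have hR0 := ih 0 (by omega)
          rw [hR0] at hc
          have hu1 := hurec 1 (by norm_num)
          rw [if_neg (by omega)] at hu1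
          norm_num at hc hu1 ⊢
          apply mul_left_cancel₀ (two_ne_zero' Rbc)
          linear_combination hc - 2 * hu1
        | (J + 1) =>
          rw [if_pos (by omega : 4 ≤ 2 * (J + 1) + 2)] at hc
          rw [show 2 * (J + 1) + 2 - 4 = 2 * J from by omega] at hc
          rw [ih (J + 1) (by omega), ih J (by omega)] at hc
          have hu' := hurec (J + 2) (by omega)
          rw [if_pos (by omega : 2 ≤ J + 2)] at hu'
          rw [show J + 2 - 1 = J + 1 from by omega, show J + 2 - 2 = J from by omega] at hu'
          rw [show J + 1 + 1 = J + 2 from by omega]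
          have hne : ((2 * (J + 1) + 2 : ℕ) : Rbc) ≠ 0 := Nat.cast_ne_zero.2 (by omega)
          apply mul_left_cancel₀ hne
          push_cast at hc hu' ⊢
          linear_combination hc - 2 * hu'
  intro m
  rw [hRHS m]
  rcases Nat.even_or_odd m with hm | hm
  · rw [if_pos hm]
    obtain ⟨N, hN⟩ := hm
    have h2 : m = 2 * N := by omega
    subst h2
    rw [hkey N]
    congr 1
    omega
  · rw [if_neg (by simpa using hm), hodd m hm]
end

section
/- For every n ≥ 0 the identity u_n = Σ_{k=0}^{2n} (-1)^k · w_k · w_{2n-k} holds in ℚ[b,c]. -/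
open PowerSeries

noncomputable section

variable (b c : Rbc) (w : ℕ → Rbc)

local notation "DD" => d⁄dX Rbc
local notation "CC" => C (R := Rbc)






lemma coeff_X_mul' (f : Rbc⟦X⟧) (m : ℕ) :
    coeff (R := Rbc) m (X * f) = if 1 ≤ m then coeff (R := Rbc) (m - 1) f else 0 := by
  rw [← pow_one (X : Rbc⟦X⟧), coeff_X_pow_mul']

lemma odeW
    (hwrec : ∀ n : ℕ, 1 ≤ n →
      (n : Rbc) * w n =
        -((n : Rbc) * ((n : Rbc) - 1) - b) * w (n - 1)
          + c * (if 3 ≤ n then w (n - 3) else 0)) :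
    X ^ 2 * DD (DD (mk w)) + DD (mk w) + 2 * (X * DD (mk w))
      - CC b * mk w - CC c * (X ^ 2 * mk w) = 0 := by
  rw [show (2 : Rbc⟦X⟧) = CC 2 from (map_ofNat (C (R := Rbc)) 2).symm]
  refine PowerSeries.ext fun m => ?_
  simp only [map_add, map_sub, coeff_X_pow_mul', coeff_X_mul', coeff_C_mul, coeff_derivative,
    coeff_mk, map_zero]
  rcases m with _ | _ | m
  · have h := hwrec 1 (by omega)
    rw [if_neg (by omega)] at h
    norm_num at h ⊢
    linear_combination h
  · have h := hwrec 2 (by omega)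
    rw [if_neg (by omega)] at h
    norm_num at h ⊢
    linear_combination h
  · have h := hwrec (m + 3) (by omega)
    rw [if_pos (by omega)] at h
    have e1 : m + 3 - 1 = m + 2 := by omega
    have e3 : m + 3 - 3 = m := by omega
    rw [e1, e3] at h
    rw [if_pos (by omega : 2 ≤ m + 2), if_pos (by omega : 1 ≤ m + 2), if_pos (by omega : 2 ≤ m + 2)]
    have e4 : m + 2 - 2 = m := by omega
    have e5 : m + 2 - 1 = m + 1 := by omega
    rw [e4, e5]
    push_cast at h ⊢
    linear_combination h




lemma odeY
    (hwrec : ∀ n : ℕ, 1 ≤ n →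
      (n : Rbc) * w n =
        -((n : Rbc) * ((n : Rbc) - 1) - b) * w (n - 1)
          + c * (if 3 ≤ n then w (n - 3) else 0)) :
    X ^ 2 * DD (DD (mk fun k => (-1) ^ k * w k)) - DD (mk fun k => (-1) ^ k * w k)
      + 2 * (X * DD (mk fun k => (-1) ^ k * w k))
      - CC b * (mk fun k => (-1) ^ k * w k)
      - CC c * (X ^ 2 * mk fun k => (-1) ^ k * w k) = 0 := by
  rw [show (2 : Rbc⟦X⟧) = CC 2 from (map_ofNat (C (R := Rbc)) 2).symm]
  refine PowerSeries.ext fun m => ?_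
  simp only [map_add, map_sub, coeff_X_pow_mul', coeff_X_mul', coeff_C_mul, coeff_derivative,
    coeff_mk, map_zero]
  rcases m with _ | _ | m
  · have h := hwrec 1 (by omega)
    rw [if_neg (by omega)] at h
    norm_num at h ⊢
    linear_combination h
  · have h := hwrec 2 (by omega)
    rw [if_neg (by omega)] at h
    norm_num at h ⊢
    linear_combination -h
  · have h := hwrec (m + 3) (by omega)
    rw [if_pos (by omega)] at h
    have e1 : m + 3 - 1 = m + 2 := by omega
    have e3 : m + 3 - 3 = m := by omega
    rw [e1, e3] at h
    rw [if_pos (by omega : 2 ≤ m + 2), if_pos (by omega : 1 ≤ m + 2), if_pos (by omega : 2 ≤ m + 2)]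
    have e4 : m + 2 - 2 = m := by omega
    have e5 : m + 2 - 1 = m + 1 := by omega
    rw [e4, e5]
    push_cast at h ⊢
    linear_combination ((-1 : Rbc)) ^ m * h



lemma ode3 (bb cc : Rbc) (W Y : Rbc⟦X⟧)
    (hA : X ^ 2 * DD (DD W) + DD W + 2 * (X * DD W) - CC bb * W - CC cc * (X ^ 2 * W) = 0)
    (hB : X ^ 2 * DD (DD Y) - DD Y + 2 * (X * DD Y) - CC bb * Y - CC cc * (X ^ 2 * Y) = 0) :
    X ^ 4 * DD (DD (DD (W * Y))) + 6 * (X ^ 3 * DD (DD (W * Y))) + 6 * (X ^ 2 * DD (W * Y))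
      - DD (W * Y) - 4 * (CC bb * (X ^ 2 * DD (W * Y))) - 4 * (CC cc * (X ^ 4 * DD (W * Y)))
      - 8 * (CC cc * (X ^ 3 * (W * Y))) - 4 * (CC bb * (X * (W * Y))) = 0 := by
  have lz : ∀ f g : Rbc⟦X⟧, DD (f * g) = DD f * g + f * DD g := by
    intro f g
    rw [Derivation.leibniz]
    simp [smul_eq_mul]
    ring
  have hD2 : DD (2 : Rbc⟦X⟧) = 0 := by
    rw [show (2 : Rbc⟦X⟧) = ((2 : ℕ) : Rbc⟦X⟧) by norm_cast]
    exact Derivation.map_natCast _ 2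
  have hX2 : DD (X ^ 2 : Rbc⟦X⟧) = 2 * X := by
    rw [show (X ^ 2 : Rbc⟦X⟧) = X * X by ring, lz]
    simp
    ring
  have e1 : DD (W * Y) = DD W * Y + W * DD Y := lz W Y
  have e2 : DD (DD (W * Y)) = DD (DD W) * Y + 2 * (DD W * DD Y) + W * DD (DD Y) := by
    rw [e1, map_add, lz, lz]; ring
  have e3 : DD (DD (DD (W * Y))) =
      DD (DD (DD W)) * Y + 3 * (DD (DD W) * DD Y) + 3 * (DD W * DD (DD Y)) + W * DD (DD (DD Y)) := by
    rw [e2]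
    simp only [map_add, lz, hD2]
    ring
  have hA' := congrArg (⇑(DD)) hA
  have hB' := congrArg (⇑(DD)) hB
  simp only [map_add, map_sub, map_zero, lz, hD2, hX2, derivative_X, derivative_C] at hA' hB'
  rw [e3, e2, e1]
  linear_combination ((2*X - 1)*Y + 3*X^2*DD Y) * hA + ((2*X + 1)*W + 3*X^2*DD W) * hB
    + X^2*Y*hA' + X^2*W*hB'

def Sw (w : ℕ → Rbc) (n : ℕ) : Rbc :=
  coeff (R := Rbc) (2 * n) (mk w * mk fun j => (-1) ^ j * w j)

lemma srec
    (hwrec : ∀ n : ℕ, 1 ≤ n →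
      (n : Rbc) * w n =
        -((n : Rbc) * ((n : Rbc) - 1) - b) * w (n - 1)
          + c * (if 3 ≤ n then w (n - 3) else 0)) (k : ℕ) :
    2 * ((k : Rbc) + 1) * Sw w (k + 1) =
      2 * (2 * (2 * ((k : Rbc) + 1) - 1) * (((k : Rbc) + 1) * (((k : Rbc) + 1) - 1) - b) * Sw w k
        - 4 * c * (((k : Rbc) + 1) - 1) * (if 2 ≤ k + 1 then Sw w (k - 1) else 0)) := by
  have hG := ode3 b c (mk w) (mk fun j => (-1) ^ j * w j) (odeW b c w hwrec) (odeY b c w hwrec)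
  rw [show (6 : Rbc⟦X⟧) = CC 6 from (map_ofNat (C (R := Rbc)) 6).symm,
      show (4 : Rbc⟦X⟧) = CC 4 from (map_ofNat (C (R := Rbc)) 4).symm,
      show (8 : Rbc⟦X⟧) = CC 8 from (map_ofNat (C (R := Rbc)) 8).symm] at hG
  rcases k with _ | _ | k
  · have hc := congrArg (coeff (R := Rbc) 1) hG
    simp only [map_add, map_sub, map_zero, coeff_C_mul, coeff_X_pow_mul', coeff_derivative] at hc
    norm_num at hc
    simp only [Sw]
    norm_num
    linear_combination -hc
  · have hc := congrArg (coeff (R := Rbc) 3) hG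
    simp only [map_add, map_sub, map_zero, coeff_C_mul, coeff_X_pow_mul', coeff_derivative] at hc
    norm_num at hc
    simp only [Sw]
    norm_num
    linear_combination -hc
  · have hc := congrArg (coeff (R := Rbc) (2 * k + 5)) hG
    simp only [map_add, map_sub, map_zero, coeff_C_mul, coeff_X_pow_mul', coeff_X_mul',
      coeff_derivative,
      show (4:ℕ) ≤ 2*k+5 from by omega, show (3:ℕ) ≤ 2*k+5 from by omega,
      show (2:ℕ) ≤ 2*k+5 from by omega, show (1:ℕ) ≤ 2*k+5 from by omega,
      if_true,
      show 2*k+5-4 = 2*k+1 from by omega, show 2*k+5-3 = 2*k+2 from by omega,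
      show 2*k+5-2 = 2*k+3 from by omega, show 2*k+5-1 = 2*k+4 from by omega,
      show 2*k+1+1+1+1 = 2*k+4 from by omega, show 2*k+2+1+1 = 2*k+4 from by omega,
      show 2*k+3+1 = 2*k+4 from by omega, show 2*k+5+1 = 2*k+6 from by omega,
      show 2*k+1+1 = 2*k+2 from by omega] at hc
    simp only [Sw, show 2*(k+2+1) = 2*k+6 from by omega, show 2*(k+2) = 2*k+4 from by omega,
      show k+2-1 = k+1 from by omega, show 2*(k+1) = 2*k+2 from by omega,
      if_pos (by omega : 2 ≤ k+2+1)]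
    push_cast at hc ⊢
    linear_combination -hc

lemma Sw_zero (hw0 : w 0 = 1) : Sw w 0 = 1 := by
  simp [Sw, PowerSeries.coeff_mul, Finset.Nat.antidiagonal_zero, hw0]

lemma Sw_eq_sum (n : ℕ) :
    Sw w n = ∑ k ∈ Finset.range (2 * n + 1), (-1 : Rbc) ^ k * w k * w (2 * n - k) := by
  rw [Sw, PowerSeries.coeff_mul, Finset.Nat.sum_antidiagonal_eq_sum_range_succ_mk]
  refine Finset.sum_congr rfl fun i hi => ?_
  rw [Finset.mem_range] at hi
  simp only [coeff_mk]
  have h1 : ((-1 : Rbc)) ^ (2 * n - i) * (-1) ^ i = 1 := by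
    rw [← pow_add, show 2 * n - i + i = 2 * n from by omega, pow_mul]
    norm_num
  have h2 : ((-1 : Rbc)) ^ i * (-1) ^ i = 1 := by
    rw [← mul_pow]; norm_num
  have h3 : ((-1 : Rbc)) ^ (2 * n - i) = (-1) ^ i := by
    linear_combination ((-1 : Rbc)) ^ i * h1 - ((-1 : Rbc)) ^ (2 * n - i) * h2
  rw [h3]; ring

end

/-- The identity `uₙ = ∑_{k=0}^{2n} (-1)^k wₖ w_{2n-k}` in `ℚ[b,c]`. -/
theorem statement8
    (b c : Rbc) (hb : b = MvPolynomial.X 0) (hc : c = MvPolynomial.X 1)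
    (u w : ℕ → Rbc)
    (hu0 : u 0 = 1)
    (hurec : ∀ n : ℕ, 1 ≤ n →
      (n : Rbc) * u n =
        2 * (2 * (n : Rbc) - 1) * ((n : Rbc) * ((n : Rbc) - 1) - b) * u (n - 1)
          - 4 * c * ((n : Rbc) - 1) * (if 2 ≤ n then u (n - 2) else 0))
    (hw0 : w 0 = 1)
    (hwrec : ∀ n : ℕ, 1 ≤ n →
      (n : Rbc) * w n =
        -((n : Rbc) * ((n : Rbc) - 1) - b) * w (n - 1)
          + c * (if 3 ≤ n then w (n - 3) else 0)) :
    ∀ n : ℕ,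
      u n = ∑ k ∈ Finset.range (2 * n + 1), (-1 : Rbc) ^ k * w k * w (2 * n - k) := by
  have key : ∀ n : ℕ, u n = Sw w n := by
    intro n
    induction n using Nat.strong_induction_on with
    | _ n ih => ?_
    rcases n with _ | k
    · rw [hu0, Sw_zero w hw0]
    · have hne : (2 * ((k : Rbc) + 1)) ≠ 0 := by
        have h := Nat.cast_ne_zero (R := Rbc).mpr (show 2 * k + 2 ≠ 0 by omega)
        push_cast at h
        intro he
        exact h (by linear_combination he)
      apply mul_left_cancel₀ hne
      rw [srec b c w hwrec k]
      have hu := hurec (k + 1) (by omega)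
      rw [show k + 1 - 1 = k from by omega, show k + 1 - 2 = k - 1 from by omega] at hu
      push_cast at hu
      rw [← ih k (by omega)]
      by_cases hk : 1 ≤ k
      · rw [if_pos hk] at hu
        rw [if_pos (show 2 ≤ k + 1 by omega)]
        rw [← ih (k - 1) (by omega)]
        linear_combination 2 * hu
      · rw [if_neg hk] at hu
        rw [if_neg (show ¬ 2 ≤ k + 1 by omega)]
        linear_combination 2 * hu
  intro n
  rw [key n, Sw_eq_sum]
end

section
/- If Q_i(t) = t for all i = 1, …, d, then for every m ∈ ℤ_{≥0}^d the rational function ⟨Q⟩_m is the constant 4^{-M} · C(2M,M) · M!/(m_1!⋯m_d!), where M = m_1 + … + m_d; equivalently, Σ_{m∈ℤ_{≥0}^d} ⟨Q⟩_m z^m = (1 - z_1 - … - z_d)^{-1/2} as formal power series. -/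
private lemma core12 {K : Type*} [Field K] [CharZero K] (N a : ℕ) (P : K) (hP : P ≠ 0) :
    ((2*N+1 : ℕ) : K) * ((Nat.choose (2*N) N : K) * (N.factorial : K) /
        ((4:K)^N * ((a.factorial : K) * P)))
  = ((2*(a+1) : ℕ) : K) * ((Nat.choose (2*(N+1)) (N+1) : K) * ((N+1).factorial : K) /
        ((4:K)^(N+1) * (((a+1).factorial : K) * P))) := by
  have hnat : ((N+1) * Nat.choose (2*(N+1)) (N+1) : ℕ) = 2*(2*N+1)*Nat.choose (2*N) N :=
    Nat.succ_mul_centralBinom_succ N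
  have h4 : (4:K) ≠ 0 := by
    have : ((4:ℕ) : K) ≠ 0 := Nat.cast_ne_zero.mpr (by norm_num)
    simpa using this
  have h4N : (4:K)^N ≠ 0 := pow_ne_zero _ h4
  have hfa : ((a.factorial : K)) ≠ 0 := Nat.cast_ne_zero.mpr a.factorial_ne_zero
  have hd1 : (4:K)^N * ((a.factorial : K) * P) ≠ 0 :=
    mul_ne_zero h4N (mul_ne_zero hfa hP)
  have hd2 : (4:K)^(N+1) * (((a+1).factorial : K) * P) ≠ 0 :=
    mul_ne_zero (pow_ne_zero _ h4)
      (mul_ne_zero (Nat.cast_ne_zero.mpr (Nat.factorial_ne_zero _)) hP)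
  rw [mul_div_assoc', mul_div_assoc', div_eq_div_iff hd1 hd2]
  rw [Nat.factorial_succ, Nat.factorial_succ]
  generalize Nat.choose (2*N) N = A at hnat ⊢
  generalize Nat.choose (2*(N+1)) (N+1) = B at hnat ⊢
  have hK : ((N:K)+1) * (B : K) = 2*(2*(N:K)+1)*(A : K) := by
    exact_mod_cast congrArg (Nat.cast : ℕ → K) hnat
  push_cast
  linear_combination ((-2 : K) * ((a:K)+1) * (N.factorial : K) * (a.factorial : K) * P * (4:K)^N) * hK

private lemma keyK12 {K : Type*} [Field K] [CharZero K] {d : ℕ} (b : Fin d → ℕ) (i : Fin d) :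
    ((2*(∑ j, b j)+1 : ℕ) : K) *
      ((Nat.choose (2*∑ j, b j) (∑ j, b j) : K) * ((∑ j, b j).factorial : K) /
       ((4:K)^(∑ j, b j) * ∏ j, ((b j).factorial : K)))
  = ((2*(b i + 1) : ℕ) : K) *
      ((Nat.choose (2*(∑ j, Function.update b i (b i + 1) j))
          (∑ j, Function.update b i (b i + 1) j) : K) *
        ((∑ j, Function.update b i (b i + 1) j).factorial : K) /
       ((4:K)^(∑ j, Function.update b i (b i + 1) j) *
        ∏ j, ((Function.update b i (b i + 1) j).factorial : K))) := by
  have hsum : ∑ j, Function.update b i (b i + 1) j = (∑ j, b j) + 1 := by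
    rw [Finset.sum_update_of_mem (Finset.mem_univ i), Finset.sdiff_singleton_eq_erase,
      ← Finset.add_sum_erase _ b (Finset.mem_univ i)]
    ring
  have hprod : (∏ j, ((Function.update b i (b i + 1) j).factorial : K))
      = (((b i + 1).factorial : K)) * ∏ j ∈ Finset.univ.erase i, ((b j).factorial : K) := by
    rw [← Finset.mul_prod_erase _ _ (Finset.mem_univ i), Function.update_self]
    congr 1
    exact Finset.prod_congr rfl fun j hj => by
      rw [Function.update_of_ne (Finset.ne_of_mem_erase hj)]
  have hprodb : (∏ j, ((b j).factorial : K))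
      = ((b i).factorial : K) * ∏ j ∈ Finset.univ.erase i, ((b j).factorial : K) :=
    (Finset.mul_prod_erase _ _ (Finset.mem_univ i)).symm
  have hP : (∏ j ∈ Finset.univ.erase i, ((b j).factorial : K)) ≠ 0 :=
    Finset.prod_ne_zero_iff.mpr fun j _ => Nat.cast_ne_zero.mpr (Nat.factorial_ne_zero _)
  rw [hsum, hprod, hprodb]
  exact core12 (∑ j, b j) (b i) _ hP

/-- If `Qᵢ(t) = t` for all `i = 1, …, d`, then for every `m ∈ ℤ_{≥0}^d` the rational
function `⟨Q⟩ₘ` equals the constant `4^{-M}·C(2M,M)·M!/(m₁!⋯m_d!)`, where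
`M = m₁ + … + m_d` (equivalently, `∑ₘ ⟨Q⟩ₘ zᵐ = (1 - z₁ - … - z_d)^{-1/2}`). -/
theorem statement12
    (d : ℕ) (hd : 1 ≤ d)
    (Q : Fin d → Polynomial ℤ)
    (hQ : ∀ i, Q i = Polynomial.X)
    (K : Type*) [Field K]
    [Algebra (MvPolynomial (Fin d) ℚ) K] [IsFractionRing (MvPolynomial (Fin d) ℚ) K]
    (x : Fin d → K)
    (hx : ∀ i, x i = algebraMap (MvPolynomial (Fin d) ℚ) K (MvPolynomial.X i))
    (F : (Fin d → ℤ) → K)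
    (hF0 : F 0 = 1)
    (hFneg : ∀ m : Fin d → ℤ, (∃ i, m i < 0) → F m = 0)
    (hFrec : ∀ m : Fin d → ℤ, (∀ i, 0 ≤ m i) → m ≠ 0 →
      (∑ i, (m i : K) * x i) * F m =
        ∑ i, Polynomial.aeval ((∑ j, (m j : K) * x j) - x i / 2) (Q i) *
          F (m - Pi.single i 1)) :
    ∀ m : Fin d → ℤ, (∀ i, 0 ≤ m i) →
      F m = ((Nat.choose (2 * (∑ i, m i).toNat) (∑ i, m i).toNat : K) *
              ((∑ i, m i).toNat.factorial : K)) /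
            ((4 : K) ^ (∑ i, m i).toNat * ∏ i, ((m i).toNat.factorial : K)) := by
  have hinj : Function.Injective (algebraMap (MvPolynomial (Fin d) ℚ) K) :=
    IsFractionRing.injective _ _
  have hchar : CharZero K := charZero_of_injective_algebraMap hinj
  suffices H : ∀ N : ℕ, ∀ m : Fin d → ℤ, (∀ i, 0 ≤ m i) → (∑ i, m i).toNat = N →
      F m = ((Nat.choose (2 * (∑ i, m i).toNat) (∑ i, m i).toNat : K) *
              ((∑ i, m i).toNat.factorial : K)) /
            ((4 : K) ^ (∑ i, m i).toNat * ∏ i, ((m i).toNat.factorial : K)) by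
    intro m hm; exact H _ m hm rfl
  intro N
  induction N using Nat.strong_induction_on with
  | _ N ih =>
  intro m hm hNt
  have hNsum : ∑ j, (m j).toNat = N := by
    have h1 : ((∑ j, (m j).toNat : ℕ) : ℤ) = ∑ j, m j := by
      rw [Nat.cast_sum]
      exact Finset.sum_congr rfl fun j _ => Int.toNat_of_nonneg (hm j)
    omega
  rw [hNt]
  rcases Nat.eq_zero_or_pos N with hN0 | hNpos
  · -- base case
    subst hN0
    have hm0 : m = 0 := by
      funext i
      show m i = (0 : ℤ)
      have : (m i).toNat = 0 := by
        have := Finset.sum_eq_zero_iff.mp hNsum i (Finset.mem_univ i)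
        omega
      have := hm i; omega
    rw [hm0, hF0]
    simp
  · -- inductive step
    obtain ⟨N', rfl⟩ : ∃ N', N = N' + 1 := ⟨N - 1, by omega⟩
    set L : K := ∑ i, (m i : K) * x i with hL_def
    -- m ≠ 0
    obtain ⟨i₀, hi₀⟩ : ∃ i, (m i).toNat ≠ 0 := by
      by_contra h
      push_neg at h
      rw [Finset.sum_eq_zero (fun j _ => h j)] at hNsum
      omega
    have hm0 : m ≠ 0 := by
      intro h
      rw [h] at hi₀
      simp at hi₀
    have hrec := hFrec m hm hm0
    simp only [hQ, Polynomial.aeval_X] at hrec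
    -- the claimed value
    set E : K := ((Nat.choose (2 * (N'+1)) (N'+1) : K) * ((N'+1).factorial : K)) /
        ((4 : K) ^ (N'+1) * ∏ j, ((m j).toNat.factorial : K)) with hE_def
    -- key per-coordinate fact
    have hkey : ∀ i, ((2*N'+1 : ℕ) : K) * F (m - Pi.single i 1)
        = ((2 * (m i).toNat : ℕ) : K) * E := by
      intro i
      rcases Nat.eq_zero_or_pos ((m i).toNat) with hzero | hpos
      · have hFz : F (m - Pi.single i 1) = 0 := by
          apply hFneg
          refine ⟨i, ?_⟩
          have : m i = 0 := by have := hm i; omega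
          simp [this]
        rw [hFz, hzero]
        simp
      · -- m i ≥ 1
        set b : Fin d → ℕ := Function.update (fun j => (m j).toNat) i ((m i).toNat - 1) with hb_def
        have hb_at : ∀ j, (((m - Pi.single i 1 : Fin d → ℤ)) j).toNat = b j := by
          intro j
          by_cases hji : j = i
          · subst hji
            simp [hb_def, Function.update_self]
          · simp [hb_def, Function.update_of_ne hji, Pi.single_eq_of_ne hji]
        have hmsub_nonneg : ∀ j, 0 ≤ ((m - Pi.single i 1 : Fin d → ℤ)) j := by
          intro j
          by_cases hji : j = i
          · subst hji; simp; omega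
          · simp [Pi.single_eq_of_ne hji]; exact hm j
        have hupd : Function.update b i (b i + 1) = fun j => (m j).toNat := by
          funext j
          by_cases hji : j = i
          · subst hji
            simp only [Function.update_self, hb_def]
            omega
          · simp [hb_def, Function.update_of_ne hji]
        have hsumb : ∑ j, b j = N' := by
          have h1 : ∑ j, Function.update b i (b i + 1) j = (∑ j, b j) + 1 := by
            rw [Finset.sum_update_of_mem (Finset.mem_univ i), Finset.sdiff_singleton_eq_erase,
              ← Finset.add_sum_erase _ b (Finset.mem_univ i)]
            ring
          simp only [hupd] at h1
          omega
        have hsub_sum : (∑ j, ((m - Pi.single i 1 : Fin d → ℤ)) j).toNat = N' := by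
          have h1 : ((∑ j, (((m - Pi.single i 1 : Fin d → ℤ)) j).toNat : ℕ) : ℤ)
              = ∑ j, ((m - Pi.single i 1 : Fin d → ℤ)) j := by
            rw [Nat.cast_sum]
            exact Finset.sum_congr rfl fun j _ => Int.toNat_of_nonneg (hmsub_nonneg j)
          have h2 : ∑ j, (((m - Pi.single i 1 : Fin d → ℤ)) j).toNat = N' := by
            rw [Finset.sum_congr rfl fun j _ => hb_at j]; exact hsumb
          omega
        have hIH := ih N' (by omega) (m - Pi.single i 1) hmsub_nonneg hsub_sum
        rw [hsub_sum] at hIH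
        have hIH' : F (m - Pi.single i 1)
            = (Nat.choose (2*N') N' : K) * (N'.factorial : K) /
              ((4:K)^N' * ∏ j, ((b j).factorial : K)) := by
          rw [hIH]
          congr 1
          congr 1
          exact Finset.prod_congr rfl fun j _ => by rw [hb_at j]
        have hbi : b i + 1 = (m i).toNat := by
          rw [hb_def, Function.update_self]; omega
        have hk := keyK12 (K := K) b i
        simp only [hupd] at hk
        simp only [hsumb, hNsum, hbi] at hk
        rw [hIH', hk, hE_def]
    -- now combine
    have h2N : ((2*N'+1 : ℕ) : K) ≠ 0 := Nat.cast_ne_zero.mpr (by omega)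
    -- L ≠ 0
    have hLne : L ≠ 0 := by
      set p : MvPolynomial (Fin d) ℚ := ∑ j, ((m j).toNat : MvPolynomial (Fin d) ℚ) * MvPolynomial.X j with hp_def
      have hpL : algebraMap (MvPolynomial (Fin d) ℚ) K p = L := by
        rw [hp_def, map_sum]
        refine Finset.sum_congr rfl fun j _ => ?_
        rw [map_mul, map_natCast, hx j]
        have : (m j : K) = ((m j).toNat : K) := by
          have := Int.toNat_of_nonneg (hm j)
          exact_mod_cast congrArg (Int.cast : ℤ → K) this.symm
        rw [this]
      have hp0 : p ≠ 0 := by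
        intro h
        have := congrArg (MvPolynomial.eval (fun _ => (1:ℚ))) h
        rw [hp_def] at this
        simp [hNsum] at this
        have h2 : ∑ j, (m j).toNat = 0 := by exact_mod_cast this
        omega
      rw [← hpL]
      intro h
      exact hp0 (hinj (by simpa using h))
    -- sums in K
    have hsx : ∑ j, ((m j).toNat : K) * x j = L := by
      refine Finset.sum_congr rfl fun j _ => ?_
      have := Int.toNat_of_nonneg (hm j)
      have h2 : ((m j).toNat : K) = (m j : K) := by exact_mod_cast congrArg (Int.cast : ℤ → K) this
      rw [h2]
    have hsn : ∑ j, ((m j).toNat : K) = ((N'+1 : ℕ) : K) := by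
      rw [← Nat.cast_sum, hNsum]
    have step : ((2*N'+1 : ℕ) : K) * (L * F m) = ((2*N'+1 : ℕ) : K) * (L * E) := by
      rw [← hL_def] at hrec
      calc ((2*N'+1 : ℕ) : K) * (L * F m)
          = ((2*N'+1 : ℕ) : K) * ∑ j, (L - x j / 2) * F (m - Pi.single j 1) := by rw [hrec]
        _ = ∑ j, (L - x j / 2) * (((2*N'+1 : ℕ) : K) * F (m - Pi.single j 1)) := by
            rw [Finset.mul_sum]; exact Finset.sum_congr rfl fun j _ => by ring
        _ = ∑ j, (L - x j / 2) * (((2 * (m j).toNat : ℕ) : K) * E) :=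
            Finset.sum_congr rfl fun j _ => by rw [hkey j]
        _ = ∑ j, ((2*L*E) * ((m j).toNat : K) - E * (((m j).toNat : K) * x j)) :=
            Finset.sum_congr rfl fun j _ => by push_cast; ring
        _ = (2*L*E) * (∑ j, ((m j).toNat : K)) - E * ∑ j, ((m j).toNat : K) * x j := by
            rw [Finset.sum_sub_distrib, ← Finset.mul_sum, ← Finset.mul_sum]
        _ = (2*L*E) * ((N'+1 : ℕ) : K) - E * L := by rw [hsn, hsx]
        _ = ((2*N'+1 : ℕ) : K) * (L * E) := by push_cast; ring
    exact mul_left_cancel₀ hLne (mul_left_cancel₀ h2N step)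
end

section
/- For any d ≥ 1 and any odd polynomials Q_1, …, Q_d ∈ t·ℤ[t²], there exists a constant C ∈ ℕ such that for every m ∈ ℤ_{≥0}^d one has 2^{C·(m_1+…+m_d)} · ⟨Q⟩_m ∈ ℤ[x_1, …, x_d]; that is, the power of 2 in the denominator of ⟨Q⟩_m grows at most linearly in m_1 + … + m_d. -/
open Finset Polynomial

/-- `S(α,β) = (Q(α)+Q(β))/(α+β)` as a polynomial expression. -/
noncomputable def st13S {K : Type*} [Field K] (Q : Polynomial ℤ) (D : ℕ) (α β : K) : K :=
  ∑ k ∈ Finset.range (D + 1), ((Q.coeff k : ℤ) : K) *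
    ∑ r ∈ Finset.range k, α ^ r * (-β) ^ (k - 1 - r)

lemma st13_aeval_neg {K : Type*} [Field K] (Q : Polynomial ℤ)
    (hodd : ∀ k : ℕ, Q.coeff (2 * k) = 0) (β : K) :
    Polynomial.aeval (-β) Q = - Polynomial.aeval β Q := by
  rw [Polynomial.aeval_eq_sum_range, Polynomial.aeval_eq_sum_range, ← Finset.sum_neg_distrib]
  refine Finset.sum_congr rfl fun k _ => ?_
  rcases Nat.even_or_odd k with ⟨t, ht⟩ | hk
  · have : Q.coeff k = 0 := by rw [ht, ← two_mul]; exact hodd t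
    simp [this]
  · rw [hk.neg_pow]
    simp [smul_neg]

lemma st13S_mul {K : Type*} [Field K] (Q : Polynomial ℤ)
    (hodd : ∀ k : ℕ, Q.coeff (2 * k) = 0) (D : ℕ) (hD : Q.natDegree < D + 1) (α β : K) :
    (α + β) * st13S Q D α β = Polynomial.aeval α Q + Polynomial.aeval β Q := by
  have h1 : (α + β) * st13S Q D α β
      = ∑ k ∈ Finset.range (D + 1), ((Q.coeff k : ℤ) : K) * (α ^ k - (-β) ^ k) := by
    rw [st13S, Finset.mul_sum]
    refine Finset.sum_congr rfl fun k _ => ?_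
    have h := geom_sum₂_mul (R := K) α (-β) k
    rw [sub_neg_eq_add] at h
    rw [mul_comm ((α:K)+β), mul_assoc, h]
  rw [h1]
  have h2 : Polynomial.aeval α Q = ∑ k ∈ Finset.range (D + 1), ((Q.coeff k : ℤ) : K) * α ^ k := by
    rw [Polynomial.aeval_eq_sum_range' hD]
    refine Finset.sum_congr rfl fun k _ => ?_
    rw [zsmul_eq_mul]
  have h3 : Polynomial.aeval (-β) Q
      = ∑ k ∈ Finset.range (D + 1), ((Q.coeff k : ℤ) : K) * (-β) ^ k := by
    rw [Polynomial.aeval_eq_sum_range' hD]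
    refine Finset.sum_congr rfl fun k _ => ?_
    rw [zsmul_eq_mul]
  rw [st13_aeval_neg Q hodd β] at h3
  have : Polynomial.aeval β Q
      = - ∑ k ∈ Finset.range (D + 1), ((Q.coeff k : ℤ) : K) * (-β) ^ k := by
    rw [← h3]; ring
  rw [h2, this, ← sub_eq_add_neg, ← Finset.sum_sub_distrib]
  exact Finset.sum_congr rfl fun k _ => by ring

/-- 2-integrality of `st13S`. -/
lemma st13S_mem {K : Type*} [Field K] (A : Subalgebra ℤ K) (Q : Polynomial ℤ) (D : ℕ)
    (α β : K) (hα : 2 * α ∈ A) (hβ : 2 * β ∈ A) :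
    (2 : K) ^ D * st13S Q D α β ∈ A := by
  rw [st13S, Finset.mul_sum]
  refine Subalgebra.sum_mem A fun k hk => ?_
  rw [Finset.mem_range] at hk
  have hcast : ((Q.coeff k : ℤ) : K) ∈ A := by
    simpa using A.algebraMap_mem (Q.coeff k)
  rw [show (2:K)^D * (((Q.coeff k : ℤ) : K) * ∑ r ∈ Finset.range k, α ^ r * (-β) ^ (k - 1 - r))
      = ((Q.coeff k : ℤ) : K) * ∑ r ∈ Finset.range k, (2:K)^D * (α ^ r * (-β) ^ (k - 1 - r))
      from by simp only [Finset.mul_sum]; exact Finset.sum_congr rfl fun r _ => by ring]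
  refine A.mul_mem hcast (Subalgebra.sum_mem A fun r hr => ?_)
  rw [Finset.mem_range] at hr
  have hexp : D = (D + 1 - k) + r + (k - 1 - r) := by omega
  rw [show (2:K)^D * (α ^ r * (-β) ^ (k - 1 - r))
      = (2:K)^(D+1-k) * ((2*α)^r * (2*(-β))^(k-1-r)) from by
    rw [mul_pow, mul_pow, show ((2:K)^D = (2:K)^(D+1-k) * ((2:K)^r * (2:K)^(k-1-r))) from by
      rw [← pow_add, ← pow_add]; congr 1; omega]
    ring]
  have h2 : (2:K) ∈ A := by simpa using A.algebraMap_mem (2:ℤ)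
  have hβ' : 2 * (-β) ∈ A := by rw [mul_neg]; exact A.neg_mem hβ
  exact A.mul_mem (A.pow_mem h2 _)
    (A.mul_mem (A.pow_mem hα _) (A.pow_mem hβ' _))

open Finset Polynomial

section
variable {d : ℕ} {K : Type*} [Field K]

noncomputable def st13ip (x : Fin d → K) (v : Fin d → ℤ) : K := ∑ j, (v j : K) * x j

lemma st13ip_add (x : Fin d → K) (a b : Fin d → ℤ) :
    st13ip x (a + b) = st13ip x a + st13ip x b := by
  simp only [st13ip, Pi.add_apply, Int.cast_add, add_mul, Finset.sum_add_distrib]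

lemma st13ip_single (x : Fin d → K) (i : Fin d) : st13ip x (Pi.single i 1) = x i := by
  rw [st13ip, Finset.sum_eq_single i]
  · simp
  · intro j _ hj; rw [Pi.single_eq_of_ne hj]; simp
  · simp

lemma st13ip_zero (x : Fin d → K) : st13ip x 0 = 0 := by simp [st13ip]

lemma st13_sum_reflect (v : Fin d → ℤ) (f : (Fin d → ℤ) → K) :
    ∑ a ∈ Finset.Icc (0 : Fin d → ℤ) v, f a
      = ∑ a ∈ Finset.Icc (0 : Fin d → ℤ) v, f (v - a) := by
  refine Finset.sum_nbij' (fun a => v - a) (fun a => v - a) ?_ ?_ ?_ ?_ ?_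
  · intro a ha
    rw [Finset.mem_Icc] at ha ⊢
    exact ⟨sub_nonneg.2 ha.2, sub_le_self _ ha.1⟩
  · intro a ha
    rw [Finset.mem_Icc] at ha ⊢
    exact ⟨sub_nonneg.2 ha.2, sub_le_self _ ha.1⟩
  · intro a _; simp
  · intro a _; simp
  · intro a _
    show f a = f (v - (v - a))
    rw [sub_sub_cancel]

lemma st13_sum_shift [CharZero K] (x : Fin d → K) (Qi : Polynomial ℤ) (F : (Fin d → ℤ) → K)
    (hFneg : ∀ v : Fin d → ℤ, (∃ i, v i < 0) → F v = 0) (m : Fin d → ℤ) (i : Fin d) :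
    ∑ a ∈ Finset.Icc (0 : Fin d → ℤ) m,
        Polynomial.aeval (st13ip x a - x i / 2) Qi * F (a - Pi.single i 1) * F (m - a)
      = ∑ b ∈ Finset.Icc (0 : Fin d → ℤ) (m - Pi.single i 1),
        Polynomial.aeval (st13ip x b + x i / 2) Qi * F b * F (m - Pi.single i 1 - b) := by
  have hfil : ∑ a ∈ Finset.Icc (0 : Fin d → ℤ) m,
        Polynomial.aeval (st13ip x a - x i / 2) Qi * F (a - Pi.single i 1) * F (m - a)
      = ∑ a ∈ (Finset.Icc (0 : Fin d → ℤ) m).filter (fun a => 1 ≤ a i),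
        Polynomial.aeval (st13ip x a - x i / 2) Qi * F (a - Pi.single i 1) * F (m - a) := by
    have hvan : ∀ a ∈ Finset.Icc (0 : Fin d → ℤ) m,
        Polynomial.aeval (st13ip x a - x i / 2) Qi * F (a - Pi.single i 1) * F (m - a) ≠ 0 →
        1 ≤ a i := by
      intro a ha hne
      by_contra h
      push_neg at h
      rw [Finset.mem_Icc, Pi.le_def, Pi.le_def] at ha
      have h0 : ((a - Pi.single i 1 : Fin d → ℤ)) i < 0 := by
        have h1 := ha.1 i
        simp only [Pi.zero_apply] at h1
        simp only [Pi.sub_apply, Pi.single_eq_same]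
        omega
      exact hne (by rw [hFneg _ ⟨i, h0⟩, mul_zero, zero_mul])
    exact (Finset.sum_filter_of_ne hvan).symm
  rw [hfil]
  refine Finset.sum_nbij' (fun a => a - Pi.single i 1) (fun b => b + Pi.single i 1)
    ?_ ?_ ?_ ?_ ?_
  · intro a ha
    simp only [Finset.mem_filter, Finset.mem_Icc, Pi.le_def] at ha ⊢
    obtain ⟨⟨h1, h2⟩, h3⟩ := ha
    constructor
    · intro j
      rcases eq_or_ne j i with rfl | hji
      · simp only [Pi.zero_apply, Pi.sub_apply, Pi.single_eq_same]; omega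
      · have := h1 j
        simp only [Pi.zero_apply, Pi.sub_apply, Pi.single_eq_of_ne hji] at *
        omega
    · intro j
      rcases eq_or_ne j i with rfl | hji
      · have := h2 j
        simp only [Pi.sub_apply, Pi.single_eq_same]
        omega
      · have := h2 j
        simp only [Pi.sub_apply, Pi.single_eq_of_ne hji]
        omega
  · intro b hb
    simp only [Finset.mem_filter, Finset.mem_Icc, Pi.le_def] at hb ⊢
    obtain ⟨h1, h2⟩ := hb
    refine ⟨⟨fun j => ?_, fun j => ?_⟩, ?_⟩
    · rcases eq_or_ne j i with rfl | hji
      · have := h1 j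
        simp only [Pi.zero_apply, Pi.sub_apply, Pi.single_eq_same, Pi.add_apply] at *
        omega
      · have := h1 j
        simp only [Pi.zero_apply, Pi.sub_apply, Pi.single_eq_of_ne hji, Pi.add_apply] at *
        omega
    · rcases eq_or_ne j i with rfl | hji
      · have := h2 j
        simp only [Pi.sub_apply, Pi.single_eq_same, Pi.add_apply] at *
        omega
      · have := h2 j
        simp only [Pi.sub_apply, Pi.single_eq_of_ne hji, Pi.add_apply] at *
        omega
    · simp only [Pi.add_apply, Pi.single_eq_same]
      have := h1 i
      simp only [Pi.zero_apply, Pi.sub_apply, Pi.single_eq_same] at this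
      omega
  · intro a _; show a - Pi.single i 1 + Pi.single i 1 = a; ring
  · intro b _; show b + Pi.single i 1 - Pi.single i 1 = b; ring
  · intro a _
    show Polynomial.aeval (st13ip x a - x i / 2) Qi * F (a - Pi.single i 1) * F (m - a)
      = Polynomial.aeval (st13ip x (a - Pi.single i 1) + x i / 2) Qi * F (a - Pi.single i 1)
        * F (m - Pi.single i 1 - (a - Pi.single i 1))
    have harg : st13ip x a - x i / 2 = st13ip x (a - Pi.single i 1) + x i / 2 := by
      have h := st13ip_add x (a - Pi.single i 1) (Pi.single i 1)
      rw [show a - Pi.single i 1 + Pi.single i 1 = a from by ring] at h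
      rw [h, st13ip_single, add_sub_assoc, sub_half]
    have hidx : m - Pi.single i 1 - (a - Pi.single i 1) = m - a := by ring
    rw [harg, hidx]
end

/-- For odd polynomials `Q 1, …, Q d ∈ t·ℤ[t²]`, there is a constant `C ∈ ℕ` such that
`2^{C·(m₁+…+m_d)}·⟨Q⟩ₘ ∈ ℤ[x₁,…,x_d]` for every `m ∈ ℤ_{≥0}^d`; i.e. the power of `2`
in the denominator of `⟨Q⟩ₘ` grows at most linearly in `m₁ + … + m_d`. -/
theorem statement13
    (d : ℕ) (hd : 1 ≤ d)
    (Q : Fin d → Polynomial ℤ)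
    (hQodd : ∀ i, ∀ k : ℕ, (Q i).coeff (2 * k) = 0)
    (K : Type*) [Field K]
    [Algebra (MvPolynomial (Fin d) ℚ) K] [IsFractionRing (MvPolynomial (Fin d) ℚ) K]
    (x : Fin d → K)
    (hx : ∀ i, x i = algebraMap (MvPolynomial (Fin d) ℚ) K (MvPolynomial.X i))
    (F : (Fin d → ℤ) → K)
    (hF0 : F 0 = 1)
    (hFneg : ∀ m : Fin d → ℤ, (∃ i, m i < 0) → F m = 0)
    (hFrec : ∀ m : Fin d → ℤ, (∀ i, 0 ≤ m i) → m ≠ 0 →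
      (∑ i, (m i : K) * x i) * F m =
        ∑ i, Polynomial.aeval ((∑ j, (m j : K) * x j) - x i / 2) (Q i) *
          F (m - Pi.single i 1)) :
    ∃ C : ℕ, ∀ m : Fin d → ℤ, (∀ i, 0 ≤ m i) →
      (2 : K) ^ (C * (∑ i, m i).toNat) * F m ∈ Algebra.adjoin ℤ (Set.range x) := by
  classical
  have hinj : Function.Injective (algebraMap (MvPolynomial (Fin d) ℚ) K) :=
    IsFractionRing.injective _ _
  haveI : CharZero K := charZero_of_injective_algebraMap hinj
  have h2ne : (2 : K) ≠ 0 := two_ne_zero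
  set A := Algebra.adjoin ℤ (Set.range x) with hAdef
  have hxmem : ∀ j, x j ∈ A := fun j => Algebra.subset_adjoin ⟨j, rfl⟩
  have hint : ∀ n : ℤ, ((n : K)) ∈ A := fun n => by
    simpa using A.algebraMap_mem n
  have h2A : (2 : K) ∈ A := by simpa using hint 2
  have hipmem : ∀ v : Fin d → ℤ, st13ip x v ∈ A := fun v =>
    Subalgebra.sum_mem A fun j _ => A.mul_mem (hint (v j)) (hxmem j)
  obtain ⟨D, hD⟩ : ∃ D : ℕ, ∀ i, (Q i).natDegree < D + 1 :=
    ⟨Finset.univ.sup fun i => (Q i).natDegree, fun i =>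
      Nat.lt_succ_of_le (Finset.le_sup (f := fun i => (Q i).natDegree) (Finset.mem_univ i))⟩
  obtain ⟨C, hCdef⟩ : ∃ C : ℕ, C = D + 4 := ⟨D + 4, rfl⟩
  -- the inner product is nonzero for m ≥ 0, m ≠ 0
  have hip_ne : ∀ m : Fin d → ℤ, (∀ i, 0 ≤ m i) → m ≠ 0 → st13ip x m ≠ 0 := by
    intro m hm hm0
    obtain ⟨i0, hi0⟩ : ∃ i0, m i0 ≠ 0 := by
      by_contra h
      push_neg at h
      exact hm0 (funext fun i => h i)
    have hrepr : st13ip x m = algebraMap (MvPolynomial (Fin d) ℚ) K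
        (∑ j, (m j : MvPolynomial (Fin d) ℚ) * MvPolynomial.X j) := by
      rw [st13ip, map_sum]
      refine Finset.sum_congr rfl fun j _ => ?_
      rw [map_mul, hx j, map_intCast]
    rw [hrepr]
    intro hzero
    have hP : (∑ j, (m j : MvPolynomial (Fin d) ℚ) * MvPolynomial.X j) = 0 := by
      apply hinj
      rw [hzero, map_zero]
    have heval := congrArg (MvPolynomial.eval (Pi.single i0 (1 : ℚ))) hP
    simp only [map_sum, map_mul, MvPolynomial.eval_X, map_intCast, map_zero] at heval
    rw [Finset.sum_eq_single i0 (fun j _ hj => by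
        rw [Pi.single_eq_of_ne hj, mul_zero]) (fun h => absurd (Finset.mem_univ i0) h)]
      at heval
    rw [Pi.single_eq_same, mul_one] at heval
    exact hi0 (by exact_mod_cast heval)
  -- recursion including m = 0
  have recAll : ∀ a : Fin d → ℤ, (∀ i, 0 ≤ a i) →
      st13ip x a * F a = ∑ i, Polynomial.aeval (st13ip x a - x i / 2) (Q i) *
        F (a - Pi.single i 1) := by
    intro a ha
    by_cases h0 : a = 0
    · subst h0
      rw [st13ip_zero, zero_mul]
      symm
      refine Finset.sum_eq_zero fun i _ => ?_
      have hneg : (((0 : Fin d → ℤ) - Pi.single i 1 : Fin d → ℤ)) i < 0 := by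
        simp only [Pi.sub_apply, Pi.zero_apply, Pi.single_eq_same]
        omega
      rw [hFneg _ ⟨i, hneg⟩, mul_zero]
    · simpa only [st13ip] using hFrec a ha h0
  -- the key quadratic identity
  have h_star : ∀ m : Fin d → ℤ, (∀ i, 0 ≤ m i) → m ≠ 0 →
      ∑ a ∈ Finset.Icc (0 : Fin d → ℤ) m, F a * F (m - a)
        = ∑ i, ∑ a ∈ Finset.Icc (0 : Fin d → ℤ) (m - Pi.single i 1),
            st13S (Q i) D (st13ip x a + x i / 2)
              (st13ip x (m - Pi.single i 1 - a) + x i / 2) *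
            (F a * F (m - Pi.single i 1 - a)) := by
    intro m hm hm0
    apply mul_left_cancel₀ (hip_ne m hm hm0)
    have key : st13ip x m * ∑ a ∈ Finset.Icc (0 : Fin d → ℤ) m, F a * F (m - a)
        = 2 * ∑ i, ∑ b ∈ Finset.Icc (0 : Fin d → ℤ) (m - Pi.single i 1),
            Polynomial.aeval (st13ip x b + x i / 2) (Q i) * F b *
              F (m - Pi.single i 1 - b) := by
      calc st13ip x m * ∑ a ∈ Finset.Icc (0 : Fin d → ℤ) m, F a * F (m - a)
          = ∑ a ∈ Finset.Icc (0 : Fin d → ℤ) m,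
              (st13ip x a * F a * F (m - a) + st13ip x (m - a) * F a * F (m - a)) := by
            rw [Finset.mul_sum]
            refine Finset.sum_congr rfl fun a _ => ?_
            have h1 : st13ip x a + st13ip x (m - a) = st13ip x m := by
              rw [← st13ip_add]
              congr 1
              ring
            rw [← h1]
            ring
        _ = ∑ a ∈ Finset.Icc (0 : Fin d → ℤ) m, st13ip x a * F a * F (m - a)
            + ∑ a ∈ Finset.Icc (0 : Fin d → ℤ) m, st13ip x (m - a) * F a * F (m - a) :=
            Finset.sum_add_distrib
        _ = 2 * ∑ a ∈ Finset.Icc (0 : Fin d → ℤ) m, st13ip x a * F a * F (m - a) := by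
            rw [two_mul]
            congr 1
            rw [st13_sum_reflect m (fun a => st13ip x (m - a) * F a * F (m - a))]
            refine Finset.sum_congr rfl fun a _ => ?_
            simp only [sub_sub_cancel]
            ring
        _ = 2 * ∑ a ∈ Finset.Icc (0 : Fin d → ℤ) m,
              (∑ i, Polynomial.aeval (st13ip x a - x i / 2) (Q i) *
                F (a - Pi.single i 1)) * F (m - a) := by
            congr 1
            refine Finset.sum_congr rfl fun a ha => ?_
            rw [Finset.mem_Icc] at ha
            have ha0 : ∀ i, 0 ≤ a i := fun i => by
              have := ha.1 i
              simpa using this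
            rw [recAll a ha0]
        _ = 2 * ∑ i, ∑ a ∈ Finset.Icc (0 : Fin d → ℤ) m,
              Polynomial.aeval (st13ip x a - x i / 2) (Q i) *
                F (a - Pi.single i 1) * F (m - a) := by
            congr 1
            simp only [Finset.sum_mul]
            exact Finset.sum_comm
        _ = 2 * ∑ i, ∑ b ∈ Finset.Icc (0 : Fin d → ℤ) (m - Pi.single i 1),
              Polynomial.aeval (st13ip x b + x i / 2) (Q i) * F b *
                F (m - Pi.single i 1 - b) := by
            congr 1
            exact Finset.sum_congr rfl fun i _ => st13_sum_shift x (Q i) F hFneg m i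
    rw [key]
    symm
    have hper : ∀ i : Fin d,
        ∑ a ∈ Finset.Icc (0 : Fin d → ℤ) (m - Pi.single i 1),
            st13ip x m * (st13S (Q i) D (st13ip x a + x i / 2)
              (st13ip x (m - Pi.single i 1 - a) + x i / 2) *
              (F a * F (m - Pi.single i 1 - a)))
        = 2 * ∑ b ∈ Finset.Icc (0 : Fin d → ℤ) (m - Pi.single i 1),
            Polynomial.aeval (st13ip x b + x i / 2) (Q i) * F b *
              F (m - Pi.single i 1 - b) := by
      intro i
      have hsplit : ∀ a ∈ Finset.Icc (0 : Fin d → ℤ) (m - Pi.single i 1),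
          st13ip x m * (st13S (Q i) D (st13ip x a + x i / 2)
              (st13ip x (m - Pi.single i 1 - a) + x i / 2) *
            (F a * F (m - Pi.single i 1 - a)))
          = Polynomial.aeval (st13ip x a + x i / 2) (Q i) * (F a * F (m - Pi.single i 1 - a))
            + Polynomial.aeval (st13ip x (m - Pi.single i 1 - a) + x i / 2) (Q i) *
              (F a * F (m - Pi.single i 1 - a)) := by
        intro a _
        have hab : (st13ip x a + x i / 2) + (st13ip x (m - Pi.single i 1 - a) + x i / 2)
            = st13ip x m := by
          have h1 : st13ip x a + st13ip x (m - Pi.single i 1 - a)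
              = st13ip x (m - Pi.single i 1) := by
            rw [← st13ip_add]
            congr 1
            ring
          have h2 : st13ip x (m - Pi.single i 1) + x i = st13ip x m := by
            rw [← st13ip_single x i, ← st13ip_add]
            congr 1
            ring
          calc (st13ip x a + x i / 2) + (st13ip x (m - Pi.single i 1 - a) + x i / 2)
              = (st13ip x a + st13ip x (m - Pi.single i 1 - a)) + (x i / 2 + x i / 2) := by
                ring
            _ = st13ip x (m - Pi.single i 1) + x i := by rw [h1, add_halves]
            _ = st13ip x m := h2
        rw [← hab, ← mul_assoc, st13S_mul (Q i) (hQodd i) D (hD i), add_mul]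
      have hrefl : ∑ a ∈ Finset.Icc (0 : Fin d → ℤ) (m - Pi.single i 1),
          Polynomial.aeval (st13ip x (m - Pi.single i 1 - a) + x i / 2) (Q i) *
            (F a * F (m - Pi.single i 1 - a))
          = ∑ a ∈ Finset.Icc (0 : Fin d → ℤ) (m - Pi.single i 1),
          Polynomial.aeval (st13ip x a + x i / 2) (Q i) *
            (F (m - Pi.single i 1 - a) * F a) := by
        refine (st13_sum_reflect _ _).trans ?_
        refine Finset.sum_congr rfl fun a _ => ?_
        simp only [sub_sub_cancel]
      calc ∑ a ∈ Finset.Icc (0 : Fin d → ℤ) (m - Pi.single i 1),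
            st13ip x m * (st13S (Q i) D (st13ip x a + x i / 2)
              (st13ip x (m - Pi.single i 1 - a) + x i / 2) *
              (F a * F (m - Pi.single i 1 - a)))
          = ∑ a ∈ Finset.Icc (0 : Fin d → ℤ) (m - Pi.single i 1),
            (Polynomial.aeval (st13ip x a + x i / 2) (Q i) *
                (F a * F (m - Pi.single i 1 - a))
              + Polynomial.aeval (st13ip x (m - Pi.single i 1 - a) + x i / 2) (Q i) *
                (F a * F (m - Pi.single i 1 - a))) := Finset.sum_congr rfl hsplit
        _ = ∑ a ∈ Finset.Icc (0 : Fin d → ℤ) (m - Pi.single i 1),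
              Polynomial.aeval (st13ip x a + x i / 2) (Q i) *
                (F a * F (m - Pi.single i 1 - a))
            + ∑ a ∈ Finset.Icc (0 : Fin d → ℤ) (m - Pi.single i 1),
              Polynomial.aeval (st13ip x (m - Pi.single i 1 - a) + x i / 2) (Q i) *
                (F a * F (m - Pi.single i 1 - a)) := Finset.sum_add_distrib
        _ = ∑ a ∈ Finset.Icc (0 : Fin d → ℤ) (m - Pi.single i 1),
              Polynomial.aeval (st13ip x a + x i / 2) (Q i) *
                (F a * F (m - Pi.single i 1 - a))
            + ∑ a ∈ Finset.Icc (0 : Fin d → ℤ) (m - Pi.single i 1),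
              Polynomial.aeval (st13ip x a + x i / 2) (Q i) *
                (F (m - Pi.single i 1 - a) * F a) := by rw [hrefl]
        _ = 2 * ∑ b ∈ Finset.Icc (0 : Fin d → ℤ) (m - Pi.single i 1),
              Polynomial.aeval (st13ip x b + x i / 2) (Q i) * F b *
                F (m - Pi.single i 1 - b) := by
            rw [two_mul]
            congr 1
            · exact Finset.sum_congr rfl fun a _ => by ring
            · exact Finset.sum_congr rfl fun a _ => by ring
    calc st13ip x m * ∑ i, ∑ a ∈ Finset.Icc (0 : Fin d → ℤ) (m - Pi.single i 1),
            st13S (Q i) D (st13ip x a + x i / 2)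
              (st13ip x (m - Pi.single i 1 - a) + x i / 2) *
            (F a * F (m - Pi.single i 1 - a))
        = ∑ i, ∑ a ∈ Finset.Icc (0 : Fin d → ℤ) (m - Pi.single i 1),
            st13ip x m * (st13S (Q i) D (st13ip x a + x i / 2)
              (st13ip x (m - Pi.single i 1 - a) + x i / 2) *
              (F a * F (m - Pi.single i 1 - a))) := by
          rw [Finset.mul_sum]
          exact Finset.sum_congr rfl fun i _ => Finset.mul_sum _ _ _
      _ = ∑ i, 2 * ∑ b ∈ Finset.Icc (0 : Fin d → ℤ) (m - Pi.single i 1),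
            Polynomial.aeval (st13ip x b + x i / 2) (Q i) * F b *
              F (m - Pi.single i 1 - b) := Finset.sum_congr rfl fun i _ => hper i
      _ = 2 * ∑ i, ∑ b ∈ Finset.Icc (0 : Fin d → ℤ) (m - Pi.single i 1),
            Polynomial.aeval (st13ip x b + x i / 2) (Q i) * F b *
              F (m - Pi.single i 1 - b) := (Finset.mul_sum _ _ _).symm
  -- nonnegativity facts
  have hsumtonat : ∀ v : Fin d → ℤ, (∀ i, 0 ≤ v i) → ((((∑ i, v i).toNat : ℤ)) = ∑ i, v i) :=
    fun v hv => Int.toNat_of_nonneg (Finset.sum_nonneg fun i _ => hv i)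
  have hpos : ∀ v : Fin d → ℤ, (∀ i, 0 ≤ v i) → v ≠ 0 → 1 ≤ (∑ i, v i) := by
    intro v hv hv0
    obtain ⟨i0, hi0⟩ : ∃ i0, v i0 ≠ 0 := by
      by_contra h
      push_neg at h
      exact hv0 (funext fun i => h i)
    have h1 : 1 ≤ v i0 := by have := hv i0; omega
    calc (1 : ℤ) ≤ v i0 := h1
      _ ≤ ∑ i, v i := Finset.single_le_sum (fun i _ => hv i) (Finset.mem_univ i0)
  -- main induction
  have key : ∀ n : ℕ, ∀ m : Fin d → ℤ, (∀ i, 0 ≤ m i) → m ≠ 0 → (∑ i, m i).toNat = n →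
      (2 : K) ^ (C * n - 1) * F m ∈ A := by
    intro n
    induction n using Nat.strong_induction_on with
    | _ n IH =>
    intro m hm hm0 hn
    have hn1 : 1 ≤ n := by
      have h1 := hpos m hm hm0
      have h2 := hsumtonat m hm
      omega
    -- weak form of IH
    have Waux : ∀ a : Fin d → ℤ, (∀ i, 0 ≤ a i) → (∑ i, a i).toNat < n →
        (2 : K) ^ (C * (∑ i, a i).toNat + 1) * F a ∈ A := by
      intro a ha hlt
      by_cases h0 : a = 0
      · subst h0
        simp only [Pi.zero_apply, Finset.sum_const_zero, Int.toNat_zero, Nat.mul_zero,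
          zero_add, pow_one, hF0, mul_one]
        exact h2A
      · have hIH := IH _ hlt a ha h0 rfl
        have hna : 1 ≤ (∑ i, a i).toNat := by
          have h1 := hpos a ha h0
          have h2 := hsumtonat a ha
          omega
        have h4C : 4 ≤ C := by omega
        have hCna : C ≤ C * (∑ i, a i).toNat := Nat.le_mul_of_pos_right C (by omega)
        rw [show C * (∑ i, a i).toNat + 1 = 2 + (C * (∑ i, a i).toNat - 1) from by omega,
          pow_add]
        rw [mul_assoc]
        exact A.mul_mem (A.pow_mem h2A 2) hIH
    have hstar := h_star m hm hm0
    -- membership of 0 and m in the box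
    have h0mem : (0 : Fin d → ℤ) ∈ Finset.Icc (0 : Fin d → ℤ) m := by
      rw [Finset.mem_Icc]
      exact ⟨le_rfl, fun i => by simpa using hm i⟩
    have hmmem : m ∈ Finset.Icc (0 : Fin d → ℤ) m := by
      rw [Finset.mem_Icc]
      exact ⟨fun i => by simpa using hm i, le_rfl⟩
    have hmmem' : m ∈ (Finset.Icc (0 : Fin d → ℤ) m).erase 0 :=
      Finset.mem_erase.2 ⟨hm0, hmmem⟩
    have hsplit : ∑ a ∈ Finset.Icc (0 : Fin d → ℤ) m, F a * F (m - a)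
        = 2 * F m + ∑ a ∈ ((Finset.Icc (0 : Fin d → ℤ) m).erase 0).erase m,
            F a * F (m - a) := by
      rw [← Finset.add_sum_erase _ _ h0mem, ← Finset.add_sum_erase _ _ hmmem']
      rw [hF0, sub_zero, sub_self, hF0]
      ring
    have h2Fm : 2 * F m
        = (∑ i, ∑ a ∈ Finset.Icc (0 : Fin d → ℤ) (m - Pi.single i 1),
            st13S (Q i) D (st13ip x a + x i / 2)
              (st13ip x (m - Pi.single i 1 - a) + x i / 2) *
            (F a * F (m - Pi.single i 1 - a)))
          - ∑ a ∈ ((Finset.Icc (0 : Fin d → ℤ) m).erase 0).erase m, F a * F (m - a) := by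
      rw [← hstar, hsplit]
      ring
    have hCn : C * n - 1 = (C * n - 2) + 1 := by
      have h4C : 4 ≤ C := by omega
      have h4 : C ≤ C * n := Nat.le_mul_of_pos_right C (by omega)
      omega
    rw [show (2 : K) ^ (C * n - 1) * F m = (2 : K) ^ (C * n - 2) * (2 * F m) from by
      rw [hCn, pow_succ]
      ring]
    rw [h2Fm, mul_sub]
    refine A.sub_mem ?_ ?_
    · -- main sum
      rw [Finset.mul_sum]
      refine Subalgebra.sum_mem A fun i _ => ?_
      rw [Finset.mul_sum]
      refine Subalgebra.sum_mem A fun a ha => ?_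
      rw [Finset.mem_Icc] at ha
      have ha0 : ∀ j, 0 ≤ a j := fun j => by have := ha.1 j; simpa using this
      set b : Fin d → ℤ := m - Pi.single i 1 - a with hbdef
      have hb0 : ∀ j, 0 ≤ b j := fun j => by
        have h := ha.2
        rw [Pi.le_def] at h
        have h2 := h j
        simp only [Pi.sub_apply] at h2
        simp only [hbdef, Pi.sub_apply]
        omega
      -- sum bookkeeping
      have hsingle : (∑ j, (Pi.single i 1 : Fin d → ℤ) j) = 1 := by
        simp [Pi.single_apply]
      have habm : (∑ j, a j) + (∑ j, b j) + 1 = ∑ j, m j := by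
        have : ∀ j, a j + b j + (Pi.single i 1 : Fin d → ℤ) j = m j := fun j => by
          simp only [hbdef, Pi.sub_apply]
          ring
        calc (∑ j, a j) + (∑ j, b j) + 1
            = ∑ j, (a j + b j + (Pi.single i 1 : Fin d → ℤ) j) := by
              rw [Finset.sum_add_distrib, Finset.sum_add_distrib, hsingle]
          _ = ∑ j, m j := Finset.sum_congr rfl fun j _ => this j
      set na := (∑ j, a j).toNat with hnadef
      set nb := (∑ j, b j).toNat with hnbdef
      have hna' := hsumtonat a ha0
      have hnb' := hsumtonat b hb0
      have hm' := hsumtonat m hm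
      have hnab : na + nb + 1 = n := by omega
      have hWa : (2 : K) ^ (C * na + 1) * F a ∈ A := Waux a ha0 (by omega)
      have hWb : (2 : K) ^ (C * nb + 1) * F b ∈ A := Waux b hb0 (by omega)
      have h2α : 2 * (st13ip x a + x i / 2) ∈ A := by
        rw [mul_add, mul_comm (2 : K) (x i / 2), div_mul_cancel₀ _ h2ne]
        exact A.add_mem (A.mul_mem h2A (hipmem a)) (hxmem i)
      have h2β : 2 * (st13ip x b + x i / 2) ∈ A := by
        rw [mul_add, mul_comm (2 : K) (x i / 2), div_mul_cancel₀ _ h2ne]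
        exact A.add_mem (A.mul_mem h2A (hipmem b)) (hxmem i)
      have hS : (2 : K) ^ D * st13S (Q i) D (st13ip x a + x i / 2)
          (st13ip x b + x i / 2) ∈ A := st13S_mem A (Q i) D _ _ h2α h2β
      have hexp : C * n - 2 = D + ((C * na + 1) + (C * nb + 1)) := by
        have hmul : C * n = C * na + C * nb + C := by rw [← hnab]; ring
        omega
      rw [show (2 : K) ^ (C * n - 2) *
          (st13S (Q i) D (st13ip x a + x i / 2) (st13ip x b + x i / 2) * (F a * F b))
          = ((2 : K) ^ D * st13S (Q i) D (st13ip x a + x i / 2) (st13ip x b + x i / 2))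
            * (((2 : K) ^ (C * na + 1) * F a) * ((2 : K) ^ (C * nb + 1) * F b)) from by
        rw [hexp, pow_add, pow_add]
        ring]
      exact A.mul_mem hS (A.mul_mem hWa hWb)
    · -- middle sum
      rw [Finset.mul_sum]
      refine Subalgebra.sum_mem A fun a ha => ?_
      rw [Finset.mem_erase, Finset.mem_erase, Finset.mem_Icc] at ha
      obtain ⟨ham, ha0', ⟨hage, hale⟩⟩ := ha
      have ha0 : ∀ j, 0 ≤ a j := fun j => by have := hage j; simpa using this
      set b : Fin d → ℤ := m - a with hbdef
      have hb0 : ∀ j, 0 ≤ b j := fun j => by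
        have h := hale
        rw [Pi.le_def] at h
        have h2 := h j
        simp only [hbdef, Pi.sub_apply]
        omega
      have hbne : b ≠ 0 := by
        intro h
        apply ham
        have : m - a = 0 := h
        funext j
        have := congrFun this j
        simp only [Pi.sub_apply, Pi.zero_apply] at this ⊢
        omega
      have habm : (∑ j, a j) + (∑ j, b j) = ∑ j, m j := by
        have : ∀ j, a j + b j = m j := fun j => by
          simp only [hbdef, Pi.sub_apply]
          ring
        calc (∑ j, a j) + (∑ j, b j) = ∑ j, (a j + b j) := by rw [Finset.sum_add_distrib]
          _ = ∑ j, m j := Finset.sum_congr rfl fun j _ => this j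
      set na := (∑ j, a j).toNat with hnadef
      set nb := (∑ j, b j).toNat with hnbdef
      have hna' := hsumtonat a ha0
      have hnb' := hsumtonat b hb0
      have hm' := hsumtonat m hm
      have hnapos := hpos a ha0 ha0'
      have hnbpos := hpos b hb0 hbne
      have hnab : na + nb = n := by omega
      have hna1 : 1 ≤ na := by omega
      have hnb1 : 1 ≤ nb := by omega
      have hIHa : (2 : K) ^ (C * na - 1) * F a ∈ A := IH na (by omega) a ha0 ha0' rfl
      have hIHb : (2 : K) ^ (C * nb - 1) * F b ∈ A := IH nb (by omega) b hb0 hbne rfl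
      have hexp : C * n - 2 = (C * na - 1) + (C * nb - 1) := by
        have h4C : 4 ≤ C := by omega
        have h1 : C ≤ C * na := Nat.le_mul_of_pos_right C (by omega)
        have h2 : C ≤ C * nb := Nat.le_mul_of_pos_right C (by omega)
        have h3 : C * n = C * na + C * nb := by rw [← hnab]; ring
        omega
      rw [show (2 : K) ^ (C * n - 2) * (F a * F b)
          = ((2 : K) ^ (C * na - 1) * F a) * ((2 : K) ^ (C * nb - 1) * F b) from by
        rw [hexp, pow_add]
        ring]
      exact A.mul_mem hIHa hIHb
  -- conclusion
  refine ⟨C, fun m hm => ?_⟩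
  by_cases hm0 : m = 0
  · subst hm0
    simp only [Pi.zero_apply, Finset.sum_const_zero, Int.toNat_zero, Nat.mul_zero, pow_zero,
      hF0, mul_one]
    exact A.one_mem
  · have hk := key (∑ i, m i).toNat m hm hm0 rfl
    have hn1 : 1 ≤ (∑ i, m i).toNat := by
      have h1 := hpos m hm hm0
      have h2 := hsumtonat m hm
      omega
    have hCn1 : 1 ≤ C * (∑ i, m i).toNat :=
      Nat.mul_pos (by omega) (by omega)
    rw [show C * (∑ i, m i).toNat = 1 + (C * (∑ i, m i).toNat - 1) from by omega, pow_add,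
      pow_one, mul_assoc]
    exact A.mul_mem h2A hk
end

section
/- Let g ∈ ℚ[b,c][[t]] be a formal power series satisfying the second-order differential equation t²·g'' + (1 + 2t)·g' - (c·t² + b)·g = 0, where ' denotes the formal derivative with respect to t. Then the series G(t) = g(t)·g(-t) satisfies the third-order differential equation t⁴·G''' + 6t³·G'' - (4c·t⁴ - (6 - 4b)·t² + 1)·G' - 4t·(2c·t² + b)·G = 0. -/
open PowerSeries

private lemma st14_dF (f : PowerSeries Rbc) : derivativeFun f = d⁄dX Rbc f := rfl

private lemma st14_deriv_C (r : Rbc) : derivativeFun (PowerSeries.C r) = 0 :=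
  PowerSeries.derivative_C

private lemma st14_deriv_rescale_neg_one (f : PowerSeries Rbc) :
    derivativeFun (PowerSeries.rescale (-1 : Rbc) f)
      = - PowerSeries.rescale (-1 : Rbc) (derivativeFun f) := by
  ext n : 1
  rw [st14_dF, st14_dF, PowerSeries.coeff_derivativeFun, PowerSeries.coeff_rescale, map_neg,
    PowerSeries.coeff_rescale, PowerSeries.coeff_derivativeFun, pow_succ]
  ring

private lemma rescale_C' (r : Rbc) :
    PowerSeries.rescale (-1 : Rbc) (PowerSeries.C r) = PowerSeries.C r := by
  ext n : 1
  rw [PowerSeries.coeff_rescale]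
  cases n with
  | zero => simp
  | succ m => simp [PowerSeries.coeff_C]

private lemma st14_deriv_mul (f g : PowerSeries Rbc) :
    derivativeFun (f * g) = f * derivativeFun g + g * derivativeFun f := by
  rw [PowerSeries.derivativeFun_mul, smul_eq_mul, smul_eq_mul]

private lemma st14_deriv_sub (f g : PowerSeries Rbc) :
    derivativeFun (f - g) = derivativeFun f - derivativeFun g := by
  ext n : 1
  simp [st14_dF, PowerSeries.coeff_derivativeFun, sub_mul]

private lemma st14_deriv_neg (f : PowerSeries Rbc) :
    derivativeFun (-f) = - derivativeFun f := by
  ext n : 1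
  simp [st14_dF, PowerSeries.coeff_derivativeFun]

private lemma st14_deriv_zero : derivativeFun (0 : PowerSeries Rbc) = 0 := by
  ext n : 1
  simp [st14_dF, PowerSeries.coeff_derivativeFun]

private lemma st14_deriv_X : derivativeFun (PowerSeries.X : PowerSeries Rbc) = 1 :=
  PowerSeries.derivative_X (R := Rbc)

private lemma st14_deriv_two : derivativeFun (2 : PowerSeries Rbc) = 0 := by
  rw [show (2 : PowerSeries Rbc) = PowerSeries.C 2 from (map_ofNat _ 2).symm,
    st14_deriv_C]

private lemma st14_deriv_X_sq :
    derivativeFun ((PowerSeries.X : PowerSeries Rbc) ^ 2) = 2 * PowerSeries.X := by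
  rw [sq, st14_deriv_mul, st14_deriv_X]
  ring

/-- If `g ∈ ℚ[b,c][[t]]` satisfies `t²g'' + (1+2t)g' - (ct²+b)g = 0`, then
`G(t) = g(t)·g(-t)` satisfies
`t⁴G''' + 6t³G'' - (4ct⁴ - (6-4b)t² + 1)G' - 4t(2ct²+b)G = 0`. -/
theorem statement14
    (b c : Rbc) (hb : b = MvPolynomial.X 0) (hc : c = MvPolynomial.X 1)
    (g : PowerSeries Rbc)
    (hg : (PowerSeries.X : PowerSeries Rbc) ^ 2 * derivativeFun (derivativeFun g)
        + (1 + 2 * PowerSeries.X) * derivativeFun g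
        - (PowerSeries.C c * PowerSeries.X ^ 2 + PowerSeries.C b) * g = 0)
    (G : PowerSeries Rbc)
    (hG : G = g * PowerSeries.rescale (-1 : Rbc) g) :
    (PowerSeries.X : PowerSeries Rbc) ^ 4 * derivativeFun (derivativeFun (derivativeFun G))
      + 6 * PowerSeries.X ^ 3 * derivativeFun (derivativeFun G)
      - (4 * PowerSeries.C c * PowerSeries.X ^ 4
          - (6 - 4 * PowerSeries.C b) * PowerSeries.X ^ 2 + 1) * derivativeFun G
      - 4 * PowerSeries.X *
          (2 * PowerSeries.C c * PowerSeries.X ^ 2 + PowerSeries.C b) * G = 0 := by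
  set h : PowerSeries Rbc := PowerSeries.rescale (-1 : Rbc) g with hh
  -- relations between rescaled derivatives
  have hr1 : PowerSeries.rescale (-1 : Rbc) (derivativeFun g) = - derivativeFun h := by
    rw [hh, st14_deriv_rescale_neg_one, neg_neg]
  have hr2 : PowerSeries.rescale (-1 : Rbc) (derivativeFun (derivativeFun g))
      = derivativeFun (derivativeFun h) := by
    rw [hh, st14_deriv_rescale_neg_one, st14_deriv_neg, st14_deriv_rescale_neg_one, neg_neg]
  -- the rescaled ODE
  have hF := congrArg (PowerSeries.rescale (-1 : Rbc)) hg
  simp only [map_add, map_sub, map_mul, map_pow, map_one, map_ofNat, map_zero,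
    PowerSeries.rescale_neg_one_X, rescale_C', hr1, hr2, neg_sq, ← hh] at hF
  -- derivative of the original ODE
  have hEd := congrArg derivativeFun hg
  simp only [st14_deriv_mul, PowerSeries.derivativeFun_add, st14_deriv_sub, st14_deriv_neg,
    st14_deriv_C, st14_deriv_X, st14_deriv_two, st14_deriv_X_sq, st14_deriv_zero,
    PowerSeries.derivativeFun_one] at hEd
  -- derivative of the rescaled ODE
  have hFd := congrArg derivativeFun hF
  simp only [st14_deriv_mul, PowerSeries.derivativeFun_add, st14_deriv_sub, st14_deriv_neg,
    st14_deriv_C, st14_deriv_X, st14_deriv_two, st14_deriv_X_sq, st14_deriv_zero,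
    PowerSeries.derivativeFun_one] at hFd
  -- expand the goal
  rw [hG]
  simp only [st14_deriv_mul, PowerSeries.derivativeFun_add]
  linear_combination
    (PowerSeries.X ^ 2 * h) * hEd
    + (3 * PowerSeries.X ^ 2 * derivativeFun h + (2 * PowerSeries.X - 1) * h) * hg
    + (PowerSeries.X ^ 2 * g) * hFd
    + (3 * PowerSeries.X ^ 2 * derivativeFun g + (2 * PowerSeries.X + 1) * g) * hF
end
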